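/- arXiv:2003.12000 — 9 statements merged into one kernel-verified Lean document; each statement's English description precedes it below -/
import Mathlib

section
/- Let M be a connected n-manifold with boundary ∂M. If the interior M − ∂M is metrisable and ∂M is collared in M, then ∂M is Lindelöf. -/
open Set Topology unitInterval

variable {X : Type*} [TopologicalSpace X]

/-- `h : B × [0,1] → X` is a collar of `B` in `X`: an embedding with `h(x,0) = x`,
`h⁻¹(B) = B × {0}`, and `h(B × [0,1))` open in `X`. -/
def IsCollarMap (B : Set X) (h : B × I → X) : Prop :=
  Topology.IsEmbedding h ∧ (∀ x : B, h (x, 0) = (x : X)) ∧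
    h ⁻¹' B = {p : B × I | p.2 = 0} ∧ IsOpen (h '' {p : B × I | p.2 < 1})

/-- `B` is collared in `X`. -/
def IsCollared (B : Set X) : Prop := ∃ h : B × I → X, IsCollarMap B h

/-- `B` is strongly collared in `X`: the collar map can be chosen to be a closed map. -/
def IsStronglyCollared (B : Set X) : Prop :=
  ∃ h : B × I → X, IsCollarMap B h ∧ IsClosedMap h

/-- `x` has a neighbourhood homeomorphic to `ℝ^{n-1} × ℝ_{≥0}`. -/
def HasBoundaryChart (n : ℕ) (x : X) : Prop :=
  ∃ U : Set X, U ∈ nhds x ∧ Nonempty (U ≃ₜ ((Fin (n - 1) → ℝ) × {r : ℝ // 0 ≤ r}))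

/-- `x` has a neighbourhood homeomorphic to `ℝⁿ`. -/
def HasInteriorChart (n : ℕ) (x : X) : Prop :=
  ∃ U : Set X, U ∈ nhds x ∧ Nonempty (U ≃ₜ (Fin n → ℝ))

/-- An `n`-manifold with boundary: a Hausdorff space such that every point has a neighbourhood
homeomorphic to `ℝ^{n-1} × ℝ_{≥0}` (Hausdorffness is a separate instance hypothesis). -/
def IsManifoldWithBoundary (n : ℕ) (M : Type*) [TopologicalSpace M] : Prop :=
  ∀ x : M, HasBoundaryChart n x

/-- The boundary `∂M`: the points with no neighbourhood homeomorphic to `ℝⁿ`. -/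
def mBoundary (n : ℕ) (M : Type*) [TopologicalSpace M] : Set M :=
  {x : M | ¬ HasInteriorChart n x}

/-! ### Auxiliary lemmas -/

section Aux

variable {M : Type*} [TopologicalSpace M]

/-- A subset of a subspace `↥U` which is open in the subspace and whose image lies in the
interior of `U` has open image in the ambient space. -/
lemma aux_open_image {U : Set M} {S : Set ↥U} (hS : IsOpen S)
    (hsub : ((↑) '' S : Set M) ⊆ interior U) : IsOpen ((↑) '' S : Set M) := by
  obtain ⟨O, hO, rfl⟩ := isOpen_induced_iff.1 hS
  have himg : ((↑) '' ((↑) ⁻¹' O : Set ↥U) : Set M) = O ∩ U := by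
    ext z
    constructor
    · rintro ⟨y, hy, rfl⟩; exact ⟨hy, y.2⟩
    · rintro ⟨h1, h2⟩; exact ⟨⟨z, h2⟩, h1, rfl⟩
  rw [himg] at hsub ⊢
  have : O ∩ U = O ∩ interior U := by
    apply Subset.antisymm
    · intro z hz; exact ⟨hz.1, hsub hz⟩
    · intro z hz; exact ⟨hz.1, interior_subset hz.2⟩
  rw [this]
  exact hO.inter isOpen_interior

/-- If `x` has a neighbourhood homeomorphic to a locally compact space, then `x` has arbitrarily
small compact neighbourhoods. -/
lemma aux_compact_nbhd {Y : Type*} [TopologicalSpace Y] [LocallyCompactSpace Y]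
    {x : M} {U : Set M} (hU : U ∈ nhds x) (φ : ↥U ≃ₜ Y) {V : Set M} (hV : V ∈ nhds x) :
    ∃ K, K ∈ nhds x ∧ K ⊆ V ∧ IsCompact K := by
  have hxU : x ∈ U := mem_of_mem_nhds hU
  set x' : ↥U := ⟨x, hxU⟩ with hx'
  have hW : x ∈ interior (U ∩ V) := mem_interior_iff_mem_nhds.2 (Filter.inter_mem hU hV)
  set S : Set ↥U := (↑) ⁻¹' interior (U ∩ V) with hSdef
  have hSopen : IsOpen S := isOpen_interior.preimage continuous_subtype_val
  have hx'S : x' ∈ S := hW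
  have h1 : φ '' S ∈ nhds (φ x') :=
    (φ.isOpenMap _ hSopen).mem_nhds ⟨x', hx'S, rfl⟩
  obtain ⟨s, hs_nhds, hs_sub, hs_cpt⟩ := local_compact_nhds h1
  have hsymm_sub : φ.symm '' s ⊆ S := by
    intro y ⟨z, hz, hzy⟩
    have : z ∈ φ '' S := hs_sub hz
    obtain ⟨w, hw, rfl⟩ := this
    rwa [← hzy, φ.symm_apply_apply]
  refine ⟨(↑) '' (φ.symm '' s), ?_, ?_, (hs_cpt.image φ.symm.continuous).image
    continuous_subtype_val⟩
  · obtain ⟨t, ht_sub, ht_open, ht_mem⟩ := mem_nhds_iff.1 hs_nhds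
    set T : Set ↥U := φ ⁻¹' t with hT
    have hT_sub_S : T ⊆ S := by
      intro p hp
      have : φ p ∈ φ '' S := hs_sub (ht_sub hp)
      obtain ⟨w, hw, hwp⟩ := this
      rwa [← φ.injective hwp]
    have hT_open : IsOpen ((↑) '' T : Set M) := by
      refine aux_open_image (ht_open.preimage φ.continuous) ?_
      rintro z ⟨p, hp, rfl⟩
      exact interior_mono inter_subset_left (hT_sub_S hp)
    refine Filter.mem_of_superset (hT_open.mem_nhds ⟨x', ht_mem, rfl⟩) ?_
    rintro z ⟨p, hp, rfl⟩
    exact ⟨φ.symm (φ p), ⟨φ p, ht_sub hp, rfl⟩, by rw [φ.symm_apply_apply]⟩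
  · rintro z ⟨p, hp, rfl⟩
    exact interior_subset (hsymm_sub hp) |>.2

/-- A manifold with boundary is locally compact. -/
lemma aux_locallyCompact (n : ℕ) (hM : IsManifoldWithBoundary n M) : LocallyCompactSpace M := by
  haveI : LocallyCompactSpace {r : ℝ // 0 ≤ r} :=
    (isClosed_Ici (a := (0 : ℝ))).locallyCompactSpace
  refine ⟨fun x V hV => ?_⟩
  obtain ⟨U, hU, ⟨φ⟩⟩ := hM x
  obtain ⟨K, h1, h2, h3⟩ := aux_compact_nbhd hU φ hV
  exact ⟨K, h1, h2, h3⟩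

/-- Any open ball in `ℝⁿ` is homeomorphic to `ℝⁿ`. -/
lemma aux_ball_homeo (n : ℕ) (c : Fin n → ℝ) {r : ℝ} (hr : 0 < r) :
    Nonempty (↥(Metric.ball c r) ≃ₜ (Fin n → ℝ)) := by
  refine ⟨(Homeomorph.setCongr (OpenPartialHomeomorph.univBall_target c hr)).symm.trans
    ((OpenPartialHomeomorph.univBall c r).toHomeomorphSourceTarget.symm.trans
      ((Homeomorph.setCongr (OpenPartialHomeomorph.univBall_source c r)).trans
        (Homeomorph.Set.univ _)))⟩

/-- The set of points having an interior chart is open. -/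
lemma aux_boundary_open (n : ℕ) : IsOpen ((mBoundary n M)ᶜ) := by
  rw [isOpen_iff_forall_mem_open]
  intro x hx
  have hx' : HasInteriorChart n x := not_not.mp hx
  obtain ⟨U, hU, ⟨φ⟩⟩ := hx'
  refine ⟨interior U, ?_, isOpen_interior, mem_interior_iff_mem_nhds.2 hU⟩
  intro y hy
  show ¬¬ HasInteriorChart n y
  rw [not_not]
  set y' : ↥U := ⟨y, interior_subset hy⟩ with hy'
  set S : Set ↥U := (↑) ⁻¹' interior U with hSdef
  have hSopen : IsOpen S := isOpen_interior.preimage continuous_subtype_val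
  have hy'S : y' ∈ S := hy
  obtain ⟨r, hr, hball⟩ := Metric.isOpen_iff.1 (φ.isOpenMap _ hSopen) (φ y') ⟨y', hy'S, rfl⟩
  set T : Set ↥U := φ ⁻¹' Metric.ball (φ y') r with hTdef
  have hT_sub_S : T ⊆ S := by
    intro p hp
    have : φ p ∈ φ '' S := hball hp
    obtain ⟨w, hw, hwp⟩ := this
    rwa [← φ.injective hwp]
  have hT_open : IsOpen T := Metric.isOpen_ball.preimage φ.continuous
  set W : Set M := (↑) '' T with hWdef
  have hW_sub : W ⊆ interior U := by
    rintro z ⟨p, hp, rfl⟩; exact hT_sub_S hp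
  have hW_open : IsOpen W := aux_open_image hT_open hW_sub
  have hyW : y ∈ W := ⟨y', Metric.mem_ball_self hr, rfl⟩
  have hWU : W ⊆ U := fun z hz => interior_subset (hW_sub hz)
  set ψ : ↥W → (Fin n → ℝ) := fun w => φ (inclusion hWU w) with hψdef
  have hψ : Topology.IsEmbedding ψ :=
    φ.isEmbedding.comp (Topology.IsEmbedding.inclusion hWU)
  have hrange : range ψ = Metric.ball (φ y') r := by
    ext z
    constructor
    · rintro ⟨w, rfl⟩
      obtain ⟨u, hu, huw⟩ := w.2
      have : inclusion hWU w = u := Subtype.ext huw.symm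
      rw [hψdef]
      simp only
      rw [this]
      exact hu
    · intro hz
      have hu : φ.symm z ∈ T := by
        rw [hTdef, mem_preimage, φ.apply_symm_apply]; exact hz
      refine ⟨⟨↑(φ.symm z), ⟨φ.symm z, hu, rfl⟩⟩, ?_⟩
      rw [hψdef]
      simp only
      have : inclusion hWU ⟨↑(φ.symm z), ⟨φ.symm z, hu, rfl⟩⟩ = φ.symm z := Subtype.ext rfl
      rw [this, φ.apply_symm_apply]
  obtain ⟨e2⟩ := aux_ball_homeo n (φ y') hr
  exact ⟨W, hW_open.mem_nhds hyW,
    ⟨(hψ.toHomeomorph.trans (Homeomorph.setCongr hrange)).trans e2⟩⟩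

/-- A connected, locally compact, paracompact space is σ-compact. -/
lemma aux_sigmaCompact (Z : Type*) [TopologicalSpace Z] [T2Space Z] [LocallyCompactSpace Z]
    [ParacompactSpace Z] [ConnectedSpace Z] : SigmaCompactSpace Z := by
  rcases isEmpty_or_nonempty Z with hZ | ⟨⟨x0⟩⟩
  · infer_instance
  choose K hKc hKn using fun x : Z => exists_compact_mem_nhds (x := x)
  obtain ⟨v, hvo, hvcov, hvlf, hvu⟩ := precise_refinement (fun x => interior (K x))
    (fun x => isOpen_interior)
    (eq_univ_of_forall fun x => mem_iUnion.2 ⟨x, mem_interior_iff_mem_nhds.2 (hKn x)⟩)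
  have hvc : ∀ x, IsCompact (closure (v x)) := fun x =>
    (hKc x).of_isClosed_subset isClosed_closure
      (closure_minimal ((hvu x).trans interior_subset) (hKc x).isClosed)
  obtain ⟨i0, hi0⟩ : ∃ i, x0 ∈ v i := mem_iUnion.1 (by rw [hvcov]; trivial)
  classical
  set s : ℕ → Set Z := fun m =>
    Nat.rec {i0} (fun _ sm => {i | (v i ∩ closure (⋃ j ∈ sm, v j)).Nonempty}) m with hs
  set C : ℕ → Set Z := fun m => ⋃ j ∈ s m, v j with hC
  have hsucc : ∀ m, s (m + 1) = {i | (v i ∩ closure (C m)).Nonempty} := fun m => rfl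
  have key : ∀ m, (s m).Finite ∧ IsCompact (closure (C m)) := by
    intro m
    induction m with
    | zero =>
      refine ⟨finite_singleton _, ?_⟩
      have h0 : C 0 = v i0 := by simp [hC, hs]
      rw [h0]; exact hvc i0
    | succ m ih =>
      have hfin : (s (m + 1)).Finite := by
        rw [hsucc]; exact hvlf.finite_nonempty_inter_compact ih.2
      refine ⟨hfin, ?_⟩
      have h1 : closure (C (m + 1)) ⊆ ⋃ j ∈ s (m + 1), closure (v j) :=
        closure_minimal (iUnion₂_mono fun j _ => subset_closure)
          (hfin.isClosed_biUnion fun j _ => isClosed_closure)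
      exact (hfin.isCompact_biUnion fun j _ => hvc j).of_isClosed_subset isClosed_closure h1
  set V : Set Z := ⋃ m, C m with hV
  have hVopen : IsOpen V := isOpen_iUnion fun m => isOpen_biUnion fun j _ => hvo j
  have hVne : V.Nonempty :=
    ⟨x0, mem_iUnion.2 ⟨0, mem_biUnion (mem_singleton i0) hi0⟩⟩
  have hVclosed : IsClosed V := by
    refine isClosed_of_closure_subset fun x hx => ?_
    obtain ⟨i, hxi⟩ : ∃ i, x ∈ v i := mem_iUnion.1 (by rw [hvcov]; trivial)
    obtain ⟨y, hyv, hyV⟩ := mem_closure_iff.1 hx (v i) (hvo i) hxi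
    obtain ⟨m, hym⟩ := mem_iUnion.1 hyV
    have hi : i ∈ s (m + 1) := by
      rw [hsucc]; exact ⟨y, hyv, subset_closure hym⟩
    exact mem_iUnion.2 ⟨m + 1, mem_biUnion hi hxi⟩
  have hVuniv : V = univ := (IsClopen.eq_univ ⟨hVclosed, hVopen⟩ hVne)
  refine ⟨⟨fun m => closure (C m), fun m => (key m).2, ?_⟩⟩
  refine eq_univ_of_univ_subset ?_
  rw [← hVuniv]
  exact iUnion_mono fun m => subset_closure

/-- Images of open subsets of `B × [0,1)` under a collar map are open. -/
lemma aux_collar_image_open {B : Set M} {h : ↥B × I → M} (hc : IsCollarMap B h)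
    {W : Set (↥B × I)} (hW : IsOpen W) (hW1 : W ⊆ {p : ↥B × I | p.2 < 1}) :
    IsOpen (h '' W) := by
  obtain ⟨hemb, h0, hpre, hopen⟩ := hc
  obtain ⟨O, hO, hWO⟩ := hemb.isInducing.isOpen_iff.1 hW
  have : h '' W = O ∩ h '' {p : ↥B × I | p.2 < 1} := by
    ext z
    constructor
    · rintro ⟨p, hp, rfl⟩
      refine ⟨?_, ⟨p, hW1 hp, rfl⟩⟩
      rw [← hWO] at hp; exact hp
    · rintro ⟨hzO, p, hp, rfl⟩
      exact ⟨p, by rw [← hWO]; exact hzO, rfl⟩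
  rw [this]
  exact hO.inter hopen

lemma aux_zero_lt_one : (0 : I) < 1 := by
  rw [← Subtype.coe_lt_coe]; norm_num

lemma aux_one_ne_zero : (1 : I) ≠ 0 := fun e => by
  have := congrArg Subtype.val e
  norm_num at this

/-- The interior of a connected manifold with collared boundary is preconnected. -/
lemma aux_preconnected [ConnectedSpace M] {B : Set M} (hBo : IsOpen Bᶜ)
    {h : ↥B × I → M} (hc : IsCollarMap B h) : IsPreconnected Bᶜ := by
  obtain ⟨hemb, h0, hpre, hopen⟩ := hc
  have hmem1 : ∀ p : ↥B × I, p.2 ≠ 0 → h p ∈ Bᶜ := by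
    intro p hp hmem
    have : p ∈ h ⁻¹' B := hmem
    rw [hpre] at this
    exact hp this
  intro u v hu hv hcov ⟨a, haB, hau⟩ ⟨b, hbB, hbv⟩
  by_contra hne
  rw [not_nonempty_iff_eq_empty] at hne
  set P : Set M := Bᶜ ∩ u with hP
  set Q : Set M := Bᶜ ∩ v with hQ
  have hPo : IsOpen P := hBo.inter hu
  have hQo : IsOpen Q := hBo.inter hv
  have hPQ : ∀ z, z ∈ P → z ∈ Q → False := by
    intro z hzP hzQ
    have : z ∈ Bᶜ ∩ (u ∩ v) := ⟨hzP.1, hzP.2, hzQ.2⟩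
    rw [hne] at this
    exact this
  have hdisj : Disjoint P Q := Set.disjoint_left.2 fun z hz hz' => hPQ z hz hz'
  -- fibers
  set f : ↥B → ℝ → M := fun c r => h (c, projIcc 0 1 zero_le_one r) with hf
  have hfc : ∀ c, Continuous (f c) :=
    fun c => hemb.continuous.comp (continuous_const.prodMk continuous_projIcc)
  set F : ↥B → Set M := fun c => f c '' Ioc (0:ℝ) 1 with hF
  have hFmem : ∀ (c : ↥B) (t : I), t ≠ 0 → h (c, t) ∈ F c := by
    intro c t ht
    have htpos : (0:ℝ) < (t : ℝ) := lt_of_le_of_ne t.2.1 (fun e => ht (Subtype.ext e.symm))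
    refine ⟨(t : ℝ), ⟨htpos, t.2.2⟩, ?_⟩
    rw [hf]
    simp only
    congr 1
    exact congrArg _ (by rw [projIcc_val])
  have hFsub : ∀ c, F c ⊆ Bᶜ := by
    rintro c z ⟨r, hr, rfl⟩
    refine hmem1 _ ?_
    rw [projIcc_of_mem zero_le_one ⟨le_of_lt hr.1, hr.2⟩]
    intro e
    have := congrArg Subtype.val e
    simp only at this
    exact absurd this (ne_of_gt hr.1)
  have hFpre : ∀ c, IsPreconnected (F c) :=
    fun c => isPreconnected_Ioc.image _ (hfc c).continuousOn
  have fib : ∀ (c : ↥B) (P' Q' : Set M), IsOpen P' → IsOpen Q' → Disjoint P' Q' →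
      P' ∪ Q' = Bᶜ ∩ (u ∪ v) → Bᶜ ⊆ u ∪ v →
      ∀ z ∈ P', ∀ t : I, t ≠ 0 → z = h (c, t) → h (c, 1) ∈ Q' → False := by
    intro c P' Q' hP' hQ' hd he hcov' z hz t ht hzt h1Q
    have hsub : F c ⊆ P' ∪ Q' := by
      intro w hw
      rw [he]
      exact ⟨hFsub c hw, hcov' (hFsub c hw)⟩
    have hzF : z ∈ F c := hzt ▸ hFmem c t ht
    have hFP : F c ⊆ P' :=
      (hFpre c).subset_left_of_subset_union hP' hQ' hd hsub ⟨z, hzF, hz⟩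
    have h1F : h (c, 1) ∈ F c := hFmem c 1 aux_one_ne_zero
    exact (Set.disjoint_left.1 hd) (hFP h1F) h1Q
  have hPQcov : P ∪ Q = Bᶜ ∩ (u ∪ v) := by
    rw [hP, hQ, ← inter_union_distrib_left]
  -- the two open halves of M
  have hlt_open : IsOpen {p : ↥B × I | p.2 < 1} := by
    have : {p : ↥B × I | p.2 < 1} = (fun p : ↥B × I => ((p.2 : ℝ))) ⁻¹' Iio 1 := by
      ext p
      simp only [mem_setOf_eq, mem_preimage, mem_Iio]
      exact ⟨fun hh => hh, fun hh => hh⟩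
    rw [this]
    exact isOpen_Iio.preimage (continuous_subtype_val.comp continuous_snd)
  have hg : Continuous (fun p : ↥B × I => h (p.1, 1)) :=
    hemb.continuous.comp (continuous_fst.prodMk continuous_const)
  set Su : Set (↥B × I) := {p : ↥B × I | p.2 < 1} ∩ (fun p : ↥B × I => h (p.1, 1)) ⁻¹' P
    with hSu
  set Sv : Set (↥B × I) := {p : ↥B × I | p.2 < 1} ∩ (fun p : ↥B × I => h (p.1, 1)) ⁻¹' Q
    with hSv
  have hSuo : IsOpen (h '' Su) :=
    aux_collar_image_open ⟨hemb, h0, hpre, hopen⟩ (hlt_open.inter (hPo.preimage hg))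
      inter_subset_left
  have hSvo : IsOpen (h '' Sv) :=
    aux_collar_image_open ⟨hemb, h0, hpre, hopen⟩ (hlt_open.inter (hQo.preimage hg))
      inter_subset_left
  set A : Set M := P ∪ h '' Su with hA
  set A' : Set M := Q ∪ h '' Sv with hA'
  have hAo : IsOpen A := hPo.union hSuo
  have hA'o : IsOpen A' := hQo.union hSvo
  have hcover : ∀ x : M, x ∈ A ∪ A' := by
    intro x
    by_cases hx : x ∈ B
    · set c : ↥B := ⟨x, hx⟩ with hcdef
      have h1 : h (c, 1) ∈ Bᶜ := hmem1 _ aux_one_ne_zero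
      rcases hcov h1 with h1u | h1v
      · left; right
        exact ⟨(c, 0), ⟨aux_zero_lt_one, ⟨h1, h1u⟩⟩, h0 c⟩
      · right; right
        exact ⟨(c, 0), ⟨aux_zero_lt_one, ⟨h1, h1v⟩⟩, h0 c⟩
    · rcases hcov hx with hxu | hxv
      · exact Or.inl (Or.inl ⟨hx, hxu⟩)
      · exact Or.inr (Or.inl ⟨hx, hxv⟩)
  have hdisjA : ∀ z, z ∈ A → z ∈ A' → False := by
    rintro z (hzP | ⟨p, hp, rfl⟩) hz'
    · rcases hz' with hzQ | ⟨p, hp, rfl⟩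
      · exact hPQ z hzP hzQ
      · -- z = h p ∈ P, p ∈ Sv
        have ht : p.2 ≠ 0 := by
          intro e
          have : h p ∈ B := by
            show p ∈ h ⁻¹' B
            rw [hpre]; exact e
          exact hzP.1 this
        exact fib p.1 P Q hPo hQo hdisj hPQcov hcov (h p) hzP p.2 ht
          (by rw [← Prod.mk.eta (p := p)]) hp.2
    · rcases hz' with hzQ | ⟨q, hq, hqp⟩
      · have ht : p.2 ≠ 0 := by
          intro e
          have : h p ∈ B := by
            show p ∈ h ⁻¹' B
            rw [hpre]; exact e
          exact hzQ.1 this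
        exact fib p.1 Q P hQo hPo hdisj.symm (by rw [union_comm]; exact hPQcov)
          hcov (h p) hzQ p.2 ht (by rw [← Prod.mk.eta (p := p)]) hp.2
      · have := hemb.injective hqp
        rw [this] at hq
        exact hPQ _ hp.2 hq.2
  obtain ⟨z, -, hzA, hzA'⟩ := isPreconnected_univ (u := A) (v := A') hAo hA'o
    (fun x _ => hcover x) ⟨a, trivial, Or.inl ⟨haB, hau⟩⟩ ⟨b, trivial, Or.inl ⟨hbB, hbv⟩⟩
  exact hdisjA z hzA hzA'

end Aux

/-- If `M` is a connected `n`-manifold with boundary whose interior `M − ∂M` is metrisable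
and `∂M` is collared in `M`, then `∂M` is Lindelöf. -/
theorem boundary_lindelof_of_collared (n : ℕ) (M : Type*) [TopologicalSpace M]
    [T2Space M] [ConnectedSpace M] (hM : IsManifoldWithBoundary n M)
    (hint : TopologicalSpace.MetrizableSpace ↥((mBoundary n M)ᶜ))
    (hcoll : IsCollared (mBoundary n M)) :
    IsLindelof (mBoundary n M) := by
  classical
  rcases eq_empty_or_nonempty (mBoundary n M) with hBe | ⟨b0, hb0⟩
  · rw [hBe]; exact isLindelof_empty
  obtain ⟨h, hc⟩ := hcoll
  obtain ⟨hemb, h0, hpre, hopen⟩ := hc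
  have hmem1 : ∀ p : ↥(mBoundary n M) × I, p.2 ≠ 0 → h p ∈ (mBoundary n M)ᶜ := by
    intro p hp hmem
    have : p ∈ h ⁻¹' (mBoundary n M) := hmem
    rw [hpre] at this
    exact hp this
  have hBo : IsOpen ((mBoundary n M)ᶜ) := aux_boundary_open n
  haveI : LocallyCompactSpace M := aux_locallyCompact n hM
  haveI : LocallyCompactSpace ↥((mBoundary n M)ᶜ) :=
    hBo.isLocallyClosed.locallyCompactSpace
  letI : MetricSpace ↥((mBoundary n M)ᶜ) := TopologicalSpace.metrizableSpaceMetric _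
  haveI : ConnectedSpace ↥((mBoundary n M)ᶜ) :=
    Subtype.connectedSpace
      ⟨⟨h (⟨b0, hb0⟩, 1), hmem1 _ aux_one_ne_zero⟩, aux_preconnected hBo ⟨hemb, h0, hpre, hopen⟩⟩
  haveI : SigmaCompactSpace ↥((mBoundary n M)ᶜ) := aux_sigmaCompact _
  haveI : SecondCountableTopology ↥((mBoundary n M)ᶜ) := inferInstance
  set e : ↥(mBoundary n M) → ↥((mBoundary n M)ᶜ) :=
    fun c => ⟨h (c, 1), hmem1 _ aux_one_ne_zero⟩ with he
  have hee : Topology.IsEmbedding e := by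
    have h1 : Topology.IsEmbedding (fun c : ↥(mBoundary n M) => h (c, 1)) :=
      hemb.comp ((Homeomorph.prodComm I ↥(mBoundary n M)).isEmbedding.comp
        (isEmbedding_prodMkRight (1 : I)))
    exact h1.codRestrict _ _
  haveI : SecondCountableTopology ↥(mBoundary n M) := hee.secondCountableTopology
  exact isLindelof_iff_LindelofSpace.2 inferInstance
end

section
/- Let M be a connected n-manifold with boundary ∂M. If M is normal, ∂M is countably metacompact (as a topological space), and ∂M is collared in M, then ∂M is strongly collared in M. -/
open Set Topology unitInterval

variable {X : Type*} [TopologicalSpace X]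

/-- A topological space is countably metacompact if every countable open cover has a
point-finite open refinement (which is still a cover). -/
def CountablyMetacompact (Y : Type*) [TopologicalSpace Y] : Prop :=
  ∀ 𝒰 : Set (Set Y), 𝒰.Countable → (∀ U ∈ 𝒰, IsOpen U) → ⋃₀ 𝒰 = univ →
    ∃ 𝒱 : Set (Set Y), (∀ V ∈ 𝒱, IsOpen V) ∧ ⋃₀ 𝒱 = univ ∧
      (∀ V ∈ 𝒱, ∃ U ∈ 𝒰, V ⊆ U) ∧ ∀ y : Y, {V ∈ 𝒱 | y ∈ V}.Finite

/-- The boundary is a closed subset. -/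
lemma isClosed_mBoundary (n : ℕ) (M : Type*) [TopologicalSpace M] :
    IsClosed (mBoundary n M) := by
  have hopen : IsOpen {x : M | HasInteriorChart n x} := by
    rw [isOpen_iff_mem_nhds]
    rintro x ⟨U, hU, he⟩
    filter_upwards [interior_mem_nhds.2 hU] with y hy
    exact ⟨U, Filter.mem_of_superset (isOpen_interior.mem_nhds hy) interior_subset, he⟩
  have : mBoundary n M = {x : M | HasInteriorChart n x}ᶜ := by
    ext x; simp [mBoundary]
  rw [this]
  exact hopen.isClosed_compl

set_option maxHeartbeats 1000000 in
/-- Main auxiliary result: a closed, collared subset whose subspace is countably metacompact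
is strongly collared, provided the ambient space is normal. -/
theorem isStronglyCollared_aux {M : Type*} [TopologicalSpace M] [NormalSpace M] {B : Set M}
    (hBc : IsClosed B) (hcm : CountablyMetacompact ↥B) (hcoll : IsCollared B) :
    IsStronglyCollared B := by
  classical
  obtain ⟨h, hemb, h0, hpre, hopen⟩ := hcoll
  have hcont : Continuous h := hemb.continuous
  set W : Set M := h '' {p : ↥B × I | p.2 < 1} with hWdef
  have h01 : (0 : I) < 1 := by
    rw [← Subtype.coe_lt_coe]
    norm_num
  have hBW : B ⊆ W := fun x hx => ⟨(⟨x, hx⟩, 0), h01, h0 _⟩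
  obtain ⟨f, hf0, hf1, hf01⟩ :=
    exists_continuous_zero_one_of_isClosed hBc hopen.isClosed_compl
      (disjoint_compl_right_iff_subset.mpr hBW)
  set W' : Set M := f ⁻¹' (Iio (1 / 2 : ℝ)) with hW'def
  have hW'open : IsOpen W' := isOpen_Iio.preimage f.continuous
  have hW'cl : closure W' ⊆ W := by
    intro x hx
    by_contra hxW
    have h1 : f x = 1 := hf1 hxW
    have h2 : f x ≤ 1 / 2 := by
      have : closure W' ⊆ ⇑f ⁻¹' (Iic (1 / 2 : ℝ)) :=
        closure_minimal (preimage_mono Iio_subset_Iic_self) (isClosed_Iic.preimage f.continuous)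
      exact this hx
    rw [h1] at h2; norm_num at h2
  set a : ℕ → ℝ := fun k => (1 / 2 : ℝ) ^ (k + 1) with hadef
  set O : Set (↥B × I) := h ⁻¹' W' with hOdef
  have hO : IsOpen O := hW'open.preimage hcont
  set U : ℕ → Set ↥B := fun k => {x : ↥B | ∀ t : I, (t : ℝ) ≤ a k → (x, t) ∈ O} with hUdef
  have hUopen : ∀ k, IsOpen (U k) := by
    intro k
    rw [isOpen_iff_mem_nhds]
    intro x hx
    have hJ : IsCompact {t : I | (t : ℝ) ≤ a k} :=
      (isClosed_le continuous_subtype_val continuous_const).isCompact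
    have hsub : ({x} : Set ↥B) ×ˢ {t : I | (t : ℝ) ≤ a k} ⊆ O := by
      rintro ⟨y, t⟩ ⟨hy, ht⟩
      cases hy
      exact hx t ht
    obtain ⟨u, v, hu, _, hxu, hJv, huv⟩ :=
      generalized_tube_lemma isCompact_singleton hJ hO hsub
    refine Filter.mem_of_superset (hu.mem_nhds (hxu rfl)) ?_
    intro y hy t ht
    exact huv ⟨hy, hJv ht⟩
  have hUcover : ∀ x : ↥B, ∃ k, x ∈ U k := by
    intro x
    have hx0 : ((x, (0 : I)) : ↥B × I) ∈ O := by
      show h (x, 0) ∈ W'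
      rw [h0]
      show f x < 1 / 2
      rw [hf0 x.2]
      norm_num
    have hc : Continuous fun t : I => ((x, t) : ↥B × I) :=
      continuous_const.prodMk continuous_id
    have hN : {t : I | (x, t) ∈ O} ∈ nhds (0 : I) := (hO.preimage hc).mem_nhds hx0
    obtain ⟨ε, hε, hball⟩ := Metric.mem_nhds_iff.1 hN
    obtain ⟨k, hk⟩ := exists_pow_lt_of_lt_one hε (by norm_num : (1 / 2 : ℝ) < 1)
    refine ⟨k, fun t ht => hball ?_⟩
    have htk : (t : ℝ) ≤ (1 / 2 : ℝ) ^ k := by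
      refine le_trans ht ?_
      rw [hadef]
      exact pow_le_pow_of_le_one (by norm_num) (by norm_num) (Nat.le_succ k)
    have : dist t (0 : I) = (t : ℝ) := by
      rw [Subtype.dist_eq]
      simp [Real.dist_eq, abs_of_nonneg t.2.1]
    rw [Metric.mem_ball, this]
    exact lt_of_le_of_lt htk hk
  obtain ⟨𝒱, h𝒱open, h𝒱cover, h𝒱ref, h𝒱pf⟩ :=
    hcm (range U) (countable_range U) (by rintro _ ⟨k, rfl⟩; exact hUopen k)
      (by
        rw [sUnion_range, iUnion_eq_univ_iff]
        exact hUcover)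
  have hidx : ∀ V ∈ 𝒱, ∃ k, V ⊆ U k := by
    intro V hV
    obtain ⟨Uu, ⟨k, rfl⟩, hsub⟩ := h𝒱ref V hV
    exact ⟨k, hsub⟩
  choose! κ hκ using hidx
  set V' : ℕ → Set ↥B := fun k => ⋃ V ∈ {V ∈ 𝒱 | κ V = k}, V with hV'def
  have hV'open : ∀ k, IsOpen (V' k) :=
    fun k => isOpen_biUnion fun V hV => h𝒱open V hV.1
  have hV'sub : ∀ k, V' k ⊆ U k := by
    intro k
    refine iUnion₂_subset fun V hV => ?_
    rw [← hV.2]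
    exact hκ V hV.1
  have hV'cover : ⋃ k, V' k = univ := by
    rw [eq_univ_iff_forall]
    intro x
    have : x ∈ ⋃₀ 𝒱 := h𝒱cover ▸ mem_univ x
    obtain ⟨V, hV, hxV⟩ := this
    exact mem_iUnion.2 ⟨κ V, mem_biUnion ⟨hV, rfl⟩ hxV⟩
  have hV'pf : ∀ x : ↥B, {k | x ∈ V' k}.Finite := by
    intro x
    apply ((h𝒱pf x).image κ).subset
    intro k hk
    simp only [hV'def, mem_iUnion, exists_prop, mem_setOf_eq] at hk
    obtain ⟨V, ⟨hV𝒱, hVk⟩, hxV⟩ := hk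
    exact ⟨V, ⟨hV𝒱, hxV⟩, hVk⟩
  haveI : NormalSpace ↥B := hBc.isClosedEmbedding_subtypeVal.normalSpace
  obtain ⟨v, hvcover, hvopen, hvcl⟩ :=
    exists_iUnion_eq_closure_subset hV'open hV'pf hV'cover
  have hg : ∀ k, ∃ g : C(↥B, ℝ), EqOn g 0 ((V' k)ᶜ) ∧ EqOn g 1 (closure (v k)) ∧
      ∀ x, g x ∈ Icc (0 : ℝ) 1 := by
    intro k
    refine exists_continuous_zero_one_of_isClosed (hV'open k).isClosed_compl
      isClosed_closure ?_
    rw [disjoint_compl_left_iff_subset]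
    exact hvcl k
  choose g hg0 hg1 hg01 using hg
  set c : ℕ → ↥B → ℝ := fun k x => (1 / 4 : ℝ) ^ (k + 1) * g k x with hcdef
  have hc_nonneg : ∀ k x, 0 ≤ c k x :=
    fun k x => mul_nonneg (pow_nonneg (by norm_num) _) (hg01 k x).1
  have hc_le : ∀ k x, c k x ≤ (1 / 4 : ℝ) ^ (k + 1) := by
    intro k x
    calc c k x ≤ (1 / 4 : ℝ) ^ (k + 1) * 1 :=
          mul_le_mul_of_nonneg_left (hg01 k x).2 (pow_nonneg (by norm_num) _)
      _ = (1 / 4 : ℝ) ^ (k + 1) := mul_one _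
  have Sgeom : Summable (fun k => (1 / 4 : ℝ) ^ (k + 1)) :=
    (summable_nat_add_iff 1).2 (summable_geometric_of_lt_one (by norm_num) (by norm_num))
  have hsum : ∀ x, Summable fun k => c k x := by
    intro x
    exact Summable.of_nonneg_of_le (fun k => hc_nonneg k x) (fun k => hc_le k x) Sgeom
  set π : ↥B → ℝ := fun x => ∑' k, c k x with hπdef
  have hπcont : Continuous π := by
    refine continuous_tsum (fun k => continuous_const.mul (g k).continuous) Sgeom ?_
    intro k x
    rw [Real.norm_eq_abs, abs_of_nonneg (hc_nonneg k x)]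
    exact hc_le k x
  have geomsum : ∑' k, (1 / 4 : ℝ) ^ (k + 1) = 1 / 3 := by
    have : (fun k : ℕ => (1 / 4 : ℝ) ^ (k + 1)) = fun k : ℕ => (1 / 4 : ℝ) * (1 / 4) ^ k := by
      funext k; rw [pow_succ]; ring
    rw [this, tsum_mul_left, tsum_geometric_of_lt_one (by norm_num) (by norm_num)]
    norm_num
  have hπpos : ∀ x, 0 < π x := by
    intro x
    have hxv : ∃ k, x ∈ v k := by
      rw [← mem_iUnion, hvcover]; trivial
    obtain ⟨k, hk⟩ := hxv
    refine Summable.tsum_pos (hsum x) (fun j => hc_nonneg j x) k ?_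
    have : g k x = 1 := hg1 k (subset_closure hk)
    rw [hcdef]
    simp only [this]
    positivity
  have hπle : ∀ x, π x ≤ 1 / 3 := by
    intro x
    calc π x ≤ ∑' k, (1 / 4 : ℝ) ^ (k + 1) :=
          Summable.tsum_le_tsum (fun k => hc_le k x) (hsum x) Sgeom
      _ = 1 / 3 := geomsum
  have hπ1 : ∀ x, π x ≤ 1 := fun x => le_trans (hπle x) (by norm_num)
  have hπ0 : ∀ x, 0 ≤ π x := fun x => (hπpos x).le
  -- the key safety estimate
  have hsafe : ∀ (x : ↥B) (t : I), (t : ℝ) ≤ π x → h (x, t) ∈ W' := by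
    intro x t ht
    have hex : ∃ k, g k x ≠ 0 := by
      by_contra hno
      push_neg at hno
      have : π x = 0 := by
        rw [hπdef]
        simp only [hcdef, hno, mul_zero]
        exact tsum_zero
      linarith [hπpos x]
    set k0 := Nat.find hex with hk0def
    have hk0 : g k0 x ≠ 0 := Nat.find_spec hex
    have hlt : ∀ k < k0, g k x = 0 := fun k hk => not_not.1 (Nat.find_min hex hk)
    have hbound : π x ≤ a k0 := by
      have h1 : π x = ∑' j, c (j + k0) x := by
        have h1' : ∑ i ∈ Finset.range k0, c i x + ∑' j, c (j + k0) x = π x :=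
          Summable.sum_add_tsum_nat_add k0 (hsum x)
        have hz : ∑ i ∈ Finset.range k0, c i x = 0 :=
          Finset.sum_eq_zero fun i hi => by
            rw [hcdef]; simp [hlt i (Finset.mem_range.1 hi)]
        rw [hz, zero_add] at h1'
        exact h1'.symm
      have hsum2 : Summable fun j => c (j + k0) x := (summable_nat_add_iff k0).2 (hsum x)
      have hsum3 : Summable fun j : ℕ => (1 / 4 : ℝ) ^ (j + k0 + 1) := by
        have := (summable_nat_add_iff (f := fun k : ℕ => (1 / 4 : ℝ) ^ (k + 1)) k0).2 Sgeom
        simpa using this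
      have h2 : π x ≤ ∑' j : ℕ, (1 / 4 : ℝ) ^ (j + k0 + 1) := by
        rw [h1]
        exact Summable.tsum_le_tsum (fun j => hc_le _ x) hsum2 hsum3
      have h3 : ∑' j : ℕ, (1 / 4 : ℝ) ^ (j + k0 + 1)
          = (1 / 4 : ℝ) ^ k0 * ∑' j : ℕ, (1 / 4 : ℝ) ^ (j + 1) := by
        rw [← tsum_mul_left]
        exact tsum_congr fun j => by
          rw [show j + k0 + 1 = k0 + (j + 1) by omega, pow_add]
      have h4 : (1 / 4 : ℝ) ^ k0 * (1 / 3) ≤ a k0 := by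
        show (1 / 4 : ℝ) ^ k0 * (1 / 3) ≤ (1 / 2 : ℝ) ^ (k0 + 1)
        have he : (1 / 4 : ℝ) ^ k0 = (1 / 2) ^ k0 * (1 / 2) ^ k0 := by
          rw [← mul_pow]; norm_num
        have hp1 : (0 : ℝ) < (1 / 2) ^ k0 := pow_pos (by norm_num) _
        have hp2 : ((1 : ℝ) / 2) ^ k0 ≤ 1 := pow_le_one₀ (by norm_num) (by norm_num)
        rw [he, pow_succ]
        nlinarith
      calc π x ≤ ∑' j : ℕ, (1 / 4 : ℝ) ^ (j + k0 + 1) := h2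
        _ = (1 / 4 : ℝ) ^ k0 * (1 / 3) := by rw [h3, geomsum]
        _ ≤ a k0 := h4
    have hxU : x ∈ U k0 := by
      have hxV' : x ∈ V' k0 := by
        by_contra hx
        exact hk0 (hg0 k0 hx)
      exact hV'sub k0 hxV'
    exact hxU t (le_trans ht hbound)
  -- reparametrization
  set Φ : ↥B × I → ↥B × I := fun p =>
    (p.1, ⟨(p.2 : ℝ) * π p.1,
      mul_nonneg p.2.2.1 (hπ0 p.1), mul_le_one₀ p.2.2.2 (hπ0 p.1) (hπ1 p.1)⟩) with hΦdef
  have hΦcont : Continuous Φ := by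
    refine continuous_fst.prodMk (Continuous.subtype_mk ?_ _)
    exact (continuous_subtype_val.comp continuous_snd).mul (hπcont.comp continuous_fst)
  set ψ : ↥B × I → ↥B × I := fun p =>
    (p.1, projIcc (0 : ℝ) 1 zero_le_one ((p.2 : ℝ) / π p.1)) with hψdef
  have hψcont : Continuous ψ := by
    refine continuous_fst.prodMk (continuous_projIcc.comp ?_)
    exact (continuous_subtype_val.comp continuous_snd).div (hπcont.comp continuous_fst)
      fun p => (hπpos p.1).ne'
  have hψΦ : ∀ p, ψ (Φ p) = p := by
    rintro ⟨x, t⟩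
    simp only [hψdef, hΦdef]
    refine Prod.ext rfl ?_
    show projIcc (0 : ℝ) 1 zero_le_one ((t : ℝ) * π x / π x) = t
    rw [mul_div_cancel_right₀ _ (hπpos x).ne']
    exact projIcc_val zero_le_one t
  have hΦemb : Topology.IsEmbedding Φ :=
    ⟨Topology.IsInducing.of_comp hΦcont hψcont
      (by rw [show ψ ∘ Φ = id from funext hψΦ]; exact Topology.IsInducing.id),
      Function.LeftInverse.injective hψΦ⟩
  set S : Set (↥B × I) := {p : ↥B × I | (p.2 : ℝ) ≤ π p.1} with hSdef
  have hSclosed : IsClosed S :=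
    isClosed_le (continuous_subtype_val.comp continuous_snd) (hπcont.comp continuous_fst)
  have hrange : range Φ = S := by
    ext ⟨x, s⟩
    constructor
    · rintro ⟨⟨y, t⟩, hq⟩
      rw [← hq]
      exact mul_le_of_le_one_left (hπ0 y) t.2.2
    · intro hs
      have hmem : (s : ℝ) / π x ∈ Icc (0 : ℝ) 1 :=
        ⟨div_nonneg s.2.1 (hπ0 x), (div_le_one (hπpos x)).2 hs⟩
      refine ⟨(x, projIcc (0 : ℝ) 1 zero_le_one ((s : ℝ) / π x)), ?_⟩
      simp only [hΦdef]
      refine Prod.ext rfl (Subtype.ext ?_)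
      show (projIcc (0 : ℝ) 1 zero_le_one ((s : ℝ) / π x) : ℝ) * π x = (s : ℝ)
      rw [projIcc_of_mem zero_le_one hmem]
      exact div_mul_cancel₀ _ (hπpos x).ne'
  have hΦclosed : IsClosedMap Φ :=
    (Topology.IsClosedEmbedding.mk hΦemb (hrange ▸ hSclosed)).isClosedMap
  have hSsafe : ∀ p ∈ S, h p ∈ W' := fun p hp => hsafe p.1 p.2 hp
  refine ⟨h ∘ Φ, ⟨hemb.comp hΦemb, ?_, ?_, ?_⟩, ?_⟩
  · -- h'(x,0) = x
    intro x
    show h (Φ (x, 0)) = x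
    have : Φ (x, 0) = (x, 0) := by
      simp only [hΦdef]
      exact Prod.ext rfl (Subtype.ext (by simp))
    rw [this]
    exact h0 x
  · -- preimage of B
    ext ⟨x, t⟩
    simp only [mem_preimage, mem_setOf_eq, Function.comp_apply]
    constructor
    · intro hb
      have hmem : Φ (x, t) ∈ h ⁻¹' B := hb
      rw [hpre] at hmem
      have h2 : (t : ℝ) * π x = 0 := congrArg Subtype.val hmem
      rcases mul_eq_zero.1 h2 with h3 | h3
      · exact Subtype.ext h3
      · exact absurd h3 (hπpos x).ne'
    · rintro rfl
      show Φ (x, 0) ∈ h ⁻¹' B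
      rw [hpre]
      show (Φ (x, 0)).2 = 0
      exact Subtype.ext (by simp [hΦdef])
  · -- image of B × [0,1) is open
    set G : Set (↥B × I) := {p : ↥B × I | (p.2 : ℝ) < π p.1} with hGdef
    have hG : IsOpen G :=
      isOpen_lt (continuous_subtype_val.comp continuous_snd) (hπcont.comp continuous_fst)
    have hΦG : Φ '' {p : ↥B × I | p.2 < 1} = G := by
      ext ⟨x, s⟩
      constructor
      · rintro ⟨⟨y, t⟩, ht, hq⟩
        have ht' : (t : ℝ) < 1 := by
          simpa using Subtype.coe_lt_coe.2 (show t < 1 from ht)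
        rw [← hq]
        exact mul_lt_of_lt_one_left (hπpos y) ht'
      · intro hs
        have hs' : (s : ℝ) < π x := hs
        have hmem : (s : ℝ) / π x ∈ Icc (0 : ℝ) 1 :=
          ⟨div_nonneg s.2.1 (hπ0 x), (div_le_one (hπpos x)).2 hs'.le⟩
        refine ⟨(x, projIcc (0 : ℝ) 1 zero_le_one ((s : ℝ) / π x)), ?_, ?_⟩
        · show projIcc (0 : ℝ) 1 zero_le_one ((s : ℝ) / π x) < 1
          rw [← Subtype.coe_lt_coe, projIcc_of_mem zero_le_one hmem]
          show (s : ℝ) / π x < ((1 : I) : ℝ)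
          rw [Set.Icc.coe_one]
          exact (div_lt_one (hπpos x)).2 hs'
        · simp only [hΦdef]
          refine Prod.ext rfl (Subtype.ext ?_)
          show (projIcc (0 : ℝ) 1 zero_le_one ((s : ℝ) / π x) : ℝ) * π x = (s : ℝ)
          rw [projIcc_of_mem zero_le_one hmem]
          exact div_mul_cancel₀ _ (hπpos x).ne'
    have himage : (h ∘ Φ) '' {p : ↥B × I | p.2 < 1} = h '' G := by
      rw [image_comp, hΦG]
    rw [himage]
    obtain ⟨O₂, hO₂open, hO₂⟩ := hemb.isInducing.isOpen_iff.1 hG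
    have hGW : G ⊆ {p : ↥B × I | p.2 < 1} := by
      intro p hp
      have hp' : (p.2 : ℝ) < π p.1 := hp
      show p.2 < 1
      rw [← Subtype.coe_lt_coe]
      show (p.2 : ℝ) < ((1 : I) : ℝ)
      rw [Set.Icc.coe_one]
      linarith [hπle p.1]
    have heq : h '' G = O₂ ∩ W := by
      apply subset_antisymm
      · rintro _ ⟨p, hp, rfl⟩
        exact ⟨by rw [← hO₂] at hp; exact hp, ⟨p, hGW hp, rfl⟩⟩
      · rintro z ⟨hzO, ⟨p, _, rfl⟩⟩
        have : p ∈ G := by rw [← hO₂]; exact hzO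
        exact ⟨p, this, rfl⟩
    rw [heq]
    exact hO₂open.inter hopen
  · -- the closed map condition
    intro K hK
    have hC : IsClosed (Φ '' K) := hΦclosed K hK
    have hCS : Φ '' K ⊆ S := by
      rw [← hrange]
      exact (image_subset_range _ _)
    have himg : (h ∘ Φ) '' K = h '' (Φ '' K) := image_comp _ _ _
    rw [himg]
    apply isClosed_of_closure_subset
    intro z hz
    have hzW : z ∈ W := by
      apply hW'cl
      refine closure_mono ?_ hz
      rintro _ ⟨p, hp, rfl⟩
      exact hSsafe p (hCS hp)
    obtain ⟨q, _, rfl⟩ := hzW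
    have hq : q ∈ closure (Φ '' K) := by
      rw [hemb.closure_eq_preimage_closure_image (Φ '' K)]
      exact hz
    exact ⟨q, hC.closure_subset hq, rfl⟩

/-- If `M` is a connected `n`-manifold with boundary, `M` is normal, `∂M` is countably
metacompact (as a space) and collared in `M`, then `∂M` is strongly collared in `M`. -/
theorem boundary_stronglyCollared_of_normal_countablyMetacompact (n : ℕ) (M : Type*)
    [TopologicalSpace M] [T2Space M] [NormalSpace M] [ConnectedSpace M]
    (hM : IsManifoldWithBoundary n M)
    (hcm : CountablyMetacompact ↥(mBoundary n M))
    (hcoll : IsCollared (mBoundary n M)) :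
    IsStronglyCollared (mBoundary n M) := by
  exact isStronglyCollared_aux (isClosed_mBoundary n M) hcm hcoll
end

section
/- Let X be a regular Hausdorff space and B a closed subset of X which is locally collared in X. Then B is locally strongly collared in X. -/
open Set Topology unitInterval

variable {X : Type*} [TopologicalSpace X]

/-- `h : cl(U) × [0,1] → X` (with `U ⊆ B` and the closure taken in `B`) is a local collar
of `B` in `X`: an embedding with `h(x,0) = x`, `h⁻¹(B) = cl(U) × {0}`, and `h(U × [0,1))`
open in `X`. -/
def IsLocalCollarMap (B : Set X) (U : Set B) (h : closure U × I → X) : Prop :=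
  Topology.IsEmbedding h ∧ (∀ x : closure U, h (x, 0) = ((x : B) : X)) ∧
    h ⁻¹' B = {p : closure U × I | p.2 = 0} ∧
    IsOpen (h '' {p : closure U × I | (p.1 : B) ∈ U ∧ p.2 < 1})

/-- `B` is locally collared in `X`: there is a cover of `B` by sets open in `B`, each of
which admits a local collar. -/
def IsLocallyCollared (B : Set X) : Prop :=
  ∃ 𝒰 : Set (Set B), (∀ U ∈ 𝒰, IsOpen U) ∧ ⋃₀ 𝒰 = univ ∧
    ∀ U ∈ 𝒰, ∃ h : closure U × I → X, IsLocalCollarMap B U h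


/-- `B` is locally strongly collared in `X`: there is a cover of `B` by sets open in `B`,
each of which admits a local collar that is moreover a closed map. -/
def IsLocallyStronglyCollared (B : Set X) : Prop :=
  ∃ 𝒰 : Set (Set B), (∀ U ∈ 𝒰, IsOpen U) ∧ ⋃₀ 𝒰 = univ ∧
    ∀ U ∈ 𝒰, ∃ h : closure U × I → X, IsLocalCollarMap B U h ∧ IsClosedMap h

theorem exists_strong_local_collar {Y : Type*} [TopologicalSpace Y]
    [T2Space Y] [RegularSpace Y] {B : Set Y} {U : Set B} (hUo : IsOpen U)
    {h : closure U × I → Y} (hh : IsLocalCollarMap B U h) {x : B} (hx : x ∈ U) :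
    ∃ V : Set B, IsOpen V ∧ x ∈ V ∧
      ∃ g : closure V × I → Y, IsLocalCollarMap B V g ∧ IsClosedMap g := by
  obtain ⟨hemb, hzero, hpre, hWopen⟩ := hh
  have h01 : (0 : I) < 1 := by rw [← Subtype.coe_lt_coe]; norm_num
  have hxcl : (x : B) ∈ closure U := subset_closure hx
  set W : Set Y := h '' {p : closure U × I | (p.1 : B) ∈ U ∧ p.2 < 1} with hWdef
  have hWr : W ⊆ range h := image_subset_range _ _
  have hxW : (x : Y) ∈ W := ⟨(⟨x, hxcl⟩, 0), ⟨hx, h01⟩, hzero ⟨x, hxcl⟩⟩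
  obtain ⟨t0, ht0x, ht0c, ht0s⟩ := exists_mem_nhds_isClosed_subset (hWopen.mem_nhds hxW)
  set O := interior t0 with hO
  have hOopen : IsOpen O := isOpen_interior
  have hxO : (x : Y) ∈ O := mem_interior_iff_mem_nhds.2 ht0x
  have hclO : closure O ⊆ W := (closure_minimal interior_subset ht0c).trans ht0s
  have hcont : Continuous h := hemb.continuous
  have hmem : h ⁻¹' O ∈ 𝓝 ((⟨x, hxcl⟩ : closure U), (0 : I)) :=
    hcont.continuousAt.preimage_mem_nhds (hOopen.mem_nhds (by rw [hzero ⟨x, hxcl⟩]; exact hxO))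
  rw [mem_nhds_prod_iff] at hmem
  obtain ⟨N, hN, v, hv, hNv⟩ := hmem
  obtain ⟨u, hu0, huv⟩ := exists_Ico_subset_of_mem_nhds hv ⟨1, h01⟩
  have hu0' : (0 : ℝ) < (u : ℝ) := by exact_mod_cast hu0
  set s : I := ⟨(u : ℝ) / 2, ⟨by positivity, by linarith [u.2.2]⟩⟩ with hs
  have hs0 : (0 : ℝ) < (s : ℝ) := by positivity
  have hsu : (s : ℝ) < (u : ℝ) := half_lt_self hu0'
  have hsu' : s < u := by exact_mod_cast hsu
  have hle : ∀ τ : I, τ ≤ s → τ ∈ v := fun τ hτ =>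
    huv ⟨nonneg' , lt_of_le_of_lt hτ hsu'⟩
  -- shrink N to an open set
  obtain ⟨N₀, hN₀sub, hN₀open, hxN₀⟩ := mem_nhds_iff.1 hN
  obtain ⟨N', hN'open, hN'pre⟩ := isOpen_induced_iff.1 hN₀open
  have hxN' : (x : B) ∈ N' := by
    have := hxN₀; rw [← hN'pre] at this; exact this
  -- regularity in B to get V
  obtain ⟨t1, ht1x, ht1c, ht1s⟩ :=
    exists_mem_nhds_isClosed_subset ((hUo.inter hN'open).mem_nhds ⟨hx, hxN'⟩)
  set V := interior t1 with hV
  have hVopen : IsOpen V := isOpen_interior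
  have hxV : x ∈ V := mem_interior_iff_mem_nhds.2 ht1x
  have hclV : closure V ⊆ U ∩ N' := (closure_minimal interior_subset ht1c).trans ht1s
  have hVU : closure V ⊆ U := hclV.trans inter_subset_left
  have hVclU : closure V ⊆ closure U := hVU.trans subset_closure
  -- the maps
  set ι : closure V → closure U := Set.inclusion hVclU with hι
  set m : I → I := fun τ => ⟨(s : ℝ) * (τ : ℝ),
    ⟨mul_nonneg hs0.le τ.2.1, mul_le_one₀ s.2.2 τ.2.1 τ.2.2⟩⟩ with hm
  have hmc : Continuous m := Continuous.subtype_mk (continuous_const.mul continuous_subtype_val) _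
  have hminj : Function.Injective m := fun a b hab =>
    Subtype.ext (mul_left_cancel₀ hs0.ne' (congrArg Subtype.val hab))
  have hmemb : IsEmbedding m := (hmc.isClosedEmbedding hminj).isEmbedding
  have hm0 : m 0 = 0 := Subtype.ext (by simp [hm])
  have hmle : ∀ τ : I, m τ ≤ s := fun τ => by
    rw [← Subtype.coe_le_coe]
    exact mul_le_of_le_one_right hs0.le τ.2.2
  set g : closure V × I → Y := h ∘ Prod.map ι m with hg
  have hgemb : IsEmbedding g := hemb.comp ((IsEmbedding.inclusion hVclU).prodMap hmemb)
  have hgzero : ∀ y : closure V, g (y, 0) = ((y : B) : Y) := fun y => by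
    show h (ι y, m 0) = _
    rw [hm0, hzero (ι y)]
  have hgpre : g ⁻¹' B = {p : closure V × I | p.2 = 0} := by
    ext ⟨y, τ⟩
    have : g (y, τ) ∈ B ↔ (ι y, m τ) ∈ h ⁻¹' B := Iff.rfl
    rw [mem_preimage, this, hpre]
    simp only [mem_setOf_eq]
    constructor
    · intro hmt
      have : (s : ℝ) * (τ : ℝ) = 0 := congrArg Subtype.val hmt
      rcases mul_eq_zero.1 this with h' | h'
      · exact absurd h' hs0.ne'
      · exact Subtype.ext h'
    · intro hτ; rw [hτ]; exact hm0
  -- the open image condition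
  set T : Set (closure U × I) := {q : closure U × I | (q.1 : B) ∈ V ∧ (q.2 : ℝ) < (s : ℝ)}
    with hT
  have hTopen : IsOpen T := by
    have : T = (fun q : closure U × I => (q.1 : B)) ⁻¹' V ∩
        (fun q : closure U × I => (q.2 : ℝ)) ⁻¹' (Iio (s : ℝ)) := rfl
    rw [this]
    exact ((hVopen.preimage (continuous_subtype_val.comp continuous_fst)).inter
      (isOpen_Iio.preimage (continuous_subtype_val.comp continuous_snd)))
  have hTsub : T ⊆ {p : closure U × I | (p.1 : B) ∈ U ∧ p.2 < 1} := by
    rintro ⟨z, τ⟩ ⟨hz, hτ⟩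
    refine ⟨hVU (subset_closure hz), ?_⟩
    rw [← Subtype.coe_lt_coe]
    exact lt_of_lt_of_le hτ (le_trans hsu.le u.2.2)
  have himeq : g '' {p : closure V × I | (p.1 : B) ∈ V ∧ p.2 < 1} = h '' T := by
    apply Subset.antisymm
    · rintro z ⟨⟨y, τ⟩, ⟨hyV, hτ1⟩, rfl⟩
      refine ⟨(ι y, m τ), ⟨hyV, ?_⟩, rfl⟩
      show (s : ℝ) * (τ : ℝ) < (s : ℝ)
      have hτ1' : (τ : ℝ) < 1 := by exact_mod_cast hτ1
      calc (s : ℝ) * τ < (s : ℝ) * 1 := by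
            exact mul_lt_mul_of_pos_left hτ1' hs0
        _ = s := mul_one _
    · rintro z ⟨⟨z₁, τ⟩, ⟨hz1, hτs⟩, rfl⟩
      have hτ0 : (0 : ℝ) ≤ (τ : ℝ) := τ.2.1
      refine ⟨(⟨(z₁ : B), subset_closure hz1⟩, ⟨(τ : ℝ) / (s : ℝ),
        ⟨div_nonneg hτ0 hs0.le, ((div_lt_one hs0).2 hτs).le⟩⟩), ⟨hz1, ?_⟩, ?_⟩
      · rw [← Subtype.coe_lt_coe]
        exact (div_lt_one hs0).2 hτs
      · show h (_, _) = h (z₁, τ)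
        congr 1
        refine Prod.ext (Subtype.ext rfl) (Subtype.ext ?_)
        show (s : ℝ) * ((τ : ℝ) / (s : ℝ)) = (τ : ℝ)
        rw [mul_comm]
        exact div_mul_cancel₀ _ hs0.ne'
  have hgopen : IsOpen (g '' {p : closure V × I | (p.1 : B) ∈ V ∧ p.2 < 1}) := by
    rw [himeq]
    obtain ⟨G, hGopen, hGpre⟩ := hemb.isInducing.isOpen_iff.1 hTopen
    have h1 : h '' T = G ∩ range h := by rw [← hGpre, image_preimage_eq_inter_range]
    have h2 : h '' T = G ∩ W := by
      apply Subset.antisymm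
      · exact subset_inter (h1 ▸ inter_subset_left) (image_mono hTsub)
      · rw [h1]; exact inter_subset_inter_right _ hWr
    rw [h2]; exact hGopen.inter hWopen
  -- closedness
  have hCO : ∀ p : closure V × I, g p ∈ O := by
    rintro ⟨y, τ⟩
    apply hNv
    constructor
    · apply hN₀sub
      rw [← hN'pre]
      exact (hclV y.2).2
    · exact hle _ (hmle τ)
  have hrange : range g ⊆ O := range_subset_iff.2 hCO
  have hCclosed : IsClosed (range (Prod.map ι m)) := by
    rw [range_prodMap]
    apply IsClosed.prod
    · rw [range_inclusion]
      exact isClosed_closure.preimage continuous_subtype_val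
    · exact (isCompact_range hmc).isClosed
  have hgrange : range g = h '' range (Prod.map ι m) := by
    rw [hg, range_comp]
  have hgclosedrange : IsClosed (range g) := by
    obtain ⟨F, hFclosed, hFpre⟩ := hemb.isInducing.isClosed_iff.1 hCclosed
    have him : h '' range (Prod.map ι m) = F ∩ range h := by
      rw [← hFpre, image_preimage_eq_inter_range]
    apply isClosed_of_closure_subset
    intro z hz
    have hzF : z ∈ F := closure_minimal (by rw [hgrange, him]; exact inter_subset_left)
      hFclosed hz
    have hzr : z ∈ range h := hWr (hclO (closure_mono hrange hz))
    rw [hgrange, him]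
    exact ⟨hzF, hzr⟩
  exact ⟨V, hVopen, hxV, g, ⟨hgemb, hgzero, hgpre, hgopen⟩,
    (Topology.IsClosedEmbedding.mk hgemb hgclosedrange).isClosedMap⟩


/-- If `B` is a closed, locally collared subset of a regular Hausdorff space `X`, then `B` is
locally strongly collared in `X`. -/
theorem locallyStronglyCollared_of_locallyCollared {Y : Type*} [TopologicalSpace Y]
    [T2Space Y] [RegularSpace Y] (B : Set Y) (hB : IsClosed B)
    (hlc : IsLocallyCollared B) :
    IsLocallyStronglyCollared B := by
  obtain ⟨𝒰, hopen, hcover, hcol⟩ := hlc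
  refine ⟨{V : Set B | IsOpen V ∧
      ∃ g : closure V × I → Y, IsLocalCollarMap B V g ∧ IsClosedMap g},
    fun V hV => hV.1, ?_, fun V hV => hV.2⟩
  apply eq_univ_of_forall
  intro x
  have hx : x ∈ ⋃₀ 𝒰 := by rw [hcover]; trivial
  obtain ⟨U, hU𝒰, hxU⟩ := hx
  obtain ⟨h, hh⟩ := hcol U hU𝒰
  obtain ⟨V, hVopen, hxV, g, hg, hgc⟩ := exists_strong_local_collar (hopen U hU𝒰) hh hxU
  exact ⟨V, ⟨hVopen, g, hg, hgc⟩, hxV⟩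
end

section
/- Let M be a normal Hausdorff space and B a closed subset of M which is countably metacompact (as a topological space) and collared in M. Then B is strongly collared in M. -/
open Set Topology unitInterval

variable {X : Type*} [TopologicalSpace X]

/-- In a countably metacompact normal space `Y`, given an open set `W ⊆ Y × I` containing
`Y × {0}`, there is a continuous positive function `f ≤ 1/2` on `Y` with
`{(y,t) : t ≤ f y} ⊆ W`. -/
lemma exists_shrink_fun {Y : Type*} [TopologicalSpace Y] [NormalSpace Y]
    (hcm : CountablyMetacompact Y) {W : Set (Y × I)} (hW : IsOpen W)
    (hW0 : ∀ y : Y, (y, (0 : I)) ∈ W) :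
    ∃ f : Y → ℝ, Continuous f ∧ (∀ y, 0 < f y) ∧ (∀ y, f y ≤ 2⁻¹) ∧
      ∀ (y : Y) (t : I), (t : ℝ) ≤ f y → (y, t) ∈ W := by
  classical
  set ε : ℕ → ℝ := fun n => (2⁻¹ : ℝ) ^ n with hε
  have hεpos : ∀ n, 0 < ε n := fun n => pow_pos (by norm_num) n
  have hεmono : ∀ {m n : ℕ}, m ≤ n → ε n ≤ ε m := fun {m n} hmn =>
    pow_le_pow_of_le_one (by norm_num) (by norm_num) hmn
  set Bn : ℕ → Set Y := fun n => {y | ∀ t : I, (t : ℝ) ≤ ε n → (y, t) ∈ W} with hBn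
  have hBnmono : ∀ {m n : ℕ}, m ≤ n → Bn m ⊆ Bn n := fun {m n} hmn y hy t ht =>
    hy t (ht.trans (hεmono hmn))
  have hBnopen : ∀ n, IsOpen (Bn n) := by
    intro n
    rw [isOpen_iff_forall_mem_open]
    intro y hy
    have hTcomp : IsCompact {t : I | (t : ℝ) ≤ ε n} :=
      (isClosed_le continuous_subtype_val continuous_const).isCompact
    have hsub : {y} ×ˢ {t : I | (t : ℝ) ≤ ε n} ⊆ W := by
      rintro ⟨y', t⟩ ⟨hy', ht⟩
      rcases Set.mem_singleton_iff.1 hy' with rfl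
      exact hy t ht
    obtain ⟨u, v, hu, _hv, hyu, hTv, huv⟩ :=
      generalized_tube_lemma isCompact_singleton hTcomp hW hsub
    exact ⟨u, fun y' hy' t ht => huv (Set.mk_mem_prod hy' (hTv ht)), hu, hyu rfl⟩
  have hBncover : ∀ y, ∃ n, y ∈ Bn n := by
    intro y
    have hmem : W ∈ 𝓝 (y, (0 : I)) := hW.mem_nhds (hW0 y)
    rw [mem_nhds_prod_iff] at hmem
    obtain ⟨u, hu, v, hv, huv⟩ := hmem
    obtain ⟨δ, hδ, hball⟩ := Metric.mem_nhds_iff.1 hv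
    obtain ⟨n, hn⟩ := exists_pow_lt_of_lt_one hδ (by norm_num : (2⁻¹ : ℝ) < 1)
    refine ⟨n, fun t ht => huv (Set.mk_mem_prod (mem_of_mem_nhds hu) (hball ?_))⟩
    rw [Metric.mem_ball, Subtype.dist_eq, Real.dist_eq]
    simpa [abs_of_nonneg t.2.1] using lt_of_le_of_lt ht hn
  obtain ⟨𝒱, hVopen, hVcover, hVref, hVpf⟩ := hcm (Set.range Bn) (Set.countable_range Bn)
    (by rintro _ ⟨n, rfl⟩; exact hBnopen n)
    (by
      rw [Set.eq_univ_iff_forall]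
      intro y
      obtain ⟨n, hn⟩ := hBncover y
      exact ⟨Bn n, ⟨n, rfl⟩, hn⟩)
  have hidx : ∀ V ∈ 𝒱, ∃ n, V ⊆ Bn n := by
    intro V hV
    obtain ⟨U', ⟨n, rfl⟩, hsub⟩ := hVref V hV
    exact ⟨n, hsub⟩
  choose! idx hidxspec using hidx
  set Cn : ℕ → Set Y := fun n => {y | ∀ V ∈ 𝒱, y ∈ V → idx V ≤ n} with hCn
  have hCnclosed : ∀ n, IsClosed (Cn n) := by
    intro n
    have hcompl : (Cn n)ᶜ = ⋃₀ {V | V ∈ 𝒱 ∧ n < idx V} := by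
      ext y
      simp only [Set.mem_compl_iff, hCn, Set.mem_setOf_eq, Set.mem_sUnion]
      push_neg
      constructor
      · rintro ⟨V, hV, hyV, hlt⟩
        exact ⟨V, ⟨hV, hlt⟩, hyV⟩
      · rintro ⟨V, ⟨hV, hlt⟩, hyV⟩
        exact ⟨V, hV, hyV, hlt⟩
    rw [← isOpen_compl_iff, hcompl]
    exact isOpen_sUnion fun V hV => hVopen V hV.1
  have hCnsub : ∀ n, Cn n ⊆ Bn n := by
    intro n y hy
    have hyU : y ∈ ⋃₀ 𝒱 := hVcover ▸ Set.mem_univ y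
    obtain ⟨V, hV, hyV⟩ := hyU
    exact hBnmono (hy V hV hyV) (hidxspec V hV hyV)
  have hCncover : ∀ y, ∃ n, y ∈ Cn n := by
    intro y
    exact ⟨(hVpf y).toFinset.sup idx, fun V hV hyV =>
      Finset.le_sup ((hVpf y).mem_toFinset.2 ⟨hV, hyV⟩)⟩
  have hw : ∀ n, ∃ w : C(Y, ℝ), Set.EqOn w 0 (Bn n)ᶜ ∧ Set.EqOn w 1 (Cn n) ∧
      ∀ y, w y ∈ Set.Icc (0 : ℝ) 1 := fun n =>
    exists_continuous_zero_one_of_isClosed (hBnopen n).isClosed_compl (hCnclosed n)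
      (Set.disjoint_left.2 fun y hy hy' => hy (hCnsub n hy'))
  choose w hw0 hw1 hw01 using hw
  set f : Y → ℝ := fun y => ∑' n, ε (n + 2) * w n y with hf
  have hterm_nonneg : ∀ n y, 0 ≤ ε (n + 2) * w n y := fun n y =>
    mul_nonneg (hεpos _).le (hw01 n y).1
  have hterm_le : ∀ n y, ε (n + 2) * w n y ≤ ε (n + 2) := fun n y =>
    mul_le_of_le_one_right (hεpos _).le (hw01 n y).2
  have h2geo : ∑' n : ℕ, (2⁻¹ : ℝ) ^ n = 2 := by
    rw [tsum_geometric_of_lt_one (by norm_num) (by norm_num)]; norm_num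
  have htail_sum : ∀ N : ℕ, ∑' n, ε (n + N) = 2 * ε N := by
    intro N
    calc ∑' n, ε (n + N) = ∑' n : ℕ, (2⁻¹ : ℝ) ^ n * ε N := by
          simp only [hε, pow_add]
      _ = (∑' n : ℕ, (2⁻¹ : ℝ) ^ n) * ε N := tsum_mul_right
      _ = 2 * ε N := by rw [h2geo]
  have hsumε : Summable fun n => ε (n + 2) := by
    have hg : Summable fun n : ℕ => (2⁻¹ : ℝ) ^ n :=
      summable_geometric_of_lt_one (by norm_num) (by norm_num)
    have hmr := hg.mul_right ((2⁻¹ : ℝ) ^ 2)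
    have hfun : (fun n : ℕ => ε (n + 2)) = fun n : ℕ => (2⁻¹ : ℝ) ^ n * (2⁻¹ : ℝ) ^ 2 := by
      funext n
      simp only [hε]
      rw [pow_add]
    rw [hfun]
    exact hmr
  have hsummable : ∀ y, Summable fun n => ε (n + 2) * w n y := fun y =>
    Summable.of_nonneg_of_le (fun n => hterm_nonneg n y) (fun n => hterm_le n y) hsumε
  have hfcont : Continuous f := by
    apply continuous_tsum (fun n => continuous_const.mul (w n).continuous) hsumε
    intro n y
    rw [Real.norm_eq_abs]
    exact (abs_of_nonneg (hterm_nonneg n y)).trans_le (hterm_le n y)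
  have hfpos : ∀ y, 0 < f y := by
    intro y
    obtain ⟨n, hn⟩ := hCncover y
    have h1 : ε (n + 2) * w n y = ε (n + 2) := by
      have := hw1 n hn
      rw [show w n y = 1 by simpa using this, mul_one]
    calc (0 : ℝ) < ε (n + 2) := hεpos _
      _ = ε (n + 2) * w n y := h1.symm
      _ ≤ f y := Summable.le_tsum (hsummable y) n fun m _ => hterm_nonneg m y
  have hfhalf : ∀ y, f y ≤ 2⁻¹ := by
    intro y
    calc f y ≤ ∑' n, ε (n + 2) := Summable.tsum_le_tsum (fun n => hterm_le n y) (hsummable y) hsumε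
      _ = 2 * ε 2 := htail_sum 2
      _ = 2⁻¹ := by norm_num [hε]
  have htail : ∀ (y : Y) (n₀ : ℕ), y ∉ Bn n₀ → f y ≤ ε (n₀ + 1) := by
    intro y n₀ hy
    have hwzero : ∀ m ≤ n₀, w m y = 0 := by
      intro m hm
      have hmem : y ∈ (Bn m)ᶜ := fun hmem => hy (hBnmono hm hmem)
      simpa using hw0 m hmem
    set d : ℕ → ℝ := fun m => if m < n₀ + 1 then 0 else ε (m + 2) with hd
    have hdsum : Summable d := by
      apply Summable.of_nonneg_of_le _ _ hsumε
      · intro m; by_cases hm : m < n₀ + 1 <;> simp only [hd, hm, if_true, if_false, le_refl, (hεpos _).le]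
      · intro m; by_cases hm : m < n₀ + 1 <;> simp only [hd, hm, if_true, if_false, le_refl, (hεpos _).le]
    have hfd : f y ≤ ∑' m, d m := by
      apply Summable.tsum_le_tsum _ (hsummable y) hdsum
      intro m
      by_cases hm : m < n₀ + 1
      · have hz : w m y = 0 := hwzero m (Nat.lt_succ_iff.1 hm)
        simp only [hd, hm, hz, if_true, mul_zero, le_refl]
      · simp only [hd, if_neg hm]
        exact hterm_le m y
    have hdval : ∑' m, d m = 2 * ε (n₀ + 3) := by
      have hinj : Function.Injective fun k : ℕ => k + (n₀ + 1) := fun a b hab =>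
        add_left_injective _ hab
      have hsupp : Function.support d ⊆ Set.range fun k : ℕ => k + (n₀ + 1) := by
        intro m hm
        simp only [Function.mem_support, hd] at hm
        by_cases hmlt : m < n₀ + 1
        · simp [hmlt] at hm
        · exact ⟨m - (n₀ + 1), by show m - (n₀ + 1) + (n₀ + 1) = m; omega⟩
      have hshift := Function.Injective.tsum_eq hinj hsupp
      have hval : ∀ k : ℕ, d (k + (n₀ + 1)) = ε (k + (n₀ + 3)) := by
        intro k
        have harg : k + (n₀ + 1) + 2 = k + (n₀ + 3) := by omega
        simp only [hd, harg]
        rw [if_neg (by omega)]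
      calc ∑' m, d m = ∑' k, d (k + (n₀ + 1)) := hshift.symm
        _ = ∑' k, ε (k + (n₀ + 3)) := by simp only [hval]
        _ = 2 * ε (n₀ + 3) := htail_sum (n₀ + 3)
    have hfin : 2 * ε (n₀ + 3) ≤ ε (n₀ + 1) := by
      have he : (2 : ℝ) * ε (n₀ + 3) = ε (n₀ + 2) := by
        simp only [hε]; ring
      rw [he]
      exact hεmono (by omega)
    calc f y ≤ ∑' m, d m := hfd
      _ = 2 * ε (n₀ + 3) := hdval
      _ ≤ ε (n₀ + 1) := hfin
  refine ⟨f, hfcont, hfpos, hfhalf, ?_⟩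
  intro y t ht
  by_cases h0 : y ∈ Bn 0
  · exact h0 t (by simpa [hε] using t.2.2)
  · obtain ⟨N, hN⟩ := hCncover y
    have hyBN : y ∈ Bn N := hCnsub N hN
    set P : ℕ → Prop := fun n => y ∉ Bn n with hP
    have hn₀P : P (Nat.findGreatest P N) := Nat.findGreatest_spec (Nat.zero_le N) h0
    set n₀ := Nat.findGreatest P N with hn₀
    have hlt : n₀ < N := lt_of_not_ge fun hge => hn₀P (hBnmono hge hyBN)
    have hy1 : y ∈ Bn (n₀ + 1) := by
      by_contra hcon
      have := Nat.le_findGreatest (show n₀ + 1 ≤ N by omega) (show P (n₀ + 1) from hcon)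
      omega
    exact hy1 t (le_trans ht (htail y n₀ hn₀P))

/-- If `B` is a closed subset of a normal Hausdorff space `M` which is countably metacompact
(as a space) and collared in `M`, then `B` is strongly collared in `M`. -/
theorem stronglyCollared_of_collared_countablyMetacompact {M : Type*} [TopologicalSpace M]
    [T2Space M] [NormalSpace M] (B : Set M) (hB : IsClosed B)
    (hcm : CountablyMetacompact ↥B) (hcoll : IsCollared B) :
    IsStronglyCollared B := by
  classical
  obtain ⟨h, hemb, hzero, hpre, hUopen⟩ := hcoll
  have hcont : Continuous h := hemb.continuous
  have h01 : (0 : I) < 1 := by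
    rw [← coe_lt_one]
    norm_num
  have hBU : B ⊆ h '' {p : ↥B × I | p.2 < 1} := fun b hb => ⟨(⟨b, hb⟩, 0), h01, hzero ⟨b, hb⟩⟩
  obtain ⟨G, hGopen, hBG, hGcl⟩ := normal_exists_closure_subset hB hUopen hBU
  haveI : NormalSpace ↥B := hB.isClosedEmbedding_subtypeVal.normalSpace
  have hW0 : ∀ y : ↥B, (y, (0 : I)) ∈ h ⁻¹' G := fun y => by
    simp only [Set.mem_preimage, hzero y]
    exact hBG y.2
  obtain ⟨f, hfcont, hfpos, hfhalf, hkey⟩ := exists_shrink_fun hcm (hGopen.preimage hcont) hW0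
  have hf1 : ∀ y, f y ≤ 1 := fun y => (hfhalf y).trans (by norm_num)
  have hmem : ∀ p : ↥B × I, (p.2 : ℝ) * f p.1 ∈ I := fun p =>
    ⟨mul_nonneg p.2.2.1 (hfpos p.1).le, mul_le_one₀ p.2.2.2 (hfpos p.1).le (hf1 p.1)⟩
  set r : ↥B × I → ↥B × I := fun p => (p.1, ⟨(p.2 : ℝ) * f p.1, hmem p⟩) with hr
  have hrcont : Continuous r := by
    refine continuous_fst.prodMk (Continuous.subtype_mk ?_ _)
    exact (continuous_subtype_val.comp continuous_snd).mul (hfcont.comp continuous_fst)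
  set s : ↥B × I → ↥B × I :=
    fun p => (p.1, Set.projIcc 0 1 zero_le_one ((p.2 : ℝ) / f p.1)) with hs
  have hscont : Continuous s := by
    refine continuous_fst.prodMk (continuous_projIcc.comp ?_)
    exact (continuous_subtype_val.comp continuous_snd).div (hfcont.comp continuous_fst)
      fun p => (hfpos p.1).ne'
  have hsr : Function.LeftInverse s r := by
    rintro ⟨x, t⟩
    have hdiv : ((t : ℝ) * f x) / f x = (t : ℝ) := mul_div_cancel_right₀ _ (hfpos x).ne'
    simp only [hr, hs]
    refine Prod.ext rfl ?_
    show Set.projIcc 0 1 zero_le_one (((t : ℝ) * f x) / f x) = t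
    rw [hdiv]
    exact Set.projIcc_val zero_le_one t
  have hremb : Topology.IsEmbedding r := Function.LeftInverse.isEmbedding hsr hscont hrcont
  set Sle : Set (↥B × I) := {p | (p.2 : ℝ) ≤ f p.1} with hSle
  set Slt : Set (↥B × I) := {p | (p.2 : ℝ) < f p.1} with hSlt
  have hrange : Set.range r = Sle := by
    apply Set.Subset.antisymm
    · rintro _ ⟨⟨x, t⟩, rfl⟩
      exact mul_le_of_le_one_left (hfpos x).le t.2.2
    · rintro ⟨x, u⟩ hu
      refine ⟨(x, ⟨(u : ℝ) / f x, div_nonneg u.2.1 (hfpos x).le, (div_le_one (hfpos x)).2 hu⟩), ?_⟩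
      simp only [hr]
      exact Prod.ext rfl (Subtype.ext (div_mul_cancel₀ _ (hfpos x).ne'))
  have himage_lt : r '' {p : ↥B × I | p.2 < 1} = Slt := by
    apply Set.Subset.antisymm
    · rintro _ ⟨⟨x, t⟩, ht, rfl⟩
      exact mul_lt_of_lt_one_left (hfpos x) (coe_lt_one.2 ht)
    · rintro ⟨x, u⟩ hu
      have hdlt : (u : ℝ) / f x < 1 := (div_lt_one (hfpos x)).2 hu
      refine ⟨(x, ⟨(u : ℝ) / f x, div_nonneg u.2.1 (hfpos x).le, hdlt.le⟩), ?_, ?_⟩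
      · exact coe_lt_one.1 hdlt
      · simp only [hr]
        exact Prod.ext rfl (Subtype.ext (div_mul_cancel₀ _ (hfpos x).ne'))
  have hz' : ∀ x : ↥B, (h ∘ r) (x, 0) = (x : M) := by
    intro x
    have h2 : ((0 : I) : ℝ) * f x = ((0 : I) : ℝ) := zero_mul (f x)
    have hr0 : r (x, 0) = (x, 0) := Prod.ext rfl (Subtype.ext h2)
    show h (r (x, 0)) = (x : M)
    rw [hr0]
    exact hzero x
  have hpre' : (h ∘ r) ⁻¹' B = {p : ↥B × I | p.2 = 0} := by
    ext ⟨x, t⟩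
    simp only [Set.mem_preimage, Function.comp_apply, Set.mem_setOf_eq]
    have hiff : h (r (x, t)) ∈ B ↔ (r (x, t)).2 = 0 := by
      rw [show (h (r (x, t)) ∈ B) ↔ (r (x, t) ∈ h ⁻¹' B) from Iff.rfl, hpre]
      exact Iff.rfl
    rw [hiff]
    simp only [hr]
    constructor
    · intro hq
      have hmul : (t : ℝ) * f x = 0 := congrArg Subtype.val hq
      rcases mul_eq_zero.1 hmul with hcase | hcase
      · exact Subtype.ext hcase
      · exact absurd hcase (hfpos x).ne'
    · rintro rfl
      exact Subtype.ext (zero_mul (f x))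
  have hSlt_open : IsOpen Slt :=
    isOpen_lt (continuous_subtype_val.comp continuous_snd) (hfcont.comp continuous_fst)
  obtain ⟨O, hOopen, hOpre⟩ := hemb.isInducing.isOpen_iff.1 hSlt_open
  have hSltsub : Slt ⊆ {p : ↥B × I | p.2 < 1} := by
    intro p hp
    have : (p.2 : ℝ) < 1 := lt_of_lt_of_le hp ((hfhalf p.1).trans (by norm_num))
    exact coe_lt_one.1 this
  have hSltU : h '' Slt ⊆ h '' {p : ↥B × I | p.2 < 1} := Set.image_mono hSltsub
  have hopen' : IsOpen ((h ∘ r) '' {p : ↥B × I | p.2 < 1}) := by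
    have himg : (h ∘ r) '' {p : ↥B × I | p.2 < 1} = h '' Slt := by
      rw [Set.image_comp, himage_lt]
    have h2 : h '' Slt = O ∩ h '' {p : ↥B × I | p.2 < 1} := by
      apply Set.Subset.antisymm
      · rintro _ ⟨p, hp, rfl⟩
        refine ⟨?_, hSltU ⟨p, hp, rfl⟩⟩
        have : p ∈ h ⁻¹' O := hOpre.symm ▸ hp
        exact this
      · rintro m ⟨hmO, p, hp, rfl⟩
        exact ⟨p, hOpre ▸ (Set.mem_preimage.2 hmO : p ∈ h ⁻¹' O), rfl⟩
    rw [himg, h2]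
    exact hOopen.inter hUopen
  have hSle_closed : IsClosed Sle :=
    isClosed_le (continuous_subtype_val.comp continuous_snd) (hfcont.comp continuous_fst)
  obtain ⟨F, hFclosed, hFpre⟩ := hemb.isInducing.isClosed_iff.1 hSle_closed
  have hrange' : Set.range (h ∘ r) = h '' Sle := by rw [Set.range_comp, hrange]
  have hsubG : h '' Sle ⊆ G := by
    rintro _ ⟨⟨x, u⟩, hu, rfl⟩
    exact hkey x u hu
  have himgF : h '' Sle = F ∩ Set.range h := by
    rw [← hFpre, Set.image_preimage_eq_inter_range]
  have hclosed_range : IsClosed (Set.range (h ∘ r)) := by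
    rw [hrange']
    apply isClosed_of_closure_subset
    intro m hm
    have hmF : m ∈ F :=
      closure_minimal (himgF ▸ Set.inter_subset_left : h '' Sle ⊆ F) hFclosed hm
    have hmU : m ∈ h '' {p : ↥B × I | p.2 < 1} := hGcl (closure_mono hsubG hm)
    have hmrange : m ∈ Set.range h := by
      obtain ⟨p, _, rfl⟩ := hmU
      exact ⟨p, rfl⟩
    rw [himgF]
    exact ⟨hmF, hmrange⟩
  have hclosedmap : IsClosedMap (h ∘ r) :=
    Topology.IsClosedEmbedding.isClosedMap ⟨hemb.comp hremb, hclosed_range⟩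
  exact ⟨h ∘ r, ⟨hemb.comp hremb, hz', hpre', hopen'⟩, hclosedmap⟩
end

section
/- Let X be a Hausdorff space and B a closed subset of X. If X − B is ccc and B is not ccc, then B is not collared in X. -/
open Set Topology unitInterval

variable {X : Type*} [TopologicalSpace X]

/-- A topological space is ccc if every family of pairwise disjoint nonempty open subsets
is at most countable. -/
def CCCSpace (Y : Type*) [TopologicalSpace Y] : Prop :=
  ∀ 𝒮 : Set (Set Y), (∀ U ∈ 𝒮, IsOpen U ∧ U.Nonempty) → 𝒮.PairwiseDisjoint id →
    𝒮.Countable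

/-- If `B` is a closed subset of a Hausdorff space `X` such that `X − B` is ccc and `B` is
not ccc, then `B` is not collared in `X`. -/
theorem not_collared_of_ccc_compl {Y : Type*} [TopologicalSpace Y] [T2Space Y]
    (B : Set Y) (hB : IsClosed B) (hccc : CCCSpace ↥(Bᶜ)) (hnccc : ¬ CCCSpace ↥B) :
    ¬ IsCollared B := by
  rintro ⟨h, hemb, h0, hpre, hopen⟩
  apply hnccc
  intro 𝒮 hSop hSd
  set t0 : I := ⟨1/2, by norm_num⟩ with ht0def
  have ht0 : t0 ≠ 0 := by
    intro hc
    have := congrArg Subtype.val hc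
    norm_num [ht0def] at this
  have ht1 : t0 < 1 := by
    rw [← Subtype.coe_lt_coe]
    norm_num [ht0def]
  -- the open strip over U
  set S : Set ↥B → Set (↥B × I) := fun U => U ×ˢ {s : I | s ≠ 0 ∧ s < 1} with hSdef
  have hSopen : ∀ U : Set ↥B, IsOpen U → IsOpen (S U) := fun U hU =>
    hU.prod ((isOpen_compl_singleton).inter isOpen_Iio)
  -- image of the strip is open in Y
  have himg : ∀ U : Set ↥B, IsOpen U → IsOpen (h '' S U) := by
    intro U hU
    obtain ⟨W, hW, hWpre⟩ := hemb.isInducing.isOpen_iff.mp (hSopen U hU)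
    have heq : h '' S U = W ∩ h '' {p : ↥B × I | p.2 < 1} := by
      ext y
      constructor
      · rintro ⟨p, hp, rfl⟩
        have hpW : p ∈ h ⁻¹' W := by rw [hWpre]; exact hp
        exact ⟨hpW, p, hp.2.2, rfl⟩
      · rintro ⟨hyW, p, hp, rfl⟩
        have hpW : p ∈ h ⁻¹' W := hyW
        rw [hWpre] at hpW
        exact ⟨p, hpW, rfl⟩
    rw [heq]
    exact hW.inter hopen
  -- the image of the strip lies in Bᶜ
  have hsub : ∀ U : Set ↥B, h '' S U ⊆ Bᶜ := by
    rintro U y ⟨p, hp, rfl⟩ hyB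
    have hm : p ∈ h ⁻¹' B := hyB
    rw [hpre] at hm
    exact hp.2.1 hm
  set F : Set ↥B → Set ↥(Bᶜ) := fun U => Subtype.val ⁻¹' (h '' S U) with hFdef
  have hFopen : ∀ U ∈ 𝒮, IsOpen (F U) ∧ (F U).Nonempty := by
    intro U hU
    refine ⟨(himg U (hSop U hU).1).preimage continuous_subtype_val, ?_⟩
    obtain ⟨x, hx⟩ := (hSop U hU).2
    have hmem : h (x, t0) ∈ h '' S U := ⟨(x, t0), ⟨hx, ht0, ht1⟩, rfl⟩
    exact ⟨⟨h (x, t0), hsub U hmem⟩, hmem⟩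
  have hFdisj : ∀ U V : Set ↥B, Disjoint U V → Disjoint (F U) (F V) := by
    intro U V hUV
    rw [Set.disjoint_left]
    rintro z ⟨p, hp, hpz⟩ ⟨q, hq, hqz⟩
    have : p = q := hemb.injective (hpz.trans hqz.symm)
    exact Set.disjoint_left.mp hUV hp.1 (this ▸ hq.1)
  have hFinj : Set.InjOn F 𝒮 := by
    intro U hU V hV hFeq
    by_contra hne
    obtain ⟨z, hz⟩ := (hFopen U hU).2
    have hzV : z ∈ F V := hFeq ▸ hz
    exact Set.disjoint_left.mp (hFdisj U V (hSd hU hV hne)) hz hzV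
  have hcnt : (F '' 𝒮).Countable := by
    apply hccc
    · rintro _ ⟨U, hU, rfl⟩
      exact hFopen U hU
    · rintro _ ⟨U, hU, rfl⟩ _ ⟨V, hV, rfl⟩ hne
      have hUV : U ≠ V := fun e => hne (by rw [e])
      exact hFdisj U V (hSd hU hV hUV)
  exact Set.countable_of_injective_of_countable_image hFinj hcnt
end

section
/- Let X be a ccc Hausdorff space and B a closed subset of X which is locally connected in the subspace topology. If B has uncountably many connected components, then B is not collared in X. -/
open Set Topology unitInterval

variable {X : Type*} [TopologicalSpace X]

/-- If `X` is a ccc Hausdorff space and `B ⊆ X` is closed, locally connected in the subspace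
topology, and has uncountably many connected components, then `B` is not collared in `X`. -/
theorem not_collared_of_uncountably_many_components {Y : Type*} [TopologicalSpace Y]
    [T2Space Y] (hccc : CCCSpace Y) (B : Set Y) (hB : IsClosed B)
    [LocallyConnectedSpace ↥B]
    (huncount : ¬ {C : Set ↥B | ∃ x, C = connectedComponent x}.Countable) :
    ¬ IsCollared B := by
  rintro ⟨h, hemb, hzero, hpre, hopen⟩
  set comps := {C : Set ↥B | ∃ x, C = connectedComponent x} with hcomps
  set Φ : Set ↥B → Set Y := fun C => h '' {p : ↥B × I | p.1 ∈ C ∧ p.2 < 1} with hΦ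
  have h01 : (0 : I) < 1 := by
    rw [← Subtype.coe_lt_coe]; norm_num
  have hlt1 : IsOpen {t : I | t < 1} := by
    have : {t : I | t < 1} = (fun t : I => (t : ℝ)) ⁻¹' (Iio 1) := by
      ext t; exact Iff.rfl
    rw [this]
    exact isOpen_Iio.preimage continuous_subtype_val
  -- if the images intersect, the components coincide
  have hkey : ∀ C ∈ comps, ∀ C' ∈ comps, (Φ C ∩ Φ C').Nonempty → C = C' := by
    rintro C ⟨x, rfl⟩ C' ⟨x', rfl⟩ ⟨y, hy1, hy2⟩
    obtain ⟨p, hp, hpe⟩ := hy1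
    obtain ⟨p', hp', hpe'⟩ := hy2
    have hpp : p' = p := hemb.injective (hpe'.trans hpe.symm)
    rw [hpp] at hp'
    exact (connectedComponent_eq hp.1).trans (connectedComponent_eq hp'.1).symm
  have hcount : (Φ '' comps).Countable := by
    apply hccc
    · rintro U ⟨C, hC, rfl⟩
      obtain ⟨x, rfl⟩ := hC
      constructor
      · -- openness of the image
        have hS : IsOpen {p : ↥B × I | p.1 ∈ connectedComponent x ∧ p.2 < 1} :=
          (isOpen_connectedComponent.preimage continuous_fst).inter
            (hlt1.preimage continuous_snd)
        obtain ⟨V, hV, hVS⟩ := hemb.toIsInducing.isOpen_iff.mp hS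
        have himg : Φ (connectedComponent x) = V ∩ (h '' {p : ↥B × I | p.2 < 1}) := by
          ext y
          constructor
          · rintro ⟨p, hp, rfl⟩
            have : p ∈ h ⁻¹' V := by rw [hVS]; exact hp
            exact ⟨this, ⟨p, hp.2, rfl⟩⟩
          · rintro ⟨hyV, p, hp, rfl⟩
            have : p ∈ h ⁻¹' V := hyV
            rw [hVS] at this
            exact ⟨p, this, rfl⟩
        rw [himg]
        exact hV.inter hopen
      · exact ⟨h (x, 0), ⟨(x, 0), ⟨mem_connectedComponent, h01⟩, rfl⟩⟩
    · rintro U ⟨C, hC, rfl⟩ V ⟨C', hC', rfl⟩ hne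
      rw [Function.onFun, Set.disjoint_iff_inter_eq_empty]
      by_contra hcontra
      exact hne (by rw [hkey C hC C' hC' (nonempty_iff_ne_empty.mpr hcontra)])
  refine huncount (Set.countable_of_injective_of_countable_image ?_ hcount)
  intro C hC C' hC' hΦeq
  apply hkey C hC C' hC'
  obtain ⟨x, rfl⟩ := hC
  refine ⟨h (x, 0), ⟨(x, 0), ⟨mem_connectedComponent, h01⟩, rfl⟩, ?_⟩
  rw [← hΦeq]
  exact ⟨(x, 0), ⟨mem_connectedComponent, h01⟩, rfl⟩
end

section
/- Let M be a connected n-manifold with boundary ∂M such that the interior M − ∂M is metrisable and ∂M has uncountably many connected components. Then ∂M is not collared in M. -/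
open Set Topology unitInterval

variable {X : Type*} [TopologicalSpace X]

/- ### Auxiliary lemmas -/

/-- A connected, locally separable metrizable space is separable. -/
theorem aux_separableSpace_of_locally_isSeparable {Z : Type*} [TopologicalSpace Z]
    [TopologicalSpace.MetrizableSpace Z] [PreconnectedSpace Z]
    (hloc : ∀ x : Z, ∃ s ∈ 𝓝 x, TopologicalSpace.IsSeparable s) :
    TopologicalSpace.SeparableSpace Z := by
  rcases isEmpty_or_nonempty Z with h | h
  · infer_instance
  letI := TopologicalSpace.metrizableSpaceMetric Z
  have choice : ∀ x : Z, ∃ o : Set Z, IsOpen o ∧ x ∈ o ∧ TopologicalSpace.IsSeparable o := by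
    intro x; obtain ⟨s, hs, hsep⟩ := hloc x
    exact ⟨interior s, isOpen_interior, mem_interior_iff_mem_nhds.2 hs,
      hsep.mono interior_subset⟩
  choose o ho hxo hosep using choice
  obtain ⟨t, hto, htu, htlf, hts⟩ := precise_refinement o ho
    (eq_univ_of_forall fun x => mem_iUnion.2 ⟨x, hxo x⟩)
  have htsep : ∀ b, TopologicalSpace.IsSeparable (t b) := fun b => (hosep b).mono (hts b)
  have htlin : ∀ b, IsLindelof (t b) := by
    intro b
    have : SecondCountableTopology ↥(t b) := (htsep b).secondCountableTopology
    exact isLindelof_iff_LindelofSpace.2 inferInstance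
  have hN : ∀ b : Z, {c : Z | (t b ∩ t c).Nonempty}.Countable := by
    intro b
    obtain ⟨u, huc, _, hucov⟩ := (htlin b).elim_nhds_subcover (fun x => (htlf x).choose)
      (fun x _ => (htlf x).choose_spec.1)
    have : {c : Z | (t b ∩ t c).Nonempty} ⊆
        ⋃ x ∈ u, {i : Z | (t i ∩ (htlf x).choose).Nonempty} := by
      rintro c ⟨y, hyb, hyc⟩
      obtain ⟨x, hxu, hynb⟩ := mem_iUnion₂.1 (hucov hyb)
      exact mem_iUnion₂.2 ⟨x, hxu, ⟨y, hyc, hynb⟩⟩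
    exact Set.Countable.mono this
      (huc.biUnion fun x _ => ((htlf x).choose_spec.2).countable)
  obtain ⟨z₀⟩ := h
  obtain ⟨b₀, hb₀⟩ := mem_iUnion.1 (htu ▸ mem_univ z₀)
  set r : Z → Z → Prop := fun a b => (t a ∩ t b).Nonempty with hr
  set G : Set Z := {b | Relation.ReflTransGen r b₀ b} with hG
  have hGc : G.Countable := by
    let S : ℕ → Set Z := fun n => Nat.rec {b₀}
      (fun _ Sn => ⋃ a ∈ Sn, {c | (t a ∩ t c).Nonempty}) n
    have hSc : ∀ n, (S n).Countable := by
      intro n; induction n with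
      | zero => exact countable_singleton b₀
      | succ n ih => exact ih.biUnion fun a _ => hN a
    have hGsub : G ⊆ ⋃ n, S n := by
      intro b hb
      induction hb with
      | refl => exact mem_iUnion.2 ⟨0, rfl⟩
      | @tail b c _ hbc ih =>
        obtain ⟨n, hn⟩ := mem_iUnion.1 ih
        exact mem_iUnion.2 ⟨n + 1, mem_biUnion hn hbc⟩
    exact (countable_iUnion hSc).mono hGsub
  set Ustar : Set Z := ⋃ b ∈ G, t b with hU
  have hUopen : IsOpen Ustar := isOpen_biUnion fun b _ => hto b
  have hUclosed : IsClosed Ustar := by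
    rw [← closure_subset_iff_isClosed]
    intro x hx
    obtain ⟨nb, hnb, hfin⟩ := htlf x
    have hx' : x ∈ closure (Ustar ∩ interior nb) := by
      rw [mem_closure_iff] at hx ⊢
      intro oo hoo hxoo
      obtain ⟨y, hy⟩ := hx (oo ∩ interior nb) (hoo.inter isOpen_interior)
        ⟨hxoo, mem_interior_iff_mem_nhds.2 hnb⟩
      exact ⟨y, hy.1.1, hy.2, hy.1.2⟩
    have hsub : Ustar ∩ interior nb ⊆ ⋃ b ∈ G ∩ {i | (t i ∩ nb).Nonempty}, t b := by
      rintro y ⟨hyU, hynb⟩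
      obtain ⟨b, hbG, hyb⟩ := mem_iUnion₂.1 hyU
      exact mem_iUnion₂.2 ⟨b, ⟨hbG, ⟨y, hyb, interior_subset hynb⟩⟩, hyb⟩
    have hfin' : (G ∩ {i | (t i ∩ nb).Nonempty}).Finite := hfin.subset inter_subset_right
    have hx'' : x ∈ ⋃ b ∈ G ∩ {i | (t i ∩ nb).Nonempty}, closure (t b) := by
      have := closure_mono hsub hx'
      rwa [hfin'.closure_biUnion] at this
    obtain ⟨b, hb, hxb⟩ := mem_iUnion₂.1 hx''
    obtain ⟨b₁, hb₁⟩ := mem_iUnion.1 (htu ▸ mem_univ x)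
    have : (t b₁ ∩ t b).Nonempty := mem_closure_iff.1 hxb (t b₁) (hto b₁) hb₁
    have hb₁G : b₁ ∈ G := Relation.ReflTransGen.tail hb.1 (this.mono (by rw [inter_comm]))
    exact mem_iUnion₂.2 ⟨b₁, hb₁G, hb₁⟩
  have hUuniv : Ustar = univ :=
    (IsClopen.eq_univ ⟨hUclosed, hUopen⟩)
      ⟨z₀, mem_iUnion₂.2 ⟨b₀, Relation.ReflTransGen.refl, hb₀⟩⟩
  have : TopologicalSpace.IsSeparable (univ : Set Z) := by
    rw [← hUuniv, hU, biUnion_eq_iUnion]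
    have := hGc.to_subtype
    exact TopologicalSpace.IsSeparable.iUnion fun b => htsep b
  exact TopologicalSpace.isSeparable_univ_iff.1 this

lemma aux_open_image_val {M : Type*} [TopologicalSpace M] {U : Set M} {A : Set ↥U}
    (hA : IsOpen A) (hsub : A ⊆ Subtype.val ⁻¹' (interior U)) : IsOpen (Subtype.val '' A) := by
  obtain ⟨W, hW, rfl⟩ := hA
  have h1 : Subtype.val '' (Subtype.val ⁻¹' W : Set ↥U) = U ∩ W := Subtype.image_preimage_coe _ _
  have h2 : Subtype.val '' (Subtype.val ⁻¹' W : Set ↥U) = interior U ∩ W := by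
    apply subset_antisymm
    · intro z hz
      refine ⟨?_, (h1 ▸ hz).2⟩
      obtain ⟨y, hy, rfl⟩ := hz
      exact hsub hy
    · intro z hz
      rw [h1]; exact ⟨interior_subset hz.1, hz.2⟩
  rw [h2]
  exact isOpen_interior.inter hW

/-- An open set all of whose points have `ℝⁿ`-charts is locally connected. -/
lemma aux_locallyConnected_of_charts {M : Type*} [TopologicalSpace M] {n : ℕ} {S : Set M}
    (hS : IsOpen S) (hch : ∀ x ∈ S, HasInteriorChart n x) : LocallyConnectedSpace ↥S := by
  rw [locallyConnectedSpace_iff_connected_subsets]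
  intro x U hU
  obtain ⟨W, hWnh, hWsub⟩ := (nhds_subtype_eq_comap (p := (· ∈ S))).symm ▸ hU
  obtain ⟨Uc, hUc, ⟨φ⟩⟩ := hch x.1 x.2
  set O : Set M := interior W ∩ interior Uc ∩ S with hO
  have hOopen : IsOpen O := ((isOpen_interior.inter isOpen_interior).inter hS)
  have hxO : x.1 ∈ O := ⟨⟨mem_interior_iff_mem_nhds.2 hWnh, mem_interior_iff_mem_nhds.2 hUc⟩, x.2⟩
  set A : Set ↥Uc := Subtype.val ⁻¹' O with hA
  have hAopen : IsOpen A := hOopen.preimage continuous_subtype_val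
  have hxUc : x.1 ∈ Uc := mem_of_mem_nhds hUc
  have hφA : IsOpen (φ '' A) := φ.isOpenMap A hAopen
  have hφx : φ ⟨x.1, hxUc⟩ ∈ φ '' A := ⟨⟨x.1, hxUc⟩, hxO, rfl⟩
  obtain ⟨Q, hQsub, hQopen, hQmem, hQconn⟩ :=
    locallyConnectedSpace_iff_subsets_isOpen_isConnected.1 inferInstance
      (φ ⟨x.1, hxUc⟩) (φ '' A) (hφA.mem_nhds hφx)
  set P : Set M := Subtype.val '' (φ.symm '' Q) with hP
  have hQA : φ.symm '' Q ⊆ A := by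
    intro y hy
    obtain ⟨q, hq, rfl⟩ := hy
    obtain ⟨a, ha, haq⟩ := hQsub hq
    rwa [← haq, Homeomorph.symm_apply_apply]
  have hPO : P ⊆ O := by
    rintro z ⟨y, hy, rfl⟩
    exact hQA hy
  have hPopen : IsOpen P := by
    apply aux_open_image_val (φ.symm.isOpenMap Q hQopen)
    intro y hy
    exact (hQA hy).1.2
  have hxP : x.1 ∈ P :=
    ⟨⟨x.1, hxUc⟩, ⟨_, hQmem, Homeomorph.symm_apply_apply φ _⟩, rfl⟩
  have hPconn : IsPreconnected P :=
    ((hQconn.isPreconnected.image _ φ.symm.continuous.continuousOn).image _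
      continuous_subtype_val.continuousOn)
  refine ⟨Subtype.val ⁻¹' P, ?_, ?_, ?_⟩
  · exact continuous_subtype_val.continuousAt.preimage_mem_nhds (hPopen.mem_nhds hxP)
  · have himg : Subtype.val '' (Subtype.val ⁻¹' P : Set ↥S) = P := by
      rw [Subtype.image_preimage_coe]
      exact inter_eq_self_of_subset_right (hPO.trans (fun z hz => hz.2))
    exact (Topology.IsInducing.subtypeVal.isPreconnected_image).1 (by rw [himg]; exact hPconn)
  · intro y hy
    exact hWsub (show (y : ↥S).1 ∈ W from interior_subset (hPO hy).1.1)

/-- Main auxiliary result, for a general closed subset `B` in place of the boundary. -/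
theorem aux_not_collared {n : ℕ} {M : Type*} [TopologicalSpace M] [ConnectedSpace M]
    (B : Set M)
    (hchart : ∀ x ∈ Bᶜ, HasInteriorChart n x) (hBc_open : IsOpen (Bᶜ : Set M))
    (hint : TopologicalSpace.MetrizableSpace ↥(Bᶜ : Set M))
    (huncount : ¬ {C : Set ↥B | ∃ x, C = connectedComponent x}.Countable)
    (h : ↥B × I → M) (hemb : Topology.IsEmbedding h) (h0 : ∀ x : ↥B, h (x, 0) = (x : M))
    (hpre : h ⁻¹' B = {p : ↥B × I | p.2 = 0})
    (hopen : IsOpen (h '' {p : ↥B × I | p.2 < 1})) : False := by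
  have hinj := hemb.injective
  -- the open middle interval of I
  set Io : Set I := {s : I | 0 < (s : ℝ) ∧ (s : ℝ) < 1} with hIo
  have hIopre : IsPreconnected Io := by
    have himg : (Subtype.val '' Io : Set ℝ) = Set.Ioo 0 1 := by
      ext q; constructor
      · rintro ⟨s, hs, rfl⟩; exact hs
      · rintro ⟨h0q, hq1⟩; exact ⟨⟨q, h0q.le, hq1.le⟩, ⟨h0q, hq1⟩, rfl⟩
    have hiff := Topology.IsInducing.subtypeVal.isPreconnected_image (s := Io)
    rw [himg] at hiff
    exact hiff.1 isPreconnected_Ioo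
  set tHalf : I := ⟨1/2, by norm_num⟩ with htHalf
  have hmemHalf : tHalf ∈ Io := by constructor <;> norm_num [htHalf]
  -- points of the collar with positive time avoid B
  have havoid : ∀ p : ↥B × I, p.2 ∈ Io → h p ∉ B := by
    intro p hp hB'
    have hmem : p ∈ h ⁻¹' B := hB'
    rw [hpre] at hmem
    have : (0 : ℝ) < ((0 : I) : ℝ) := by
      have := hp.1; rwa [hmem] at this
    norm_num at this
  -- images of open subsets of {t < 1} are open
  have himgopen : ∀ O : Set (↥B × I), IsOpen O → O ⊆ {p : ↥B × I | p.2 < 1} → IsOpen (h '' O) := by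
    intro O hO hOsub
    obtain ⟨W, hW, hOW⟩ := hemb.isInducing.isOpen_iff.1 hO
    have : h '' O = W ∩ h '' {p : ↥B × I | p.2 < 1} := by
      ext z; constructor
      · rintro ⟨p, hpO, rfl⟩
        exact ⟨by rw [← hOW] at hpO; exact hpO, ⟨p, hOsub hpO, rfl⟩⟩
      · rintro ⟨hzW, p, hp1, rfl⟩
        exact ⟨p, by rw [← hOW]; exact hzW, rfl⟩
    rw [this]
    exact hW.inter hopen
  -- `V = h (B × (0,1))` is open and inside the interior
  set V : Set M := h '' {p : ↥B × I | p.2 ∈ Io} with hV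
  have hVB : V ⊆ Bᶜ := by
    rintro z ⟨p, hp, rfl⟩
    exact havoid p hp
  have hVopen : IsOpen V := by
    have hVeq : V = (h '' {p : ↥B × I | p.2 < 1}) ∩ Bᶜ := by
      ext z; constructor
      · rintro ⟨p, hp, rfl⟩
        exact ⟨⟨p, (show p.2 < 1 from Subtype.coe_lt_coe.1 hp.2), rfl⟩, havoid p hp⟩
      · rintro ⟨⟨p, hp1, rfl⟩, hzB⟩
        refine ⟨p, ⟨?_, (show ((p.2 : ℝ) < ((1 : I) : ℝ)) from Subtype.coe_lt_coe.2 hp1)⟩, rfl⟩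
        rcases eq_or_lt_of_le (p.2.2.1 : (0 : ℝ) ≤ (p.2 : ℝ)) with heq | hlt
        · exfalso
          apply hzB
          have hp0 : p.2 = 0 := Subtype.ext heq.symm
          have hpp : p = (p.1, 0) := Prod.ext rfl hp0
          rw [hpp, h0 p.1]
          exact p.1.2
        · exact hlt
    rw [hVeq]
    exact hopen.inter hBc_open
  -- `B × (0,1)` is homeomorphic to `V`, hence locally connected
  set e : ↥B × ↥Io → M := fun q => h (q.1, q.2.1) with he
  have heemb : Topology.IsEmbedding e :=
    hemb.comp (Topology.IsEmbedding.id.prodMap Topology.IsEmbedding.subtypeVal)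
  have hrange : Set.range e = V := by
    ext z; constructor
    · rintro ⟨⟨b, s⟩, rfl⟩; exact ⟨(b, s.1), s.2, rfl⟩
    · rintro ⟨p, hp, rfl⟩; exact ⟨(p.1, ⟨p.2, hp⟩), rfl⟩
  have hVlc : LocallyConnectedSpace ↥V :=
    aux_locallyConnected_of_charts hVopen (fun x hx => hchart x (hVB hx))
  haveI hYlc : LocallyConnectedSpace (↥B × ↥Io) := by
    haveI : LocallyConnectedSpace ↥(Set.range e) := by rw [hrange]; exact hVlc
    exact (heemb.toHomeomorph).locallyConnectedSpace
  haveI hIoPreSp : PreconnectedSpace ↥Io := Subtype.preconnectedSpace hIopre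
  -- connected components of B are open
  have hcomp_open : ∀ c : ↥B, IsOpen (connectedComponent c) := by
    intro c
    set y₀ : ↥B × ↥Io := (c, ⟨tHalf, hmemHalf⟩) with hy₀
    have hK : IsOpen (connectedComponent y₀) := isOpen_connectedComponent
    have hsub1 : connectedComponent c ×ˢ (univ : Set ↥Io) ⊆ connectedComponent y₀ :=
      (isPreconnected_connectedComponent.prod isPreconnected_univ).subset_connectedComponent
        ⟨mem_connectedComponent, mem_univ _⟩
    have heq : connectedComponent c = Prod.fst '' connectedComponent y₀ := by
      apply subset_antisymm
      · intro z hz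
        exact ⟨(z, ⟨tHalf, hmemHalf⟩), hsub1 ⟨hz, mem_univ _⟩, rfl⟩
      · exact (isPreconnected_connectedComponent.image _
          continuous_fst.continuousOn).subset_connectedComponent
          ⟨y₀, mem_connectedComponent, rfl⟩
    rw [heq]
    exact isOpenMap_fst _ hK
  -- slices
  set Slice : ↥B → Set M := fun c => h '' ((connectedComponent c) ×ˢ Io) with hSl
  set SliceF : ↥B → Set M := fun c => h '' ((connectedComponent c) ×ˢ {s : I | s < 1}) with hSlF
  have hSliceSub : ∀ c, Slice c ⊆ SliceF c := by
    rintro c z ⟨p, ⟨hp1, hp2⟩, rfl⟩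
    exact ⟨p, ⟨hp1, (show p.2 < 1 from Subtype.coe_lt_coe.1 hp2.2)⟩, rfl⟩
  have hSliceF_open : ∀ c, IsOpen (SliceF c) := by
    intro c
    apply himgopen
    · exact (hcomp_open c).preimage continuous_fst |>.inter
        ((isOpen_Iio.preimage continuous_subtype_val).preimage continuous_snd)
    · rintro p ⟨-, hp2⟩; exact hp2
  have hSliceB : ∀ c, Slice c ⊆ Bᶜ := by
    rintro c z ⟨p, hp, rfl⟩
    exact havoid p hp.2
  have hSliceEq : ∀ c, SliceF c ∩ Bᶜ = Slice c := by
    intro c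
    ext z; constructor
    · rintro ⟨⟨p, ⟨hp1, hp2⟩, rfl⟩, hzB⟩
      refine ⟨p, ⟨hp1, ?_, hp2⟩, rfl⟩
      rcases eq_or_lt_of_le (p.2.2.1 : (0 : ℝ) ≤ (p.2 : ℝ)) with heq | hlt
      · exfalso
        apply hzB
        have hp0 : p.2 = 0 := Subtype.ext heq.symm
        have hpp : p = (p.1, 0) := Prod.ext rfl hp0
        rw [hpp, h0 p.1]
        exact p.1.2
      · exact hlt
    · intro hz
      exact ⟨hSliceSub c hz, hSliceB c hz⟩
  have hSliceConn : ∀ c, IsPreconnected (Slice c) := fun c =>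
    (isPreconnected_connectedComponent.prod hIopre).image h hemb.continuous.continuousOn
  have hSliceNe : ∀ c, (Slice c).Nonempty := fun c =>
    ⟨h (c, tHalf), (c, tHalf), ⟨mem_connectedComponent, hmemHalf⟩, rfl⟩
  have hmemF : ∀ b : ↥B, (b : M) ∈ SliceF b := fun b =>
    ⟨(b, 0), ⟨mem_connectedComponent,
      Subtype.coe_lt_coe.1 (by norm_num : ((0 : I) : ℝ) < ((1 : I) : ℝ))⟩, h0 b⟩
  have hSliceDisj : ∀ c c' : ↥B, (SliceF c ∩ SliceF c').Nonempty →
      connectedComponent c = connectedComponent c' := by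
    rintro c c' ⟨z, ⟨p, hp, hze⟩, ⟨q, hq, hzq⟩⟩
    have hpq : p = q := hinj (hze.trans hzq.symm)
    have h1 : connectedComponent c = connectedComponent p.1 := connectedComponent_eq hp.1
    have h2 : connectedComponent c' = connectedComponent q.1 := connectedComponent_eq hq.1
    rw [h1, h2, hpq]
  have hSliceCongr : ∀ c c' : ↥B, connectedComponent c = connectedComponent c' →
      Slice c = Slice c' := by
    intro c c' hcc
    simp only [hSl, hcc]
  -- `Bᶜ` is preconnected
  have hIntPre : IsPreconnected (Bᶜ : Set M) := by
    intro u v hu hv huv hau hbv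
    obtain ⟨a, haB, hau⟩ := hau
    obtain ⟨b, hbB, hbv⟩ := hbv
    by_contra hne
    rw [not_nonempty_iff_eq_empty] at hne
    have hdicho : ∀ c : ↥B, Slice c ⊆ u ∨ Slice c ⊆ v := by
      intro c
      by_contra hcon
      push_neg at hcon
      obtain ⟨z1, hz1, hz1u⟩ := not_subset.1 hcon.1
      obtain ⟨z2, hz2, hz2v⟩ := not_subset.1 hcon.2
      have h1 : (Slice c ∩ v).Nonempty := ⟨z1, hz1, (huv (hSliceB c hz1)).resolve_left hz1u⟩
      have h2 : (Slice c ∩ u).Nonempty := ⟨z2, hz2, (huv (hSliceB c hz2)).resolve_right hz2v⟩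
      obtain ⟨w, hwS, hwuv⟩ := hSliceConn c u v hu hv ((hSliceB c).trans huv) h2 h1
      have : w ∈ (Bᶜ ∩ (u ∩ v) : Set M) := ⟨hSliceB c hwS, hwuv⟩
      rw [hne] at this
      exact this
    set u' : Set M := (Bᶜ ∩ u) ∪ ⋃ (c : ↥B) (_ : Slice c ⊆ u), SliceF c with hu'
    set v' : Set M := (Bᶜ ∩ v) ∪ ⋃ (c : ↥B) (_ : Slice c ⊆ v), SliceF c with hv'
    have hu'o : IsOpen u' :=
      (hBc_open.inter hu).union (isOpen_iUnion fun c => isOpen_iUnion fun _ => hSliceF_open c)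
    have hv'o : IsOpen v' :=
      (hBc_open.inter hv).union (isOpen_iUnion fun c => isOpen_iUnion fun _ => hSliceF_open c)
    -- a point in both u' and v' gives a contradiction
    have hdisj : ∀ x : M, x ∈ u' → x ∈ v' → False := by
      intro x hxu hxv
      have hkey : ∀ y : M, y ∈ Bᶜ → y ∈ u → y ∈ v → False := by
        intro y h1 h2 h3
        have : y ∈ (Bᶜ ∩ (u ∩ v) : Set M) := ⟨h1, h2, h3⟩
        rw [hne] at this; exact this
      rcases hxu with hxu | hxu <;> rcases hxv with hxv | hxv
      · exact hkey x hxu.1 hxu.2 hxv.2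
      · obtain ⟨c, hcv, hxc⟩ := mem_iUnion₂.1 hxv
        have : x ∈ Slice c := by rw [← hSliceEq c]; exact ⟨hxc, hxu.1⟩
        exact hkey x hxu.1 hxu.2 (hcv this)
      · obtain ⟨c, hcu, hxc⟩ := mem_iUnion₂.1 hxu
        have : x ∈ Slice c := by rw [← hSliceEq c]; exact ⟨hxc, hxv.1⟩
        exact hkey x hxv.1 (hcu this) hxv.2
      · obtain ⟨c, hcu, hxc⟩ := mem_iUnion₂.1 hxu
        obtain ⟨c', hcv, hxc'⟩ := mem_iUnion₂.1 hxv
        have hcc : connectedComponent c = connectedComponent c' :=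
          hSliceDisj c c' ⟨x, hxc, hxc'⟩
        have hSS : Slice c = Slice c' := hSliceCongr c c' hcc
        obtain ⟨w, hw⟩ := hSliceNe c
        exact hkey w (hSliceB c hw) (hcu hw) (hcv (by rwa [← hSS]))
    have hcover : ∀ x : M, x ∈ u' ∪ v' := by
      intro x
      by_cases hxB : x ∈ B
      · rcases hdicho ⟨x, hxB⟩ with hcu | hcv
        · exact Or.inl (Or.inr (mem_iUnion₂.2 ⟨⟨x, hxB⟩, hcu, hmemF _⟩))
        · exact Or.inr (Or.inr (mem_iUnion₂.2 ⟨⟨x, hxB⟩, hcv, hmemF _⟩))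
      · rcases huv hxB with hxu | hxv
        · exact Or.inl (Or.inl ⟨hxB, hxu⟩)
        · exact Or.inr (Or.inl ⟨hxB, hxv⟩)
    have hcompl : u'ᶜ = v' := by
      ext x; constructor
      · intro hx
        rcases hcover x with hx' | hx'
        · exact absurd hx' hx
        · exact hx'
      · intro hx hx'
        exact hdisj x hx' hx
    have hclosed : IsClosed u' := by
      rw [← isOpen_compl_iff, hcompl]; exact hv'o
    have huniv : u' = univ :=
      IsClopen.eq_univ ⟨hclosed, hu'o⟩ ⟨a, Or.inl ⟨haB, hau⟩⟩
    have hbv' : b ∈ v' := Or.inl ⟨hbB, hbv⟩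
    exact hdisj b (huniv ▸ mem_univ b) hbv'
  -- the interior is a connected, locally separable metrizable space, hence separable
  haveI hZpre : PreconnectedSpace ↥(Bᶜ : Set M) := Subtype.preconnectedSpace hIntPre
  haveI : TopologicalSpace.MetrizableSpace ↥(Bᶜ : Set M) := hint
  have hloc : ∀ x : ↥(Bᶜ : Set M), ∃ s ∈ 𝓝 x, TopologicalSpace.IsSeparable s := by
    intro x
    obtain ⟨U, hU, ⟨φ⟩⟩ := hchart x.1 x.2
    refine ⟨Subtype.val ⁻¹' U, continuous_subtype_val.continuousAt.preimage_mem_nhds hU, ?_⟩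
    have hg : Topology.IsEmbedding
        (fun y : ↥(Subtype.val ⁻¹' U : Set ↥(Bᶜ : Set M)) => (⟨y.1.1, y.2⟩ : ↥U)) := by
      apply Topology.IsEmbedding.of_comp
        (Continuous.subtype_mk (continuous_subtype_val.comp continuous_subtype_val) _)
        continuous_subtype_val
      have hvv : Topology.IsEmbedding ((Subtype.val : ↥(Bᶜ : Set M) → M) ∘
          (Subtype.val : ↥(Subtype.val ⁻¹' U : Set ↥(Bᶜ : Set M)) → ↥(Bᶜ : Set M))) :=
        Topology.IsEmbedding.subtypeVal.comp Topology.IsEmbedding.subtypeVal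
      exact hvv
    haveI : SecondCountableTopology ↥(Subtype.val ⁻¹' U : Set ↥(Bᶜ : Set M)) :=
      (φ.isEmbedding.comp hg).secondCountableTopology
    exact TopologicalSpace.IsSeparable.of_subtype _
  haveI hZsep : TopologicalSpace.SeparableSpace ↥(Bᶜ : Set M) :=
    aux_separableSpace_of_locally_isSeparable hloc
  -- conclude: the set of components is countable, contradiction
  apply huncount
  rw [← Set.countable_coe_iff]
  have hx : ∀ C : ↥{C : Set ↥B | ∃ x, C = connectedComponent x}, ∃ x : ↥B,
      C.1 = connectedComponent x := fun C => C.2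
  choose xc hxc using hx
  set s : ↥{C : Set ↥B | ∃ x, C = connectedComponent x} → Set ↥(Bᶜ : Set M) :=
    fun C => Subtype.val ⁻¹' Slice (xc C) with hs
  apply Pairwise.countable_of_isOpen_disjoint (s := s)
  · intro C C' hCC'
    rw [Function.onFun, Set.disjoint_left]
    intro z hz hz'
    have hcc : connectedComponent (xc C) = connectedComponent (xc C') :=
      hSliceDisj _ _ ⟨z.1, hSliceSub _ hz, hSliceSub _ hz'⟩
    exact hCC' (Subtype.ext ((hxc C).trans (hcc.trans (hxc C').symm)))
  · intro C
    have : Slice (xc C) = SliceF (xc C) ∩ Bᶜ := (hSliceEq (xc C)).symm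
    rw [hs]
    exact (this ▸ ((hSliceF_open (xc C)).inter hBc_open)).preimage continuous_subtype_val
  · intro C
    obtain ⟨z, hz⟩ := hSliceNe (xc C)
    exact ⟨⟨z, hSliceB _ hz⟩, hz⟩


/-- If `M` is a connected `n`-manifold with boundary such that the interior `M − ∂M` is
metrisable and `∂M` has uncountably many connected components, then `∂M` is not collared. -/
theorem boundary_not_collared_of_uncountably_many_components (n : ℕ) (M : Type*)
    [TopologicalSpace M] [T2Space M] [ConnectedSpace M]
    (hM : IsManifoldWithBoundary n M)
    (hint : TopologicalSpace.MetrizableSpace ↥((mBoundary n M)ᶜ))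
    (huncount : ¬ {C : Set ↥(mBoundary n M) | ∃ x, C = connectedComponent x}.Countable) :
    ¬ IsCollared (mBoundary n M) := by
  rintro ⟨h, hemb, h0, hpre, hopen⟩
  have hchart : ∀ x ∈ (mBoundary n M)ᶜ, HasInteriorChart n x := fun x hx => not_not.1 hx
  have hBc_open : IsOpen ((mBoundary n M)ᶜ : Set M) := by
    rw [isOpen_iff_mem_nhds]
    intro x hx
    obtain ⟨U, hU, hφ⟩ := hchart x hx
    refine Filter.mem_of_superset (isOpen_interior.mem_nhds (mem_interior_iff_mem_nhds.2 hU)) ?_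
    intro y hy
    exact not_not.2 ⟨U, Filter.mem_of_superset (isOpen_interior.mem_nhds hy) interior_subset, hφ⟩
  exact aux_not_collared (mBoundary n M) hchart hBc_open hint huncount h hemb h0 hpre hopen
end

section
/- Let L₊ be the open long ray. If U is an open subset of L₊ × L₊ such that {α ∈ ω₁ : ⟨α,α⟩ ∈ U} is stationary in ω₁, then there is α ∈ ω₁ such that U contains [α,ω₁) × [α,ω₁), where [α,ω₁) denotes the set of points of L₊ that are ≥ α. -/
open Set Topology

noncomputable section

def omega1 : Ordinal := (Cardinal.aleph 1).ord

abbrev Omega1 := ↥(Set.Iio omega1)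

abbrev ClosedLongRay := Omega1 ×ₗ ↥(Set.Ico (0 : ℝ) 1)

instance : TopologicalSpace ClosedLongRay := Preorder.topology ClosedLongRay
instance : OrderTopology ClosedLongRay := ⟨rfl⟩

theorem omega1_pos : (0 : Ordinal) < omega1 := by
  rw [omega1, ← Cardinal.ord_zero]
  exact Cardinal.ord_lt_ord.mpr (Cardinal.aleph_pos 1)

def longRayZero : ClosedLongRay :=
  toLex (⟨0, omega1_pos⟩, ⟨0, by norm_num⟩)

abbrev LongRayPlus := {x : ClosedLongRay // x ≠ longRayZero}

def ordPt (α : Omega1) : ClosedLongRay := toLex (α, ⟨0, by norm_num⟩)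

/-- A subset of `ω₁` is closed and unbounded (club) if it is unbounded and contains every
nonzero ordinal which is a limit of its elements. -/
def Omega1IsClub (C : Set Omega1) : Prop :=
  (∀ α : Omega1, ∃ β ∈ C, α < β) ∧
    ∀ α : Omega1, 0 < α.1 → (∀ β : Omega1, β < α → ∃ γ ∈ C, β < γ ∧ γ < α) → α ∈ C

/-- A subset of `ω₁` is stationary if it meets every club subset of `ω₁`. -/
def Omega1IsStationary (S : Set Omega1) : Prop :=
  ∀ C : Set Omega1, Omega1IsClub C → (S ∩ C).Nonempty


section Aux

universe u

open Ordinal Cardinal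

lemma omega1_isLimit : Order.IsSuccLimit omega1.{u} := Cardinal.isSuccLimit_ord (Cardinal.aleph0_le_aleph 1)

lemma omega1_cof : omega1.{u}.cof = Cardinal.aleph 1 := by
  rw [show omega1.{u} = (Cardinal.aleph 1).ord from rfl]
  exact Cardinal.isRegular_aleph_one.cof_eq

/-- Successor inside `Omega1`. -/
def succO (α : Omega1.{u}) : Omega1.{u} :=
  ⟨α.1 + 1, by
    have := omega1_isLimit.succ_lt α.2
    rwa [Ordinal.add_one_eq_succ]⟩

lemma succO_coe (α : Omega1.{u}) : ((succO α : Omega1) : Ordinal) = α.1 + 1 := rfl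

lemma lt_succO (α : Omega1.{u}) : α < succO α := by
  rw [← Subtype.coe_lt_coe, succO_coe, Ordinal.add_one_eq_succ]
  exact Order.lt_succ _

lemma succO_mono {α β : Omega1.{u}} (h : α ≤ β) : succO α ≤ succO β := by
  rw [← Subtype.coe_le_coe, succO_coe, succO_coe]
  exact add_le_add_left (Subtype.coe_le_coe.2 h) 1

lemma succO_lt_of_isLimit {α lam : Omega1.{u}} (hlim : Order.IsSuccLimit lam.1) (h : α < lam) :
    succO α < lam := by
  rw [← Subtype.coe_lt_coe, succO_coe, Ordinal.add_one_eq_succ]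
  exact hlim.succ_lt (Subtype.coe_lt_coe.2 h)

lemma ordPt_lt_ordPt {α β : Omega1.{u}} : ordPt α < ordPt β ↔ α < β := by
  constructor
  · intro h
    rcases (Prod.Lex.lt_iff).1 h with h | ⟨_, h⟩
    · exact h
    · exact absurd h (lt_irrefl _)
  · intro h
    exact (Prod.Lex.lt_iff).2 (Or.inl h)

lemma ordPt_le_ordPt {α β : Omega1.{u}} (h : α ≤ β) : ordPt α ≤ ordPt β := by
  rcases lt_or_eq_of_le h with h | h
  · exact (ordPt_lt_ordPt.2 h).le
  · rw [h]

lemma lt_ordPt_succ_fst (x : ClosedLongRay.{u}) : x < ordPt (succO (ofLex x).1) := by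
  conv_lhs => rw [← toLex_ofLex x]
  exact (Prod.Lex.lt_iff).2 (Or.inl (lt_succO _))

lemma longRayZero_lt_ordPt {α : Omega1.{u}} (h : 0 < α.1) : longRayZero < ordPt α :=
  (Prod.Lex.lt_iff).2 (Or.inl h)

lemma fst_lt_of_lt_ordPt {x : ClosedLongRay.{u}} {α : Omega1.{u}} (h : x < ordPt α) :
    (ofLex x).1 < α := by
  rw [← toLex_ofLex x] at h
  rcases (Prod.Lex.lt_iff).1 h with h | ⟨_, h⟩
  · exact h
  · exact absurd (ofLex x).2.2.1 (not_le.2 h)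

lemma isOpen_ne_longRayZero : IsOpen {x : ClosedLongRay.{u} | x ≠ longRayZero} :=
  isOpen_compl_singleton

/-- From an open neighbourhood of `ordPt lam` in `LongRayPlus`, extract an ordinal interval. -/
lemma exists_ordinal_interval (V : Set LongRayPlus.{u}) (hV : IsOpen V) {lam : Omega1.{u}}
    (hlim : Order.IsSuccLimit lam.1) (hne : ordPt lam ≠ longRayZero)
    (hmem : (⟨ordPt lam, hne⟩ : LongRayPlus) ∈ V) :
    ∃ β : Omega1.{u}, β < lam ∧
      ∀ x : LongRayPlus, ordPt β < x.1 → x.1 ≤ ordPt lam → x ∈ V := by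
  have hA : IsOpen (Subtype.val '' V) := isOpen_ne_longRayZero.isOpenMap_subtype_val V hV
  have hmemA : ordPt lam ∈ Subtype.val '' V := ⟨_, hmem, rfl⟩
  have hpos : (0 : Ordinal) < lam.1 := pos_iff_ne_zero.2 (Ordinal.isSuccLimit_iff.1 hlim).1
  obtain ⟨l, hl, hsub⟩ := exists_Ioc_subset_of_mem_nhds (hA.mem_nhds hmemA)
    ⟨longRayZero, longRayZero_lt_ordPt hpos⟩
  have hδ : (ofLex l).1 < lam := fst_lt_of_lt_ordPt hl
  refine ⟨succO (ofLex l).1, succO_lt_of_isLimit hlim hδ, ?_⟩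
  intro x hx1 hx2
  have hlx : l < x.1 := lt_trans (lt_ordPt_succ_fst l) hx1
  obtain ⟨v, hv, hvx⟩ := hsub ⟨hlx, hx2⟩
  exact (Subtype.ext hvx : v = x) ▸ hv

/-- Any ordinal-indexed function on `ω₁` admits a limit closure point above any `α`. -/
lemma exists_closure_point (g : Omega1.{u} → Omega1.{u}) (α : Omega1.{u}) :
    ∃ lam : Omega1.{u}, (Order.IsSuccLimit lam.1 ∧ ∀ β, β < lam → g β < lam) ∧ α < lam := by
  set G : Ordinal.{u} → Ordinal.{u} := fun o => if h : o < omega1 then (g ⟨o, h⟩).1 else 0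
    with hGdef
  have hG : ∀ o, G o < omega1 := by
    intro o
    by_cases h : o < omega1
    · simp only [hGdef, dif_pos h]; exact (g ⟨o, h⟩).2
    · simp only [hGdef, dif_neg h]; exact omega1_pos
  set seq : ℕ → Ordinal.{u} := fun n => Nat.rec (α.1 + 1)
    (fun _ s => max (s + 1) (Ordinal.blsub s fun β _ => G β)) n with hseqdef
  have hseq_succ : ∀ n,
      seq (n + 1) = max (seq n + 1) (Ordinal.blsub (seq n) fun β _ => G β) :=
    fun n => rfl
  have hsucc_lt : ∀ o : Ordinal.{u}, o < omega1 → o + 1 < omega1 := by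
    intro o ho
    rw [Ordinal.add_one_eq_succ]
    exact omega1_isLimit.succ_lt ho
  have hseq_lt : ∀ n, seq n < omega1 := by
    intro n
    induction n with
    | zero => exact hsucc_lt _ α.2
    | succ n ih =>
      rw [hseq_succ]
      apply max_lt (hsucc_lt _ ih)
      apply Ordinal.blsub_lt_ord
      · rw [omega1_cof]
        have := ih
        rw [show omega1.{u} = (Cardinal.aleph 1).ord from rfl] at this
        exact Cardinal.lt_ord.1 this
      · intro i _; exact hG i
  set L := ⨆ n : ULift.{u} ℕ, seq n.down with hLdef
  have hLlt : L < omega1 := by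
    apply Ordinal.iSup_lt_of_lt_cof
    · rw [Cardinal.mk_uLift, Cardinal.mk_nat, Cardinal.lift_aleph0, omega1_cof]
      exact Cardinal.aleph0_lt_aleph_one
    · intro i; exact hseq_lt i.down
  have hle : ∀ n, seq n ≤ L := fun n => Ordinal.le_iSup.{u} (fun n : ULift.{u} ℕ => seq n.down) (ULift.up n)
  have hlt : ∀ a, a < L → ∃ n, a < seq n := by
    intro a ha
    obtain ⟨i, hi⟩ := Ordinal.lt_iSup_iff.1 ha
    exact ⟨i.down, hi⟩
  have hmono : ∀ n, seq n + 1 ≤ seq (n + 1) := fun n => by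
    rw [hseq_succ]; exact le_max_left _ _
  have hself : ∀ o : Ordinal.{u}, o < o + 1 := by
    intro o; rw [Ordinal.add_one_eq_succ]; exact Order.lt_succ _
  refine ⟨⟨L, hLlt⟩, ⟨Ordinal.isSuccLimit_iff.2 ⟨?_, Order.isSuccPrelimit_iff_succ_lt.2 ?_⟩, ?_⟩, ?_⟩
  · intro h0
    have h0' : L = 0 := h0
    have h1 : seq 0 ≤ L := hle 0
    rw [h0', nonpos_iff_eq_zero] at h1
    rw [show seq 0 = α.1 + 1 from rfl, Ordinal.add_one_eq_succ] at h1
    exact Ordinal.succ_ne_zero α.1 h1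
  · intro a ha
    obtain ⟨n, hn⟩ := hlt a ha
    have h1 : a + 1 ≤ seq n := by
      rw [Ordinal.add_one_eq_succ]; exact Order.succ_le_of_lt hn
    have h2 : seq n < L := lt_of_lt_of_le (lt_of_lt_of_le (hself _) (hmono n)) (hle (n + 1))
    rw [← Ordinal.add_one_eq_succ]
    exact lt_of_le_of_lt h1 h2
  · intro β hβ
    obtain ⟨n, hn⟩ := hlt β.1 (Subtype.coe_lt_coe.2 hβ)
    rw [← Subtype.coe_lt_coe]
    show (g β).1 < L
    have h1 : G β.1 < Ordinal.blsub (seq n) (fun β _ => G β) := Ordinal.lt_blsub _ _ hn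
    have h2 : G β.1 = (g β).1 := by simp only [hGdef]; rw [dif_pos (show (β : Ordinal) < omega1 from β.2)]
    rw [← h2]
    refine lt_of_lt_of_le h1 (le_trans ?_ (hle (n + 1)))
    rw [hseq_succ]; exact le_max_right _ _
  · rw [← Subtype.coe_lt_coe]
    exact lt_of_lt_of_le (hself α.1) (hle 0)

end Aux

/-- If `U` is an open subset of `L₊ × L₊` whose intersection with the diagonal is stationary
in `ω₁`, then `U` contains `[α,ω₁) × [α,ω₁)` for some `α ∈ ω₁`. -/
theorem open_superset_of_stationary_diagonal (U : Set (LongRayPlus × LongRayPlus))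
    (hU : IsOpen U)
    (hstat : Omega1IsStationary
      {α : Omega1 | ∃ h : ordPt α ≠ longRayZero, (⟨ordPt α, h⟩, ⟨ordPt α, h⟩) ∈ U}) :
    ∃ α : Omega1, ∀ x y : LongRayPlus,
      ordPt α ≤ x.1 → ordPt α ≤ y.1 → (x, y) ∈ U := by
  by_contra hcon
  push_neg at hcon
  choose X Y hX hY hXY using hcon
  set g : Omega1 → Omega1 :=
    fun α => succO (max (ofLex (X α).1).1 (ofLex (Y α).1).1) with hg
  have hXlt : ∀ α, (X α).1 < ordPt (g α) := fun α =>
    lt_of_lt_of_le (lt_ordPt_succ_fst (X α).1)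
      (ordPt_le_ordPt (succO_mono (le_max_left _ _)))
  have hYlt : ∀ α, (Y α).1 < ordPt (g α) := fun α =>
    lt_of_lt_of_le (lt_ordPt_succ_fst (Y α).1)
      (ordPt_le_ordPt (succO_mono (le_max_right _ _)))
  set C : Set Omega1 := {lam | Order.IsSuccLimit lam.1 ∧ ∀ β, β < lam → g β < lam} with hC
  have hclub : Omega1IsClub C := by
    constructor
    · intro α
      obtain ⟨lam, hmem, hlt⟩ := exists_closure_point g α
      exact ⟨lam, hmem, hlt⟩
    · intro α hα hacc
      constructor
      · refine Ordinal.isSuccLimit_iff.2 ⟨?_, Order.isSuccPrelimit_iff_succ_lt.2 ?_⟩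
        · exact pos_iff_ne_zero.1 hα
        · intro a ha
          have haω : a < omega1 := lt_trans ha α.2
          obtain ⟨γ, _, hγ1, hγ2⟩ := hacc ⟨a, haω⟩ ha
          exact lt_of_le_of_lt (Order.succ_le_of_lt (Subtype.coe_lt_coe.2 hγ1))
            (Subtype.coe_lt_coe.2 hγ2)
      · intro β hβ
        obtain ⟨γ, hγC, hγ1, hγ2⟩ := hacc β hβ
        exact lt_trans (hγC.2 β hγ1) hγ2
  obtain ⟨lam, hlamS, hlamC⟩ := hstat C hclub
  obtain ⟨hne, hUmem⟩ := hlamS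
  obtain ⟨hlim, hclosed⟩ := hlamC
  obtain ⟨V, W, hVo, hWo, hpV, hpW, hVW⟩ := isOpen_prod_iff.1 hU _ _ hUmem
  obtain ⟨β₁, hβ₁, hV⟩ := exists_ordinal_interval V hVo hlim hne hpV
  obtain ⟨β₂, hβ₂, hW⟩ := exists_ordinal_interval W hWo hlim hne hpW
  set β : Omega1 := max β₁ β₂ with hβdef
  set a : Omega1 := succO β with hadef
  have haL : a < lam := succO_lt_of_isLimit hlim (max_lt hβ₁ hβ₂)
  have hβa : ordPt β < ordPt a := ordPt_lt_ordPt.2 (lt_succO β)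
  have hgalam : g a ≤ lam := (hclosed a haL).le
  have hx1 : ordPt β₁ < (X a).1 :=
    lt_of_le_of_lt (ordPt_le_ordPt (le_max_left β₁ β₂))
      (lt_of_lt_of_le hβa (hX a))
  have hy1 : ordPt β₂ < (Y a).1 :=
    lt_of_le_of_lt (ordPt_le_ordPt (le_max_right β₁ β₂))
      (lt_of_lt_of_le hβa (hY a))
  have hx2 : (X a).1 ≤ ordPt lam :=
    le_of_lt (lt_of_lt_of_le (hXlt a) (ordPt_le_ordPt hgalam))
  have hy2 : (Y a).1 ≤ ordPt lam :=
    le_of_lt (lt_of_lt_of_le (hYlt a) (ordPt_le_ordPt hgalam))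
  exact hXY a (hVW ⟨hV _ hx1 hx2, hW _ hy1 hy2⟩)
end
end

section
/- Let L_{≥0} be the closed long ray and L₊ the open long ray. Then the product spaces L₊ × ℝ, L_{≥0} × ℝ, L₊ × L₊, and L_{≥0} × L_{≥0} are all normal. -/
open Set Topology

noncomputable section

/-! ### Basic order structure -/

namespace LR

theorem omega1_isLimit : Order.IsSuccLimit omega1 := Cardinal.isSuccLimit_ord (Cardinal.aleph0_le_aleph 1)

/-- first (ordinal) coordinate -/
def fo (x : ClosedLongRay) : Ordinal := ((ofLex x).1 : Ordinal)

/-- second (real) coordinate -/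
def sr (x : ClosedLongRay) : ℝ := ((ofLex x).2 : ℝ)

theorem fo_lt (x : ClosedLongRay) : fo x < omega1 := (ofLex x).1.2

theorem sr_nonneg (x : ClosedLongRay) : 0 ≤ sr x := (ofLex x).2.2.1

theorem sr_lt_one (x : ClosedLongRay) : sr x < 1 := (ofLex x).2.2.2

/-- constructor -/
def mk (o : Ordinal) (ho : o < omega1) (t : ℝ) (h0 : 0 ≤ t) (h1 : t < 1) : ClosedLongRay :=
  toLex (⟨o, ho⟩, ⟨t, h0, h1⟩)

@[simp] theorem fo_mk (o ho t h0 h1) : fo (mk o ho t h0 h1) = o := rfl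
@[simp] theorem sr_mk (o ho t h0 h1) : sr (mk o ho t h0 h1) = t := rfl

theorem ext_iff {x y : ClosedLongRay} : x = y ↔ fo x = fo y ∧ sr x = sr y := by
  constructor
  · rintro rfl; exact ⟨rfl, rfl⟩
  · rintro ⟨h1, h2⟩
    have : ofLex x = ofLex y := Prod.ext (Subtype.ext h1) (Subtype.ext h2)
    exact congrArg toLex this

theorem le_def {x y : ClosedLongRay} :
    x ≤ y ↔ fo x < fo y ∨ (fo x = fo y ∧ sr x ≤ sr y) := by
  rw [show x = toLex (ofLex x) from rfl, show y = toLex (ofLex y) from rfl,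
    Prod.Lex.le_iff]
  constructor
  · rintro (h | ⟨h, h2⟩)
    · exact Or.inl h
    · exact Or.inr ⟨congrArg Subtype.val h, h2⟩
  · rintro (h | ⟨h, h2⟩)
    · exact Or.inl h
    · exact Or.inr ⟨Subtype.ext h, h2⟩

theorem lt_def {x y : ClosedLongRay} :
    x < y ↔ fo x < fo y ∨ (fo x = fo y ∧ sr x < sr y) := by
  rw [show x = toLex (ofLex x) from rfl, show y = toLex (ofLex y) from rfl,
    Prod.Lex.lt_iff]
  constructor
  · rintro (h | ⟨h, h2⟩)
    · exact Or.inl h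
    · exact Or.inr ⟨congrArg Subtype.val h, h2⟩
  · rintro (h | ⟨h, h2⟩)
    · exact Or.inl h
    · exact Or.inr ⟨Subtype.ext h, h2⟩

theorem fo_mono {x y : ClosedLongRay} (h : x ≤ y) : fo x ≤ fo y := by
  rcases le_def.1 h with h | ⟨h, -⟩
  · exact h.le
  · exact h.le

@[simp] theorem fo_zero : fo longRayZero = 0 := rfl
@[simp] theorem sr_zero : sr longRayZero = 0 := rfl

instance : OrderBot ClosedLongRay where
  bot := longRayZero
  bot_le x := by
    rcases (zero_le : (0 : Ordinal) ≤ fo x).eq_or_lt with h | h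
    · exact le_def.2 (Or.inr ⟨h.symm ▸ rfl, by simpa using sr_nonneg x⟩)
    · exact le_def.2 (Or.inl (by simpa using h))

theorem bot_def : (⊥ : ClosedLongRay) = longRayZero := rfl

theorem succ_lt_omega1 {o : Ordinal} (h : o < omega1) : o + 1 < omega1 := by
  rw [Ordinal.add_one_eq_succ]
  exact omega1_isLimit.succ_lt h

instance : NoMaxOrder ClosedLongRay where
  exists_gt a := by
    refine ⟨mk (fo a + 1) (succ_lt_omega1 (fo_lt a)) 0 le_rfl zero_lt_one,
      lt_def.2 (Or.inl ?_)⟩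
    simp only [fo_mk]
    rw [Ordinal.add_one_eq_succ]
    exact Order.lt_succ _

instance : DenselyOrdered ClosedLongRay where
  dense a b hab := by
    rcases lt_def.1 hab with h | ⟨h, h2⟩
    · refine ⟨mk (fo a) (fo_lt a) ((sr a + 1) / 2)
        (by linarith [sr_nonneg a]) (by linarith [sr_lt_one a]), ?_, ?_⟩
      · exact lt_def.2 (Or.inr ⟨by simp, by simp; linarith [sr_lt_one a]⟩)
      · exact lt_def.2 (Or.inl (by simpa using h))
    · refine ⟨mk (fo a) (fo_lt a) ((sr a + sr b) / 2)
        (by linarith [sr_nonneg a, sr_nonneg b]) (by linarith [sr_lt_one a, sr_lt_one b]), ?_, ?_⟩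
      · exact lt_def.2 (Or.inr ⟨by simp, by simp; linarith⟩)
      · exact lt_def.2 (Or.inr ⟨by simpa using h, by simp; linarith⟩)

theorem exists_isLUB (s : Set ClosedLongRay) (hne : s.Nonempty) (hbdd : BddAbove s) :
    ∃ x, IsLUB s x := by
  obtain ⟨u, hu⟩ := hbdd
  set A : Set Ordinal := fo '' s with hA
  have hAne : A.Nonempty := hne.image fo
  have hAbdd : BddAbove A := ⟨fo u, by rintro _ ⟨x, hx, rfl⟩; exact fo_mono (hu hx)⟩
  set a := sSup A with ha
  have haub : ∀ x ∈ s, fo x ≤ a := fun x hx => le_csSup hAbdd ⟨x, hx, rfl⟩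
  have ha_lt : a < omega1 := by
    refine lt_of_le_of_lt (csSup_le hAne ?_) (fo_lt u)
    rintro _ ⟨x, hx, rfl⟩; exact fo_mono (hu hx)
  by_cases hmem : a ∈ A
  · set T : Set ℝ := sr '' {x ∈ s | fo x = a} with hT
    have hTne : T.Nonempty := by
      obtain ⟨x, hx, hxa⟩ := hmem; exact ⟨sr x, x, ⟨hx, hxa⟩, rfl⟩
    have hTbdd : BddAbove T := ⟨1, by rintro _ ⟨x, -, rfl⟩; exact (sr_lt_one x).le⟩
    set r := sSup T with hr
    have hr0 : 0 ≤ r := by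
      obtain ⟨t, x, hx, rfl⟩ := hTne
      exact le_trans (sr_nonneg x) (le_csSup hTbdd ⟨x, hx, rfl⟩)
    have hr_le : ∀ x ∈ s, fo x = a → sr x ≤ r := fun x hx hxa =>
      le_csSup hTbdd ⟨x, ⟨hx, hxa⟩, rfl⟩
    have hr_min : ∀ z : ℝ, (∀ x ∈ s, fo x = a → sr x ≤ z) → r ≤ z := fun z hz =>
      csSup_le hTne (by rintro _ ⟨x, ⟨hx, hxa⟩, rfl⟩; exact hz x hx hxa)
    have hub_snd : ∀ v ∈ upperBounds s, a = fo v → r ≤ sr v := by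
      intro v hv heq
      refine hr_min _ fun x hx hxa => ?_
      rcases le_def.1 (hv hx) with h | ⟨-, h2⟩
      · exact absurd h (by rw [hxa, ← heq]; exact lt_irrefl a)
      · exact h2
    have hub_fst : ∀ v ∈ upperBounds s, a ≤ fo v := fun v hv =>
      csSup_le hAne (by rintro _ ⟨x, hx, rfl⟩; exact fo_mono (hv hx))
    by_cases hrlt : r < 1
    · refine ⟨mk a ha_lt r hr0 hrlt, ?_, ?_⟩
      · intro x hx
        rcases (haub x hx).eq_or_lt with heq | hlt
        · exact le_def.2 (Or.inr ⟨by simpa using heq, by simpa using hr_le x hx heq⟩)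
        · exact le_def.2 (Or.inl (by simpa using hlt))
      · intro v hv
        rcases (hub_fst v hv).eq_or_lt with heq | hlt
        · exact le_def.2 (Or.inr ⟨by simpa using heq, by simpa using hub_snd v hv heq⟩)
        · exact le_def.2 (Or.inl (by simpa using hlt))
    · have h1r : (1 : ℝ) ≤ r := not_lt.1 hrlt
      refine ⟨mk (a + 1) (succ_lt_omega1 ha_lt) 0 le_rfl zero_lt_one, ?_, ?_⟩
      · intro x hx
        refine le_def.2 (Or.inl ?_)
        simp only [fo_mk]
        calc fo x ≤ a := haub x hx
        _ < a + 1 := by rw [Ordinal.add_one_eq_succ]; exact Order.lt_succ a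
      · intro v hv
        have hlt : a < fo v := by
          rcases (hub_fst v hv).eq_or_lt with heq | hlt
          · exact absurd (lt_of_le_of_lt (le_trans h1r (hub_snd v hv heq)) (sr_lt_one v))
              (lt_irrefl 1)
          · exact hlt
        have : a + 1 ≤ fo v := by
          rw [Ordinal.add_one_eq_succ]; exact Order.succ_le_of_lt hlt
        rcases this.eq_or_lt with heq | hlt2
        · exact le_def.2 (Or.inr ⟨by simpa using heq, by simpa using sr_nonneg v⟩)
        · exact le_def.2 (Or.inl (by simpa using hlt2))
  · refine ⟨mk a ha_lt 0 le_rfl zero_lt_one, ?_, ?_⟩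
    · intro x hx
      have : fo x ≠ a := fun h => hmem ⟨x, hx, h⟩
      exact le_def.2 (Or.inl (by simpa using (haub x hx).lt_of_ne this))
    · intro v hv
      have : a ≤ fo v := csSup_le hAne (by rintro _ ⟨x, hx, rfl⟩; exact fo_mono (hv hx))
      rcases this.eq_or_lt with heq | hlt
      · exact le_def.2 (Or.inr ⟨by simpa using heq, by simpa using sr_nonneg v⟩)
      · exact le_def.2 (Or.inl (by simpa using hlt))

open Classical in
/-- supremum function on the closed long ray -/
noncomputable def lrSSup (s : Set ClosedLongRay) : ClosedLongRay :=
  if h : s.Nonempty ∧ BddAbove s then (exists_isLUB s h.1 h.2).choose else longRayZero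

noncomputable instance : SupSet ClosedLongRay := ⟨lrSSup⟩

theorem lrSSup_pos {s : Set ClosedLongRay} (hne : s.Nonempty) (hbdd : BddAbove s) :
    IsLUB s (sSup s) := by
  have h : sSup s = (exists_isLUB s hne hbdd).choose := by
    show lrSSup s = _
    rw [lrSSup, dif_pos ⟨hne, hbdd⟩]
  rw [h]
  exact (exists_isLUB s hne hbdd).choose_spec

theorem lrSSup_junk {s : Set ClosedLongRay} (h : ¬(s.Nonempty ∧ BddAbove s)) :
    sSup s = longRayZero := by
  show lrSSup s = _
  rw [lrSSup, dif_neg h]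

noncomputable instance : ConditionallyCompleteLinearOrder ClosedLongRay :=
  { conditionallyCompleteLatticeOfLatticeOfsSup ClosedLongRay
      (fun _ hbdd hne => lrSSup_pos hne hbdd),
    (inferInstance : LinearOrder ClosedLongRay) with
    csSup_of_not_bddAbove := fun s hs => by
      rw [lrSSup_junk (fun h => hs h.2), lrSSup_junk (by rintro ⟨⟨x, hx⟩, -⟩; exact hx)]
    csInf_of_not_bddBelow := fun s hs => absurd (OrderBot.bddBelow s) hs }

theorem bddAbove_of_countable {s : Set ClosedLongRay} (hc : s.Countable) : BddAbove s := by
  rcases s.eq_empty_or_nonempty with rfl | hne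
  · exact bddAbove_empty
  · obtain ⟨f, rfl⟩ := hc.exists_eq_range hne
    set g : ℕ → Ordinal := fun n => fo (f n) + 1 with hg
    have hglt : ∀ n, g n < omega1 := fun n => succ_lt_omega1 (fo_lt _)
    have hsup : (⨆ n, g n) < omega1 := by
      have hglt' : ∀ n, g n < (Cardinal.aleph 1).ord := hglt
      show (⨆ n, g n) < (Cardinal.aleph 1).ord
      refine Cardinal.iSup_lt_ord_lift_of_isRegular Cardinal.isRegular_aleph_one ?_ hglt'
      simpa using Cardinal.aleph0_lt_aleph_one
    refine ⟨mk _ hsup 0 le_rfl zero_lt_one, ?_⟩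
    rintro x ⟨n, rfl⟩
    refine le_def.2 (Or.inl ?_)
    simp only [fo_mk]
    calc fo (f n) < g n := by
          show fo (f n) < fo (f n) + 1
          rw [Ordinal.add_one_eq_succ]
          exact Order.lt_succ _
    _ ≤ (⨆ n, g n) := le_ciSup (Ordinal.bddAbove_range g) n

end LR



section Generic

variable {X Y : Type*} [TopologicalSpace X] [TopologicalSpace Y]

/-- An `Fσ` subspace of a normal space is normal. -/
theorem fsigma_normal [NormalSpace X] (F : ℕ → Set X) (hF : ∀ n, IsClosed (F n)) :
    NormalSpace ↥(⋃ n, F n) := by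
  constructor
  intro A B hA hB hAB
  obtain ⟨CA, hCA, hCAeq⟩ := isClosed_induced_iff.mp hA
  obtain ⟨CB, hCB, hCBeq⟩ := isClosed_induced_iff.mp hB
  set sA := Subtype.val '' A with hsA
  set sB := Subtype.val '' B with hsB
  have hsAeq : sA = CA ∩ ⋃ n, F n := by
    rw [hsA, ← hCAeq, Set.image_preimage_eq_inter_range, Subtype.range_coe]
  have hsBeq : sB = CB ∩ ⋃ n, F n := by
    rw [hsB, ← hCBeq, Set.image_preimage_eq_inter_range, Subtype.range_coe]
  have hclA : closure sA ⊆ CA := closure_minimal (by rw [hsAeq]; exact inter_subset_left) hCA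
  have hclB : closure sB ⊆ CB := closure_minimal (by rw [hsBeq]; exact inter_subset_left) hCB
  have hdisAB : Disjoint sA sB := (Set.disjoint_image_iff Subtype.coe_injective).2 hAB
  have hkey : ∀ x ∈ ⋃ n, F n, x ∈ closure sA → x ∈ closure sB → False := by
    intro x hxS hxA hxB
    have h1 : x ∈ sA := by rw [hsAeq]; exact ⟨hclA hxA, hxS⟩
    have h2 : x ∈ sB := by rw [hsBeq]; exact ⟨hclB hxB, hxS⟩
    exact Set.disjoint_left.1 hdisAB h1 h2
  have hUn : ∀ n, ∃ U : Set X, IsOpen U ∧ (closure sA ∩ F n) ⊆ U ∧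
      Disjoint (closure U) (closure sB) := by
    intro n
    have hdisj : Disjoint (closure sA ∩ F n) (closure sB) := by
      rw [Set.disjoint_left]
      intro x hx hx2
      exact hkey x (mem_iUnion.2 ⟨n, hx.2⟩) hx.1 hx2
    obtain ⟨U, V, hU, hV, hsubU, hsubV, hUV⟩ :=
      normal_separation (isClosed_closure.inter (hF n)) isClosed_closure hdisj
    refine ⟨U, hU, hsubU, ?_⟩
    have hcl : closure U ⊆ Vᶜ :=
      closure_minimal (fun _ hx => Set.disjoint_left.1 hUV hx) hV.isClosed_compl
    exact Set.disjoint_left.2 fun x hxU hxB => hcl hxU (hsubV hxB)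
  have hVn : ∀ n, ∃ V : Set X, IsOpen V ∧ (closure sB ∩ F n) ⊆ V ∧
      Disjoint (closure V) (closure sA) := by
    intro n
    have hdisj : Disjoint (closure sB ∩ F n) (closure sA) := by
      rw [Set.disjoint_left]
      intro x hx hx2
      exact hkey x (mem_iUnion.2 ⟨n, hx.2⟩) hx2 hx.1
    obtain ⟨U, V, hU, hV, hsubU, hsubV, hUV⟩ :=
      normal_separation (isClosed_closure.inter (hF n)) isClosed_closure hdisj
    refine ⟨U, hU, hsubU, ?_⟩
    have hcl : closure U ⊆ Vᶜ :=
      closure_minimal (fun _ hx => Set.disjoint_left.1 hUV hx) hV.isClosed_compl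
    exact Set.disjoint_left.2 fun x hxU hxB => hcl hxU (hsubV hxB)
  choose U hUopen hUsub hUdis using hUn
  choose V hVopen hVsub hVdis using hVn
  set U' : Set X := ⋃ n, (U n \ ⋃ m ∈ Set.Iic n, closure (V m)) with hU'
  set V' : Set X := ⋃ n, (V n \ ⋃ m ∈ Set.Iic n, closure (U m)) with hV'
  have hU'open : IsOpen U' := isOpen_iUnion fun n => (hUopen n).sdiff
    ((Set.finite_Iic n).isClosed_biUnion fun m _ => isClosed_closure)
  have hV'open : IsOpen V' := isOpen_iUnion fun n => (hVopen n).sdiff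
    ((Set.finite_Iic n).isClosed_biUnion fun m _ => isClosed_closure)
  have hAU' : sA ⊆ U' := by
    intro a ha
    have haS : a ∈ ⋃ n, F n := by rw [hsAeq] at ha; exact ha.2
    obtain ⟨n, hn⟩ := mem_iUnion.1 haS
    refine mem_iUnion.2 ⟨n, ⟨hUsub n ⟨subset_closure ha, hn⟩, ?_⟩⟩
    intro hmem
    obtain ⟨m, _, hm⟩ := mem_iUnion₂.1 hmem
    exact Set.disjoint_left.1 (hVdis m) hm (subset_closure ha)
  have hBV' : sB ⊆ V' := by
    intro a ha
    have haS : a ∈ ⋃ n, F n := by rw [hsBeq] at ha; exact ha.2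
    obtain ⟨n, hn⟩ := mem_iUnion.1 haS
    refine mem_iUnion.2 ⟨n, ⟨hVsub n ⟨subset_closure ha, hn⟩, ?_⟩⟩
    intro hmem
    obtain ⟨m, _, hm⟩ := mem_iUnion₂.1 hmem
    exact Set.disjoint_left.1 (hUdis m) hm (subset_closure ha)
  have hdisU'V' : Disjoint U' V' := by
    rw [Set.disjoint_left]
    intro x hxU hxV
    obtain ⟨n, hxn, hxn'⟩ := mem_iUnion.1 hxU
    obtain ⟨m, hxm, hxm'⟩ := mem_iUnion.1 hxV
    rcases le_total n m with h | h
    · exact hxm' (mem_iUnion₂.2 ⟨n, h, subset_closure hxn⟩)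
    · exact hxn' (mem_iUnion₂.2 ⟨m, h, subset_closure hxm⟩)
  refine ⟨Subtype.val ⁻¹' U', Subtype.val ⁻¹' V',
    hU'open.preimage continuous_subtype_val, hV'open.preimage continuous_subtype_val,
    ?_, ?_, hdisU'V'.preimage _⟩
  · intro a ha; exact hAU' ⟨a, ha, rfl⟩
  · intro a ha; exact hBV' ⟨a, ha, rfl⟩

/-- key normality theorem: (normal + "countably compact") × (compact metric) is normal. -/
theorem normal_prod_compact_metric {M : Type*} [NormalSpace X]
    (hcc : ∀ W : ℕ → Set X, (∀ n, IsOpen (W n)) → Monotone W → (⋃ n, W n) = univ →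
      ∃ n, W n = univ)
    [MetricSpace M] [CompactSpace M] : NormalSpace (X × M) := by
  constructor
  intro A B hA hB hAB
  set D : ℕ → Set (X × (M × M)) := fun n =>
    {p | (p.1, p.2.1) ∈ A ∧ (p.1, p.2.2) ∈ B ∧ dist p.2.1 p.2.2 ≤ 1 / (n + 1)} with hD
  have hDclosed : ∀ n, IsClosed (D n) := by
    intro n
    refine IsClosed.inter (hA.preimage (continuous_fst.prodMk
      (continuous_fst.comp continuous_snd))) (IsClosed.inter
      (hB.preimage (continuous_fst.prodMk (continuous_snd.comp continuous_snd))) ?_)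
    exact isClosed_le (Continuous.dist (continuous_fst.comp continuous_snd)
      (continuous_snd.comp continuous_snd)) continuous_const
  set W : ℕ → Set X := fun n => (Prod.fst '' D n)ᶜ with hW
  have hWmem : ∀ n (x : X), x ∈ W n ↔
      ∀ t s : M, (x, t) ∈ A → (x, s) ∈ B → 1 / (n + 1 : ℝ) < dist t s := by
    intro n x
    constructor
    · intro hx t s hat hbs
      by_contra hle
      exact hx ⟨(x, (t, s)), ⟨hat, hbs, not_lt.1 hle⟩, rfl⟩
    · rintro h ⟨⟨x', ⟨t, s⟩⟩, ⟨hat, hbs, hd⟩, rfl⟩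
      exact absurd hd (not_le.2 (h t s hat hbs))
  have hWopen : ∀ n, IsOpen (W n) :=
    fun n => (isClosedMap_fst_of_compactSpace _ (hDclosed n)).isOpen_compl
  have hWmono : Monotone W := by
    intro n m hnm x hx
    rw [hWmem] at hx ⊢
    intro t s hat hbs
    refine lt_of_le_of_lt ?_ (hx t s hat hbs)
    apply one_div_le_one_div_of_le
    · positivity
    · exact_mod_cast Nat.succ_le_succ hnm
  have hWcov : ⋃ n, W n = univ := by
    refine eq_univ_of_forall fun x => mem_iUnion.2 ?_
    set Ax := {t : M | (x, t) ∈ A} with hAx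
    set Bx := {s : M | (x, s) ∈ B} with hBx
    have hAxc : IsClosed Ax := hA.preimage (continuous_const.prodMk continuous_id)
    have hBxc : IsClosed Bx := hB.preimage (continuous_const.prodMk continuous_id)
    rcases Ax.eq_empty_or_nonempty with hAxe | hAxe
    · exact ⟨0, (hWmem 0 x).2 fun t s hat _ =>
        absurd (show t ∈ Ax from hat) (by rw [hAxe]; exact notMem_empty t)⟩
    rcases Bx.eq_empty_or_nonempty with hBxe | hBxe
    · exact ⟨0, (hWmem 0 x).2 fun t s _ hbs =>
        absurd (show s ∈ Bx from hbs) (by rw [hBxe]; exact notMem_empty s)⟩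
    obtain ⟨t₀, ht₀, hmin⟩ := hAxc.isCompact.exists_isMinOn hAxe
      (Metric.continuous_infDist_pt Bx).continuousOn
    have ht₀B : t₀ ∉ Bx := fun h => Set.disjoint_left.1 hAB (show (x, t₀) ∈ A from ht₀) h
    have hpos : 0 < Metric.infDist t₀ Bx := (hBxc.notMem_iff_infDist_pos hBxe).1 ht₀B
    obtain ⟨n, hn⟩ := exists_nat_one_div_lt hpos
    refine ⟨n, (hWmem n x).2 fun t s hat hbs => ?_⟩
    calc (1 : ℝ) / (n + 1) < Metric.infDist t₀ Bx := hn
    _ ≤ Metric.infDist t Bx := hmin hat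
    _ ≤ dist t s := Metric.infDist_le_dist_of_mem hbs
  obtain ⟨N, hN⟩ := hcc W hWopen hWmono hWcov
  set ε : ℝ := 1 / (N + 1) with hε
  have hεpos : 0 < ε := by positivity
  have gap : ∀ (x : X) (t s : M), (x, t) ∈ A → (x, s) ∈ B → ε < dist t s := fun x =>
    (hWmem N x).1 (hN ▸ mem_univ x)
  obtain ⟨net, hnetfin, hnetcov⟩ :=
    Metric.totallyBounded_iff.1 (isCompact_univ : IsCompact (univ : Set M)).totallyBounded (ε / 4) (by positivity)
  set PA : M → Set X := fun c => Prod.fst '' (A ∩ (univ ×ˢ Metric.closedBall c (ε / 4))) with hPA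
  set PB : M → Set X := fun c => Prod.fst '' (B ∩ (univ ×ˢ Metric.closedBall c (ε / 4))) with hPB
  have hPAc : ∀ c, IsClosed (PA c) := fun c =>
    isClosedMap_fst_of_compactSpace _ (hA.inter (isClosed_univ.prod Metric.isClosed_closedBall))
  have hPBc : ∀ c, IsClosed (PB c) := fun c =>
    isClosedMap_fst_of_compactSpace _ (hB.inter (isClosed_univ.prod Metric.isClosed_closedBall))
  have hdisj : ∀ c d : M, dist c d ≤ ε / 2 → Disjoint (PA c) (PB d) := by
    intro c d hcd
    rw [Set.disjoint_left]
    rintro x hx1 hx2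
    simp only [hPA, Set.mem_image, Prod.exists, Set.mem_inter_iff, Set.mem_prod,
      Set.mem_univ, true_and] at hx1
    simp only [hPB, Set.mem_image, Prod.exists, Set.mem_inter_iff, Set.mem_prod,
      Set.mem_univ, true_and] at hx2
    obtain ⟨x1, t, ⟨hat, ht⟩, rfl⟩ := hx1
    obtain ⟨x2, s, ⟨hbs, hs⟩, hx2e⟩ := hx2
    subst hx2e
    have h1 := gap x2 t s hat hbs
    rw [Metric.mem_closedBall] at ht hs
    have h2 : dist t s ≤ dist t c + dist c d + dist d s :=
      (dist_triangle t c s).trans (by linarith [dist_triangle c d s])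
    have h3 : dist d s = dist s d := dist_comm d s
    linarith
  have hsep : ∀ c d : M, ∃ G H : Set X, IsOpen G ∧ IsOpen H ∧ PA c ⊆ G ∧ PB d ⊆ H ∧
      (dist c d ≤ ε / 2 → Disjoint G H) := by
    intro c d
    by_cases hcd : dist c d ≤ ε / 2
    · obtain ⟨G, H, hG, hH, h1, h2, h3⟩ :=
        normal_separation (hPAc c) (hPBc d) (hdisj c d hcd)
      exact ⟨G, H, hG, hH, h1, h2, fun _ => h3⟩
    · exact ⟨univ, univ, isOpen_univ, isOpen_univ, subset_univ _, subset_univ _,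
        fun h => absurd h hcd⟩
  choose G H hGopen hHopen hGsub hHsub hGH using hsep
  refine ⟨⋃ c ∈ net, ((⋂ d ∈ net, G c d) ×ˢ Metric.ball c (ε / 4)),
    ⋃ d ∈ net, ((⋂ c ∈ net, H c d) ×ˢ Metric.ball d (ε / 4)), ?_, ?_, ?_, ?_, ?_⟩
  · exact isOpen_biUnion fun c _ =>
      IsOpen.prod (hnetfin.isOpen_biInter fun d _ => hGopen c d) Metric.isOpen_ball
  · exact isOpen_biUnion fun d _ =>
      IsOpen.prod (hnetfin.isOpen_biInter fun c _ => hHopen c d) Metric.isOpen_ball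
  · rintro ⟨x, t⟩ hat
    obtain ⟨c, hc, htc⟩ := mem_iUnion₂.1 (hnetcov (mem_univ t))
    refine mem_iUnion₂.2 ⟨c, hc, ?_, htc⟩
    exact mem_iInter₂.2 fun d _ => hGsub c d
      ⟨(x, t), ⟨hat, trivial, Metric.ball_subset_closedBall htc⟩, rfl⟩
  · rintro ⟨x, s⟩ hbs
    obtain ⟨d, hd, hsd⟩ := mem_iUnion₂.1 (hnetcov (mem_univ s))
    refine mem_iUnion₂.2 ⟨d, hd, ?_, hsd⟩
    exact mem_iInter₂.2 fun c _ => hHsub c d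
      ⟨(x, s), ⟨hbs, trivial, Metric.ball_subset_closedBall hsd⟩, rfl⟩
  · rw [Set.disjoint_left]
    rintro ⟨x, t⟩ hU hV
    obtain ⟨c, hc, hxc⟩ := mem_iUnion₂.1 hU
    obtain ⟨d, hd, hxd⟩ := mem_iUnion₂.1 hV
    have htc : dist t c < ε / 4 := Metric.mem_ball.1 hxc.2
    have htd : dist t d < ε / 4 := Metric.mem_ball.1 hxd.2
    have hcd : dist c d ≤ ε / 2 := by
      have := dist_triangle c t d
      rw [dist_comm c t] at this
      linarith
    have hxG : x ∈ G c d := mem_iInter₂.1 hxc.1 d hd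
    have hxH : x ∈ H c d := mem_iInter₂.1 hxd.1 c hc
    exact Set.disjoint_left.1 (hGH c d hcd) hxG hxH

/-- helper homeomorphism -/
def Homeomorph.prodSubtypeSnd (P : Y → Prop) :
    X × {y : Y // P y} ≃ₜ {p : X × Y // P p.2} where
  toFun q := ⟨(q.1, q.2.1), q.2.2⟩
  invFun p := (p.1.1, ⟨p.1.2, p.2⟩)
  left_inv _ := rfl
  right_inv _ := rfl
  continuous_toFun := Continuous.subtype_mk
    (continuous_fst.prodMk (continuous_subtype_val.comp continuous_snd)) _
  continuous_invFun := (continuous_fst.comp continuous_subtype_val).prodMk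
    (Continuous.subtype_mk (continuous_snd.comp continuous_subtype_val) _)

/-- helper homeomorphism -/
def Homeomorph.prodSubtypeFst (P : X → Prop) :
    {x : X // P x} × Y ≃ₜ {p : X × Y // P p.1} where
  toFun q := ⟨(q.1.1, q.2), q.1.2⟩
  invFun p := (⟨p.1.1, p.2⟩, p.1.2)
  left_inv _ := rfl
  right_inv _ := rfl
  continuous_toFun := Continuous.subtype_mk
    ((continuous_subtype_val.comp continuous_fst).prodMk continuous_snd) _
  continuous_invFun := (Continuous.subtype_mk (continuous_fst.comp continuous_subtype_val) _).prodMk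
    (continuous_snd.comp continuous_subtype_val)

/-- helper homeomorphism -/
def Homeomorph.prodSubtypeBoth (P : X → Prop) (Q : Y → Prop) :
    {x : X // P x} × {y : Y // Q y} ≃ₜ {p : X × Y // P p.1 ∧ Q p.2} where
  toFun q := ⟨(q.1.1, q.2.1), q.1.2, q.2.2⟩
  invFun p := (⟨p.1.1, p.2.1⟩, ⟨p.1.2, p.2.2⟩)
  left_inv _ := rfl
  right_inv _ := rfl
  continuous_toFun := Continuous.subtype_mk
    ((continuous_subtype_val.comp continuous_fst).prodMk
      (continuous_subtype_val.comp continuous_snd)) _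
  continuous_invFun := (Continuous.subtype_mk (continuous_fst.comp continuous_subtype_val) _).prodMk
    (Continuous.subtype_mk (continuous_snd.comp continuous_subtype_val) _)

end Generic

namespace LR
universe u

/-- the closed long ray is countably compact, in the form we need -/
theorem mono_cover (W : ℕ → Set ClosedLongRay) (hop : ∀ n, IsOpen (W n)) (hmono : Monotone W)
    (hcov : (⋃ n, W n) = univ) : ∃ n, W n = univ := by
  by_contra h
  push_neg at h
  have hx : ∀ n, ∃ x, x ∉ W n := by
    intro n
    rcases (ne_univ_iff_exists_notMem _).1 (h n) with ⟨x, hx⟩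
    exact ⟨x, hx⟩
  choose x hxn using hx
  obtain ⟨b, hb⟩ := bddAbove_of_countable (Set.countable_range x)
  have hcover : Icc (⊥ : ClosedLongRay) b ⊆ ⋃ n, W n := by rw [hcov]; exact subset_univ _
  obtain ⟨t, ht⟩ := isCompact_Icc.elim_finite_subcover W hop hcover
  have hsub : Icc (⊥ : ClosedLongRay) b ⊆ W (t.sup id) := by
    intro y hy
    obtain ⟨n, hn, hyn⟩ := mem_iUnion₂.1 (ht hy)
    exact hmono (Finset.le_sup (f := id) hn) hyn
  exact hxn (t.sup id) (hsub ⟨bot_le, hb ⟨t.sup id, rfl⟩⟩)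

theorem countable_Iio_ordinal {o : Ordinal} (ho : o < omega1) : (Set.Iio o).Countable := by
  rw [Cardinal.countable_iff_lt_aleph_one, Ordinal.mk_Iio_ordinal]
  have h1 : o.card < Cardinal.aleph 1 := Cardinal.lt_ord.1 ho
  have h2 : o.card ≤ Cardinal.aleph0 := by
    rwa [← Cardinal.succ_aleph0, Order.lt_succ_iff] at h1
  calc Cardinal.lift o.card ≤ Cardinal.lift Cardinal.aleph0 := Cardinal.lift_le.2 h2
  _ = Cardinal.aleph0 := by simp
  _ < Cardinal.aleph 1 := Cardinal.aleph0_lt_aleph_one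

theorem separableSpace_Icc (b : ClosedLongRay) (hb : ⊥ < b) :
    TopologicalSpace.SeparableSpace ↥(Icc (⊥ : ClosedLongRay) b) := by
  classical
  set C := Icc (⊥ : ClosedLongRay) b with hC
  set D : Set ↥C := {x | ∃ q : ℚ, sr x.1 = (q : ℝ)} with hD
  have hnt : Nontrivial ↥C := by
    refine ⟨⟨⊥, le_rfl, hb.le⟩, ⟨b, bot_le, le_rfl⟩, fun h => ?_⟩
    exact hb.ne (congrArg Subtype.val h)
  have hcount : D.Countable := by
    have : D = ⋃ q : ℚ, {x : ↥C | sr x.1 = (q : ℝ)} := by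
      ext x; simp [hD]
    rw [this]
    refine Set.countable_iUnion fun q => ?_
    have hinj : Set.InjOn (fun x : ↥C => fo x.1) {x : ↥C | sr x.1 = (q : ℝ)} := by
      intro x hx y hy hxy
      have : x.1 = y.1 := ext_iff.2 ⟨hxy, by rw [hx, hy]⟩
      exact Subtype.ext this
    have himg : ((fun x : ↥C => fo x.1) '' {x : ↥C | sr x.1 = (q : ℝ)}).Countable := by
      refine (countable_Iio_ordinal (succ_lt_omega1 (fo_lt b))).mono ?_
      rintro _ ⟨x, -, rfl⟩
      have : fo x.1 ≤ fo b := fo_mono x.2.2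
      calc fo x.1 ≤ fo b := this
      _ < fo b + 1 := by
        rw [Ordinal.add_one_eq_succ]; exact Order.lt_succ _
    exact Set.countable_of_injective_of_countable_image hinj himg
  have hdense : Dense D := by
    rw [dense_iff_exists_between]
    intro u v huv
    have huv' : u.1 < v.1 := huv
    rcases lt_def.1 huv' with hfo | ⟨hfo, hsr⟩
    · obtain ⟨q, hq1, hq2⟩ := exists_rat_btwn (sr_lt_one u.1)
      set m := mk (fo u.1) (fo_lt u.1) q (le_trans (sr_nonneg u.1) hq1.le) hq2 with hm
      have hmv : m < v.1 := lt_def.2 (Or.inl (by simpa [hm] using hfo))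
      have hmC : m ∈ C := ⟨bot_le, le_trans hmv.le v.2.2⟩
      refine ⟨⟨m, hmC⟩, ⟨q, by simp [hm]⟩, ?_, ?_⟩
      · show u.1 < m
        exact lt_def.2 (Or.inr ⟨by simp [hm], by simpa [hm] using hq1⟩)
      · show m < v.1
        exact hmv
    · obtain ⟨q, hq1, hq2⟩ := exists_rat_btwn hsr
      set m := mk (fo u.1) (fo_lt u.1) q (le_trans (sr_nonneg u.1) hq1.le)
        (lt_trans hq2 (sr_lt_one v.1)) with hm
      have hmv : m < v.1 := lt_def.2 (Or.inr ⟨by simpa [hm] using hfo, by simpa [hm] using hq2⟩)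
      have hmC : m ∈ C := ⟨bot_le, le_trans hmv.le v.2.2⟩
      refine ⟨⟨m, hmC⟩, ⟨q, by simp [hm]⟩, ?_, ?_⟩
      · show u.1 < m
        exact lt_def.2 (Or.inr ⟨by simp [hm], by simpa [hm] using hq1⟩)
      · show m < v.1
        exact hmv
  exact ⟨⟨D, hcount, hdense⟩⟩

theorem normalSpace_prod_Icc (b : ClosedLongRay) (hb : ⊥ < b) :
    NormalSpace (ClosedLongRay × ↥(Icc (⊥ : ClosedLongRay) b)) := by
  haveI := separableSpace_Icc b hb
  haveI : SecondCountableTopology ↥(Icc (⊥ : ClosedLongRay) b) :=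
    SecondCountableTopology.of_separableSpace_orderTopology _
  haveI : CompactSpace ↥(Icc (⊥ : ClosedLongRay) b) := isCompact_iff_compactSpace.mp isCompact_Icc
  letI : MetricSpace ↥(Icc (⊥ : ClosedLongRay) b) := TopologicalSpace.metrizableSpaceMetric _
  exact normal_prod_compact_metric mono_cover

/-- separation when `B` is bounded in the second coordinate -/
theorem sep_snd_bounded {A B : Set (ClosedLongRay.{u} × ClosedLongRay.{u})}
    (hA : IsClosed A) (hB : IsClosed B) (hAB : Disjoint A B) {b : ClosedLongRay}
    (hBb : ∀ p ∈ B, p.2 ≤ b) : SeparatedNhds A B := by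
  obtain ⟨b1, hb1⟩ := exists_gt b
  obtain ⟨b2, hb2⟩ := exists_gt b1
  have hbot2 : (⊥ : ClosedLongRay) < b2 := lt_of_le_of_lt bot_le (lt_trans hb1 hb2)
  set P : ClosedLongRay → Prop := fun y => y ∈ Icc (⊥ : ClosedLongRay) b2 with hP
  haveI := normalSpace_prod_Icc b2 hbot2
  set j : ClosedLongRay.{u} × ↥(Icc (⊥ : ClosedLongRay.{u}) b2) → ClosedLongRay.{u} × ClosedLongRay.{u} :=
    fun q => (q.1, q.2.1) with hj
  have hjc : Continuous j := continuous_fst.prodMk (continuous_subtype_val.comp continuous_snd)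
  set A' : Set (ClosedLongRay × ↥(Icc (⊥ : ClosedLongRay) b2)) :=
    j ⁻¹' A ∪ {q | b1 ≤ q.2.1} with hA'
  set B' : Set (ClosedLongRay × ↥(Icc (⊥ : ClosedLongRay) b2)) := j ⁻¹' B with hB'
  have hA'c : IsClosed A' := (hA.preimage hjc).union
    (isClosed_Ici.preimage (continuous_subtype_val.comp continuous_snd))
  have hB'c : IsClosed B' := hB.preimage hjc
  have hd : Disjoint A' B' := by
    rw [Set.disjoint_left]
    rintro q (hq | hq) hqB
    · exact Set.disjoint_left.1 hAB hq hqB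
    · exact absurd (le_trans hq (hBb _ hqB)) (not_le.2 hb1)
  obtain ⟨u, v, hu, hv, hAu, hBv, huv⟩ := normal_separation hA'c hB'c hd
  -- transfer to opens in the full product
  set e := Homeomorph.prodSubtypeSnd (X := ClosedLongRay) P with he
  have huo : IsOpen (e.symm ⁻¹' u) := hu.preimage e.symm.continuous
  have hvo : IsOpen (e.symm ⁻¹' v) := hv.preimage e.symm.continuous
  obtain ⟨U', hU'o, hU'eq⟩ := isOpen_induced_iff.1 huo
  obtain ⟨V', hV'o, hV'eq⟩ := isOpen_induced_iff.1 hvo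
  have hU'mem : ∀ (p : ClosedLongRay.{u} × ClosedLongRay.{u}) (hp : P p.2),
      p ∈ U' ↔ (p.1, ⟨p.2, hp⟩) ∈ u := by
    intro p hp
    have h1 : (⟨p, hp⟩ : {p : ClosedLongRay.{u} × ClosedLongRay.{u} // P p.2}) ∈
        Subtype.val ⁻¹' U' ↔ p ∈ U' := Iff.rfl
    rw [hU'eq] at h1
    exact h1.symm
  have hV'mem : ∀ (p : ClosedLongRay.{u} × ClosedLongRay.{u}) (hp : P p.2),
      p ∈ V' ↔ (p.1, ⟨p.2, hp⟩) ∈ v := by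
    intro p hp
    have h1 : (⟨p, hp⟩ : {p : ClosedLongRay.{u} × ClosedLongRay.{u} // P p.2}) ∈
        Subtype.val ⁻¹' V' ↔ p ∈ V' := Iff.rfl
    rw [hV'eq] at h1
    exact h1.symm
  refine ⟨(U' ∩ {p | p.2 < b2}) ∪ {p | b1 < p.2}, V' ∩ {p | p.2 < b1}, ?_, ?_, ?_, ?_, ?_⟩
  · exact ((hU'o.inter (isOpen_Iio.preimage continuous_snd)).union
      (isOpen_Ioi.preimage continuous_snd))
  · exact hV'o.inter (isOpen_Iio.preimage continuous_snd)
  · rintro ⟨p1, p2⟩ hp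
    rcases lt_or_ge p2 b2 with h2 | h2
    · have hpP : P p2 := ⟨bot_le, h2.le⟩
      refine Or.inl ⟨?_, h2⟩
      rw [hU'mem (p1, p2) hpP]
      exact hAu (Or.inl hp)
    · exact Or.inr (lt_of_lt_of_le hb2 h2)
  · rintro ⟨p1, p2⟩ hp
    have h2 : p2 ≤ b := hBb _ hp
    have hpP : P p2 := ⟨bot_le, le_trans h2 (le_of_lt (lt_trans hb1 hb2))⟩
    refine ⟨?_, lt_of_le_of_lt h2 hb1⟩
    rw [hV'mem (p1, p2) hpP]
    exact hBv hp
  · rw [Set.disjoint_left]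
    rintro ⟨p1, p2⟩ (⟨hpU, hpb2⟩ | hpb1) ⟨hpV, hpb1'⟩
    · have hpP : P p2 := ⟨bot_le, le_of_lt hpb2⟩
      exact Set.disjoint_left.1 huv ((hU'mem (p1, p2) hpP).1 hpU)
        ((hV'mem (p1, p2) hpP).1 hpV)
    · exact absurd (show p2 < b1 from hpb1') (not_lt.2 (le_of_lt (show b1 < p2 from hpb1)))

/-- separation when `B` is bounded in the first coordinate -/
theorem sep_fst_bounded {A B : Set (ClosedLongRay.{u} × ClosedLongRay.{u})}
    (hA : IsClosed A) (hB : IsClosed B) (hAB : Disjoint A B) {b : ClosedLongRay}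
    (hBb : ∀ p ∈ B, p.1 ≤ b) : SeparatedNhds A B := by
  set σ := Homeomorph.prodComm ClosedLongRay.{u} ClosedLongRay.{u} with hσ
  have hswap : ∀ s : Set (ClosedLongRay.{u} × ClosedLongRay.{u}),
      Prod.swap ⁻¹' (Prod.swap '' s) = s := fun s =>
    Set.preimage_image_eq s Prod.swap_injective
  have h := sep_snd_bounded (A := Prod.swap '' A) (B := Prod.swap '' B)
    (σ.isClosedMap A hA) (σ.isClosedMap B hB)
    ((Set.disjoint_image_iff Prod.swap_injective).2 hAB) (b := b) ?_
  · have h2 := h.preimage (continuous_swap : Continuous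
      (Prod.swap : ClosedLongRay.{u} × ClosedLongRay.{u} → ClosedLongRay.{u} × ClosedLongRay.{u}))
    rwa [hswap A, hswap B] at h2
  · rintro p ⟨q, hq, rfl⟩
    exact hBb q hq

theorem normal_LL : NormalSpace (ClosedLongRay.{u} × ClosedLongRay.{u}) := by
  constructor
  intro A B hA hB hAB
  have tail : ∃ b : ClosedLongRay.{u}, (∀ p ∈ A, ¬(b ≤ p.1 ∧ b ≤ p.2)) ∨
      (∀ p ∈ B, ¬(b ≤ p.1 ∧ b ≤ p.2)) := by
    by_contra h
    push_neg at h
    have h1 : ∀ bb : ClosedLongRay, ∃ p, p ∈ A ∧ bb ≤ p.1 ∧ bb ≤ p.2 := by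
      intro bb
      obtain ⟨p, hp, hp2⟩ := (h bb).1
      exact ⟨p, hp, hp2⟩
    have h2 : ∀ bb : ClosedLongRay, ∃ p, p ∈ B ∧ bb ≤ p.1 ∧ bb ≤ p.2 := by
      intro bb
      obtain ⟨p, hp, hp2⟩ := (h bb).2
      exact ⟨p, hp, hp2⟩
    choose pa hpaA hpa1 hpa2 using h1
    choose pb hpbB hpb1 hpb2 using h2
    set g : ClosedLongRay → ClosedLongRay := fun c =>
      max (max (pa c).1 (pa c).2) (max (max (pb c).1 (pb c).2) c) with hg
    set r : ℕ → ClosedLongRay := fun n => g^[n] ⊥ with hr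
    have hrsucc : ∀ n, r (n + 1) = g (r n) := fun n => Function.iterate_succ_apply' g n ⊥
    have hle : ∀ c, c ≤ g c := fun c =>
      le_trans (le_trans (le_max_right _ c) (le_max_right _ _)) le_rfl
    have hrmono : Monotone r := monotone_nat_of_le_succ fun n => by
      rw [hrsucc]; exact hle _
    have hbdd : BddAbove (Set.range r) := bddAbove_of_countable (Set.countable_range r)
    set s := ⨆ n, r n with hs
    have hrs : Filter.Tendsto r Filter.atTop (nhds s) := tendsto_atTop_ciSup hrmono hbdd
    have hrs' : Filter.Tendsto (fun n => r (n + 1)) Filter.atTop (nhds s) :=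
      hrs.comp (Filter.tendsto_add_atTop_nat 1)
    have key : ∀ (p : ClosedLongRay → ClosedLongRay × ClosedLongRay),
        (∀ c, c ≤ (p c).1) → (∀ c, c ≤ (p c).2) →
        (∀ c, (p c).1 ≤ g c) → (∀ c, (p c).2 ≤ g c) →
        Filter.Tendsto (fun n => p (r n)) Filter.atTop (nhds (s, s)) := by
      intro p hp1 hp2 hq1 hq2
      have ht1 : Filter.Tendsto (fun n => (p (r n)).1) Filter.atTop (nhds s) := by
        refine tendsto_of_tendsto_of_tendsto_of_le_of_le hrs hrs'
          (fun n => hp1 (r n)) (fun n => ?_)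
        rw [hrsucc]; exact hq1 (r n)
      have ht2 : Filter.Tendsto (fun n => (p (r n)).2) Filter.atTop (nhds s) := by
        refine tendsto_of_tendsto_of_tendsto_of_le_of_le hrs hrs'
          (fun n => hp2 (r n)) (fun n => ?_)
        rw [hrsucc]; exact hq2 (r n)
      exact ht1.prodMk_nhds ht2
    have hta : Filter.Tendsto (fun n => pa (r n)) Filter.atTop (nhds (s, s)) := by
      refine key pa hpa1 hpa2 (fun c => ?_) (fun c => ?_)
      · exact le_trans (le_max_left _ _) (le_max_left _ _)
      · exact le_trans (le_max_right _ _) (le_max_left _ _)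
    have htb : Filter.Tendsto (fun n => pb (r n)) Filter.atTop (nhds (s, s)) := by
      refine key pb hpb1 hpb2 (fun c => ?_) (fun c => ?_)
      · exact le_trans (le_trans (le_max_left _ _) (le_max_left _ _)) (le_max_right _ _)
      · exact le_trans (le_trans (le_max_right _ _) (le_max_left _ _)) (le_max_right _ _)
    have hsA : (s, s) ∈ A := hA.mem_of_tendsto hta
      (Filter.Eventually.of_forall fun n => hpaA _)
    have hsB : (s, s) ∈ B := hB.mem_of_tendsto htb
      (Filter.Eventually.of_forall fun n => hpbB _)
    exact Set.disjoint_left.1 hAB hsA hsB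
  obtain ⟨b, hside⟩ := tail
  have main : ∀ A B : Set (ClosedLongRay.{u} × ClosedLongRay.{u}), IsClosed A → IsClosed B →
      Disjoint A B → (∀ p ∈ B, ¬(b ≤ p.1 ∧ b ≤ p.2)) → SeparatedNhds A B := by
    intro A B hA hB hAB hBside
    have hsplit : B = (B ∩ {p | p.1 ≤ b}) ∪ (B ∩ {p | p.2 ≤ b}) := by
      ext p
      constructor
      · intro hp
        rcases not_and_or.1 (hBside p hp) with h | h
        · exact Or.inl ⟨hp, (not_le.1 h).le⟩
        · exact Or.inr ⟨hp, (not_le.1 h).le⟩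
      · rintro (⟨hp, -⟩ | ⟨hp, -⟩) <;> exact hp
    rw [hsplit]
    refine SeparatedNhds.union_right ?_ ?_
    · exact sep_fst_bounded hA (hB.inter (isClosed_Iic.preimage continuous_fst))
        (hAB.mono_right inter_subset_left) (fun p hp => hp.2)
    · exact sep_snd_bounded hA (hB.inter (isClosed_Iic.preimage continuous_snd))
        (hAB.mono_right inter_subset_left) (fun p hp => hp.2)
  rcases hside with hside | hside
  · exact (main B A hB hA hAB.symm hside).symm
  · exact main A B hA hB hAB hside

end LR

/-- generic subtype homeomorphism helper -/
def Homeomorph.subtypeCongr'' {X Y : Type*} [TopologicalSpace X] [TopologicalSpace Y]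
    (e : X ≃ₜ Y) {p : X → Prop} {q : Y → Prop} (h : ∀ x, p x ↔ q (e x)) :
    {x : X // p x} ≃ₜ {y : Y // q y} where
  toFun x := ⟨e x.1, (h x.1).1 x.2⟩
  invFun y := ⟨e.symm y.1, (h _).2 (by rw [e.apply_symm_apply]; exact y.2)⟩
  left_inv x := Subtype.ext (e.symm_apply_apply x.1)
  right_inv y := Subtype.ext (e.apply_symm_apply y.1)
  continuous_toFun := (e.continuous.comp continuous_subtype_val).subtype_mk _
  continuous_invFun := (e.symm.continuous.comp continuous_subtype_val).subtype_mk _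

namespace LR
universe u v

/-! ### `L × ℝ` and the open versions -/

/-- witness points near the bottom -/
def cpt (n : ℕ) : ClosedLongRay :=
  mk 0 omega1_pos (1 / (n + 2)) (by positivity)
    (by
      rw [div_lt_one (by positivity)]
      have : (0 : ℝ) ≤ n := n.cast_nonneg
      linarith)

theorem ne_zero_of_cpt_le {n : ℕ} {x : ClosedLongRay} (h : cpt n ≤ x) : x ≠ longRayZero := by
  intro heq
  rw [heq, ← bot_def] at h
  have h2 := congrArg sr (le_bot_iff.1 h)
  rw [bot_def] at h2
  simp only [cpt, sr_mk, sr_zero] at h2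
  have : (0 : ℝ) < 1 / (n + 2) := by positivity
  linarith [h2.le]

theorem exists_cpt_le {x : ClosedLongRay} (hx : x ≠ longRayZero) : ∃ n, cpt n ≤ x := by
  have hbot : (⊥ : ClosedLongRay) < x := lt_of_le_of_ne bot_le (Ne.symm hx)
  rcases lt_def.1 hbot with h | ⟨h, h2⟩
  · refine ⟨0, le_def.2 (Or.inl ?_)⟩
    show fo (cpt 0) < fo x
    simpa [cpt, bot_def] using h
  · have hsr : (0 : ℝ) < sr x := by simpa [bot_def] using h2
    obtain ⟨n, hn⟩ := exists_nat_one_div_lt hsr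
    refine ⟨n, le_def.2 (Or.inr ⟨?_, ?_⟩)⟩
    · show fo (cpt n) = fo x
      simpa [cpt, bot_def] using h
    · show sr (cpt n) ≤ sr x
      have hle : (1 : ℝ) / (n + 2) ≤ 1 / (n + 1) := by
        apply one_div_le_one_div_of_le
        · positivity
        · have : (0 : ℝ) ≤ n := n.cast_nonneg
          linarith
      calc sr (cpt n) = 1 / (n + 2) := rfl
      _ ≤ 1 / (n + 1) := hle
      _ ≤ sr x := hn.le

theorem cpt_antitone {m n : ℕ} (h : m ≤ n) : cpt n ≤ cpt m := by
  refine le_def.2 (Or.inr ⟨rfl, ?_⟩)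
  show (1 : ℝ) / (n + 2) ≤ 1 / (m + 2)
  apply one_div_le_one_div_of_le
  · positivity
  · have : (m : ℝ) ≤ n := Nat.cast_le.2 h
    linarith

theorem normal_L_real : NormalSpace (ClosedLongRay.{u} × ℝ) := by
  haveI hbase : NormalSpace (ClosedLongRay.{u} × ↥(Icc (-1 : ℝ) 1)) := by
    haveI : CompactSpace ↥(Icc (-1 : ℝ) 1) := isCompact_iff_compactSpace.mp isCompact_Icc
    exact normal_prod_compact_metric mono_cover
  set Q : ↥(Icc (-1 : ℝ) 1) → Prop := fun y => (y : ℝ) ∈ Ioo (-1 : ℝ) 1 with hQ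
  set F : ℕ → Set (ClosedLongRay.{u} × ↥(Icc (-1 : ℝ) 1)) := fun n =>
    {p | |((p.2 : ℝ))| ≤ 1 - 1 / (n + 1)} with hF
  have hFc : ∀ n, IsClosed (F n) := fun n => isClosed_le
    (continuous_subtype_val.comp continuous_snd).abs continuous_const
  have hFeq : (⋃ n, F n) = {p | Q p.2} := by
    ext p
    simp only [hF, hQ, mem_iUnion, mem_setOf_eq, mem_Ioo]
    constructor
    · rintro ⟨n, hn⟩
      have h1 : (0 : ℝ) < 1 / (n + 1) := by positivity
      exact abs_lt.1 (lt_of_le_of_lt hn (by linarith))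
    · rintro ⟨h1, h2⟩
      have habs : |((p.2 : ℝ))| < 1 := abs_lt.2 ⟨h1, h2⟩
      obtain ⟨n, hn⟩ := exists_nat_one_div_lt (show (0 : ℝ) < 1 - |((p.2 : ℝ))| by linarith)
      exact ⟨n, by linarith⟩
  have hS : NormalSpace ↥{p : ClosedLongRay.{u} × ↥(Icc (-1 : ℝ) 1) | Q p.2} :=
    hFeq ▸ fsigma_normal F hFc
  set e2 : ↥(Ioo (-1 : ℝ) 1) ≃ₜ {y : ↥(Icc (-1 : ℝ) 1) // Q y} :=
    { toFun := fun z => ⟨⟨z.1, Ioo_subset_Icc_self z.2⟩, z.2⟩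
      invFun := fun w => ⟨w.1.1, w.2⟩
      left_inv := fun z => rfl
      right_inv := fun w => rfl
      continuous_toFun := Continuous.subtype_mk
        (Continuous.subtype_mk continuous_subtype_val _) _
      continuous_invFun := Continuous.subtype_mk
        (continuous_subtype_val.comp continuous_subtype_val) _ } with he2
  have e3 : (ClosedLongRay.{u} × ℝ) ≃ₜ {p : ClosedLongRay.{u} × ↥(Icc (-1 : ℝ) 1) // Q p.2} :=
    ((Homeomorph.refl _).prodCongr ((orderIsoIooNegOneOne ℝ).toHomeomorph.trans e2)).trans
      (Homeomorph.prodSubtypeSnd Q)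
  exact @Homeomorph.normalSpace _ _ _ _ hS e3.symm

theorem normal_Lplus_real : NormalSpace (LongRayPlus.{u} × ℝ) := by
  haveI := normal_L_real.{u}
  set F : ℕ → Set (ClosedLongRay.{u} × ℝ) := fun n => {p | cpt n ≤ p.1} with hF
  have hFc : ∀ n, IsClosed (F n) := fun n => isClosed_Ici.preimage continuous_fst
  have hFeq : (⋃ n, F n) = {p | p.1 ≠ longRayZero} := by
    ext p
    simp only [hF, mem_iUnion, mem_setOf_eq]
    exact ⟨fun ⟨n, hn⟩ => ne_zero_of_cpt_le hn, fun h => exists_cpt_le h⟩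
  have hS : NormalSpace ↥{p : ClosedLongRay.{u} × ℝ | p.1 ≠ longRayZero} :=
    hFeq ▸ fsigma_normal F hFc
  exact @Homeomorph.normalSpace _ _ _ _ hS (Homeomorph.prodSubtypeFst
    (fun x : ClosedLongRay.{u} => x ≠ longRayZero)).symm

theorem normal_Lplus_sq : NormalSpace (LongRayPlus.{u} × LongRayPlus.{u}) := by
  haveI := normal_LL.{u}
  set F : ℕ → Set (ClosedLongRay.{u} × ClosedLongRay.{u}) := fun n =>
    {p | cpt n ≤ p.1} ∩ {p | cpt n ≤ p.2} with hF
  have hFc : ∀ n, IsClosed (F n) := fun n =>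
    (isClosed_Ici.preimage continuous_fst).inter (isClosed_Ici.preimage continuous_snd)
  have hFeq : (⋃ n, F n) = {p | p.1 ≠ longRayZero ∧ p.2 ≠ longRayZero} := by
    ext p
    simp only [hF, mem_iUnion, mem_setOf_eq, Set.mem_inter_iff]
    constructor
    · rintro ⟨n, hn1, hn2⟩
      exact ⟨ne_zero_of_cpt_le hn1, ne_zero_of_cpt_le hn2⟩
    · rintro ⟨h1, h2⟩
      obtain ⟨n1, hn1⟩ := exists_cpt_le h1
      obtain ⟨n2, hn2⟩ := exists_cpt_le h2
      exact ⟨max n1 n2, le_trans (cpt_antitone (le_max_left n1 n2)) hn1,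
        le_trans (cpt_antitone (le_max_right n1 n2)) hn2⟩
  have hS : NormalSpace ↥{p : ClosedLongRay.{u} × ClosedLongRay.{u} |
      p.1 ≠ longRayZero ∧ p.2 ≠ longRayZero} := hFeq ▸ fsigma_normal F hFc
  exact @Homeomorph.normalSpace _ _ _ _ hS
    (Homeomorph.prodSubtypeBoth (fun x : ClosedLongRay.{u} => x ≠ longRayZero)
      (fun x : ClosedLongRay.{u} => x ≠ longRayZero)).symm

/-! ### universe transfer -/

theorem lift_omega1 : Ordinal.lift.{v, u} omega1.{u} = omega1.{max u v} := by
  rw [omega1, omega1, Cardinal.lift_ord, Cardinal.lift_aleph, Ordinal.lift_one]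

/-- lifting the long ray across universes -/
def liftLR : ClosedLongRay.{u} → ClosedLongRay.{max u v} := fun x =>
  mk (Ordinal.lift.{v} (fo x))
    (by rw [← lift_omega1.{u, v}]; exact Ordinal.lift_lt.2 (fo_lt x))
    (sr x) (sr_nonneg x) (sr_lt_one x)

theorem liftLR_strictMono : StrictMono liftLR.{u, v} := by
  intro a b hab
  rcases lt_def.1 hab with h | ⟨h, h2⟩
  · exact lt_def.2 (Or.inl (by simp only [liftLR, fo_mk]; exact Ordinal.lift_lt.2 h))
  · exact lt_def.2 (Or.inr ⟨by simp only [liftLR, fo_mk, h], by simpa [liftLR] using h2⟩)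

theorem liftLR_surjective : Function.Surjective liftLR.{u, v} := by
  intro y
  have hy : fo y < Ordinal.lift.{v} omega1.{u} := by
    rw [lift_omega1]; exact fo_lt y
  obtain ⟨γ, hγ⟩ := Ordinal.mem_range_lift_of_le hy.le
  have hγlt : γ < omega1.{u} := by
    have : Ordinal.lift.{v} γ < Ordinal.lift.{v} omega1.{u} := by rw [hγ]; exact hy
    exact Ordinal.lift_lt.1 this
  refine ⟨mk γ hγlt (sr y) (sr_nonneg y) (sr_lt_one y), ?_⟩
  refine ext_iff.2 ⟨?_, rfl⟩
  show Ordinal.lift.{v} (fo (mk γ hγlt (sr y) (sr_nonneg y) (sr_lt_one y))) = fo y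
  rw [fo_mk, hγ]

/-- order isomorphism between realizations of the long ray in different universes -/
noncomputable def crossIso : ClosedLongRay.{u} ≃o ClosedLongRay.{max u v} :=
  StrictMono.orderIsoOfSurjective liftLR liftLR_strictMono liftLR_surjective

/-- homeomorphism between realizations of the long ray in different universes -/
noncomputable def crossHomeo : ClosedLongRay.{u} ≃ₜ ClosedLongRay.{max u v} :=
  crossIso.toHomeomorph

theorem crossHomeo_apply (x : ClosedLongRay.{u}) : crossHomeo.{u, v} x = liftLR x := rfl

theorem crossHomeo_zero : crossHomeo.{u, v} longRayZero = longRayZero := by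
  rw [crossHomeo_apply]
  refine ext_iff.2 ⟨?_, rfl⟩
  show Ordinal.lift.{v} (fo longRayZero) = (0 : Ordinal)
  rw [fo_zero, Ordinal.lift_zero]

/-- homeomorphism between realizations of the open long ray in different universes -/
noncomputable def crossHomeoPlus : LongRayPlus.{u} ≃ₜ LongRayPlus.{max u v} :=
  crossHomeo.subtypeCongr'' (fun x => by
    constructor
    · intro hx heq
      apply hx
      rw [← crossHomeo_zero.{u, v}] at heq
      exact crossHomeo.toEquiv.injective heq
    · intro hx heq
      apply hx
      rw [heq, crossHomeo_zero])

theorem normal_Lplus_sq' : NormalSpace (LongRayPlus.{u} × LongRayPlus.{v}) := by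
  haveI := normal_Lplus_sq.{max u v}
  exact (Homeomorph.prodCongr crossHomeoPlus.{u, v} crossHomeoPlus.{v, u}).symm.normalSpace

theorem normal_LL' : NormalSpace (ClosedLongRay.{u} × ClosedLongRay.{v}) := by
  haveI := normal_LL.{max u v}
  exact (Homeomorph.prodCongr crossHomeo.{u, v} crossHomeo.{v, u}).symm.normalSpace

end LR

/-- The products `L₊ × ℝ`, `L_{≥0} × ℝ`, `L₊ × L₊` and `L_{≥0} × L_{≥0}` are all normal
(Hausdorff) spaces. -/
theorem longRay_products_normal :
    (T2Space (LongRayPlus × ℝ) ∧ NormalSpace (LongRayPlus × ℝ)) ∧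
    (T2Space (ClosedLongRay × ℝ) ∧ NormalSpace (ClosedLongRay × ℝ)) ∧
    (T2Space (LongRayPlus × LongRayPlus) ∧ NormalSpace (LongRayPlus × LongRayPlus)) ∧
    (T2Space (ClosedLongRay × ClosedLongRay) ∧
      NormalSpace (ClosedLongRay × ClosedLongRay)) := by
  exact ⟨⟨inferInstance, LR.normal_Lplus_real⟩, ⟨inferInstance, LR.normal_L_real⟩,
    ⟨inferInstance, LR.normal_Lplus_sq'⟩, ⟨inferInstance, LR.normal_LL'⟩⟩
end
end
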